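/- arXiv:1112.1191 — 8 statements merged into one kernel-verified Lean document; each statement's English description precedes it below -/
import Mathlib

section
/- Let X be a continuum (compact connected metrizable space) that is not homeomorphic to the circle. If J₁ and J₂ are free intervals of X that are not disjoint, then J₁ ∪ J₂ is again a free interval of X. -/
open Set Filter Function Topology Real

/-- A free interval of `X`: an open subset homeomorphic to an open interval of ℝ
(equivalently, to ℝ itself). -/
def IsFreeInterval {X : Type*} [TopologicalSpace X] (J : Set X) : Prop :=
  IsOpen J ∧ Nonempty (↥J ≃ₜ ℝ)

section Helpers

variable {X : Type*} [TopologicalSpace X]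

lemma freeInterval_range {g : ℝ → X} (hg : IsOpenEmbedding g) : IsFreeInterval (range g) :=
  ⟨hg.isOpen_range, ⟨(hg.isEmbedding.toHomeomorph).symm⟩⟩

lemma contOn_invFun {f : ℝ → X} (hf : IsOpenEmbedding f) :
    ContinuousOn (Function.invFun f) (range f) := by
  rw [continuousOn_iff_continuous_restrict]
  have heq : (range f).domRestrict (Function.invFun f)
      = ⇑(hf.isEmbedding.toHomeomorph).symm := by
    funext x
    apply hf.injective
    rw [domRestrict_apply, Function.invFun_eq x.2]
    exact (congrArg Subtype.val
      ((hf.isEmbedding.toHomeomorph).apply_symm_apply x)).symm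
  rw [heq]
  exact (hf.isEmbedding.toHomeomorph).symm.continuous

/-- Classification of open order-connected subsets of ℝ. -/
lemma open_ordConn_cases {C : Set ℝ} (hC : IsOpen C) (hoc : C.OrdConnected) (hne : C.Nonempty) :
    C = univ ∨ (∃ b, C = Iio b) ∨ (∃ a, C = Ioi a) ∨ ∃ a b, a < b ∧ C = Ioo a b := by
  obtain ⟨c, hc⟩ := hne
  have hnotmem_sup : BddAbove C → sSup C ∉ C := by
    intro hba hmem
    obtain ⟨ε, hε, hball⟩ := Metric.isOpen_iff.1 hC _ hmem
    have : sSup C + ε / 2 ∈ C := by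
      apply hball
      rw [Real.ball_eq_Ioo]
      constructor <;> [linarith; linarith]
    have := le_csSup hba this
    linarith
  have hnotmem_inf : BddBelow C → sInf C ∉ C := by
    intro hbb hmem
    obtain ⟨ε, hε, hball⟩ := Metric.isOpen_iff.1 hC _ hmem
    have : sInf C - ε / 2 ∈ C := by
      apply hball
      rw [Real.ball_eq_Ioo]
      constructor <;> [linarith; linarith]
    have := csInf_le hbb this
    linarith
  by_cases hba : BddAbove C <;> by_cases hbb : BddBelow C
  · -- Ioo
    right; right; right
    refine ⟨sInf C, sSup C, ?_, ?_⟩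
    · rcases lt_or_ge (sInf C) (sSup C) with h | h
      · exact h
      · exfalso
        have h1 := csInf_le hbb hc
        have h2 := le_csSup hba hc
        have : c = sInf C := le_antisymm (by linarith) h1
        exact hnotmem_inf hbb (this ▸ hc)
    · apply Subset.antisymm
      · intro x hx
        constructor
        · exact lt_of_le_of_ne (csInf_le hbb hx) (fun h => hnotmem_inf hbb (h ▸ hx))
        · exact lt_of_le_of_ne (le_csSup hba hx) (fun h => hnotmem_sup hba (h.symm ▸ hx))
      · intro x ⟨h1, h2⟩
        obtain ⟨l, hl, hlx⟩ := exists_lt_of_csInf_lt ⟨c, hc⟩ h1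
        obtain ⟨u, hu, hxu⟩ := exists_lt_of_lt_csSup ⟨c, hc⟩ h2
        exact hoc.out hl hu ⟨hlx.le, hxu.le⟩
  · right; left
    refine ⟨sSup C, Subset.antisymm ?_ ?_⟩
    · intro x hx
      exact lt_of_le_of_ne (le_csSup hba hx) (fun h => hnotmem_sup hba (h.symm ▸ hx))
    · intro x hx
      obtain ⟨u, hu, hxu⟩ := exists_lt_of_lt_csSup ⟨c, hc⟩ hx
      obtain ⟨l, hl⟩ := not_bddBelow_iff.1 hbb x
      exact hoc.out hl.1 hu ⟨hl.2.le, hxu.le⟩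
  · right; right; left
    refine ⟨sInf C, Subset.antisymm ?_ ?_⟩
    · intro x hx
      exact lt_of_le_of_ne (csInf_le hbb hx) (fun h => hnotmem_inf hbb (h ▸ hx))
    · intro x hx
      obtain ⟨l, hl, hlx⟩ := exists_lt_of_csInf_lt ⟨c, hc⟩ hx
      obtain ⟨u, hu⟩ := not_bddAbove_iff.1 hba x
      exact hoc.out hl hu.1 ⟨hlx.le, hu.2.le⟩
  · left
    apply eq_univ_of_forall
    intro x
    obtain ⟨u, hu⟩ := not_bddAbove_iff.1 hba x
    obtain ⟨l, hl⟩ := not_bddBelow_iff.1 hbb x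
    exact hoc.out hl.1 hu.1 ⟨hl.2.le, hu.2.le⟩
/-- maximality of connected components: a point just outside an interval-shaped
component is not in the ambient open set. -/
lemma comp_shape {A : Set ℝ} (hA : IsOpen A) {t : ℝ} (ht : t ∈ A) :
    connectedComponentIn A t = univ ∨
    (∃ b, connectedComponentIn A t = Iio b ∧ b ∉ A) ∨
    (∃ a, connectedComponentIn A t = Ioi a ∧ a ∉ A) ∨
    (∃ a b, a < b ∧ connectedComponentIn A t = Ioo a b ∧ a ∉ A ∧ b ∉ A) := by
  set C := connectedComponentIn A t with hCdef
  have hCopen : IsOpen C := hA.connectedComponentIn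
  have hCsub : C ⊆ A := connectedComponentIn_subset A t
  have hCne : C.Nonempty := ⟨t, mem_connectedComponentIn ht⟩
  have hoc : C.OrdConnected := isPreconnected_connectedComponentIn.ordConnected
  have key : ∀ x : ℝ, x ∉ C → (∀ ε > 0, ((Ioo (x - ε) (x + ε)) ∩ C).Nonempty) → x ∉ A := by
    intro x hxC hεC hxA
    obtain ⟨ε, hε, hball⟩ := Metric.isOpen_iff.1 hA x hxA
    obtain ⟨y, hy1, hy2⟩ := hεC ε hε
    have hDsub : Ioo (x - ε) (x + ε) ⊆ A := by rw [← Real.ball_eq_Ioo]; exact hball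
    have hpre : IsPreconnected (Ioo (x - ε) (x + ε) ∪ C) :=
      IsPreconnected.union y hy1 hy2 isPreconnected_Ioo isPreconnected_connectedComponentIn
    have hsub : Ioo (x - ε) (x + ε) ∪ C ⊆ C := by
      apply hpre.subset_connectedComponentIn (Or.inr (mem_connectedComponentIn ht))
      exact union_subset hDsub hCsub
    exact hxC (hsub (Or.inl ⟨by linarith, by linarith⟩))
  rcases open_ordConn_cases hCopen hoc hCne with h | ⟨b, h⟩ | ⟨a, h⟩ | ⟨a, b, hab, h⟩
  · exact Or.inl h
  · refine Or.inr (Or.inl ⟨b, h, key b (by simp [h]) ?_⟩)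
    intro ε hε
    exact ⟨b - ε / 2, ⟨by linarith, by linarith⟩, by rw [h]; exact mem_Iio.2 (by linarith)⟩
  · refine Or.inr (Or.inr (Or.inl ⟨a, h, key a (by simp [h]) ?_⟩))
    intro ε hε
    exact ⟨a + ε / 2, ⟨by linarith, by linarith⟩, by rw [h]; exact mem_Ioi.2 (by linarith)⟩
  · refine Or.inr (Or.inr (Or.inr ⟨a, b, hab, h, key a (by simp [h]) ?_, key b (by simp [h]) ?_⟩))
    · intro ε hε
      refine ⟨min (a + ε / 2) ((a + b) / 2), ⟨?_, ?_⟩, ?_⟩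
      · rcases min_cases (a + ε / 2) ((a + b) / 2) with ⟨h', _⟩ | ⟨h', _⟩ <;> rw [h'] <;> linarith
      · calc min (a + ε / 2) ((a + b) / 2) ≤ a + ε / 2 := min_le_left _ _
          _ < a + ε := by linarith
      · rw [h]
        constructor
        · rcases min_cases (a + ε / 2) ((a + b) / 2) with ⟨h', _⟩ | ⟨h', _⟩ <;> rw [h'] <;> linarith
        · calc min (a + ε / 2) ((a + b) / 2) ≤ (a + b) / 2 := min_le_right _ _
            _ < b := by linarith
    · intro ε hε
      refine ⟨max (b - ε / 2) ((a + b) / 2), ⟨?_, ?_⟩, ?_⟩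
      · calc b - ε < b - ε / 2 := by linarith
          _ ≤ max (b - ε / 2) ((a + b) / 2) := le_max_left _ _
      · rcases max_cases (b - ε / 2) ((a + b) / 2) with ⟨h', _⟩ | ⟨h', _⟩ <;> rw [h'] <;> linarith
      · rw [h]
        constructor
        · calc a < (a + b) / 2 := by linarith
            _ ≤ max (b - ε / 2) ((a + b) / 2) := le_max_right _ _
        · rcases max_cases (b - ε / 2) ((a + b) / 2) with ⟨h', _⟩ | ⟨h', _⟩ <;> rw [h'] <;> linarith
/-- a continuous injective map on an ordConnected set is strictly monotone or antitone. -/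
lemma mono_or_anti {S : Set ℝ} {m : ℝ → ℝ} (hS : S.OrdConnected)
    (hc : ContinuousOn m S) (hi : InjOn m S) :
    StrictMonoOn m S ∨ StrictAntiOn m S := by
  by_cases hpair : ∃ p ∈ S, ∃ q ∈ S, p < q
  · obtain ⟨p, hp, q, hq, hpq⟩ := hpair
    have key : ∀ u ∈ S, ∀ v ∈ S, u < v →
        ((m p < m q → m u < m v) ∧ (m q < m p → m v < m u)) := by
      intro u hu v hv huv
      have hminS : min u p ∈ S := by rcases min_cases u p with ⟨h, _⟩ | ⟨h, _⟩ <;> rw [h] <;> assumption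
      have hmaxS : max v q ∈ S := by rcases max_cases v q with ⟨h, _⟩ | ⟨h, _⟩ <;> rw [h] <;> assumption
      have hIcc : Icc (min u p) (max v q) ⊆ S := fun x hx => hS.out hminS hmaxS hx
      have h1 : min u p ≤ max v q :=
        le_trans (min_le_left _ _) (le_trans huv.le (le_max_left _ _))
      have huI : u ∈ Icc (min u p) (max v q) := ⟨min_le_left _ _, huv.le.trans (le_max_left _ _)⟩
      have hvI : v ∈ Icc (min u p) (max v q) := ⟨(min_le_left _ _).trans huv.le, le_max_left _ _⟩
      have hpI : p ∈ Icc (min u p) (max v q) := ⟨min_le_right _ _, hpq.le.trans (le_max_right _ _)⟩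
      have hqI : q ∈ Icc (min u p) (max v q) := ⟨(min_le_right _ _).trans hpq.le, le_max_right _ _⟩
      rcases ContinuousOn.strictMonoOn_of_injOn_Icc' h1 (hc.mono hIcc) (hi.mono hIcc) with hmono | hanti
      · exact ⟨fun _ => hmono huI hvI huv, fun hlt => absurd (hmono hpI hqI hpq) (by linarith)⟩
      · exact ⟨fun hlt => absurd (hanti hpI hqI hpq) (by linarith), fun _ => hanti huI hvI huv⟩
    rcases lt_or_gt_of_ne (hi.ne hp hq hpq.ne) with h | h
    · exact Or.inl fun u hu v hv huv => (key u hu v hv huv).1 h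
    · exact Or.inr fun u hu v hv huv => (key u hu v hv huv).2 h
  · push_neg at hpair
    left
    intro u hu v hv huv
    exact absurd huv (not_lt.2 (hpair u hu v hv))
end Helpers

section Main

variable {X : Type*} [TopologicalSpace X] [T2Space X]
variable {f g : ℝ → X}

/-- Escape lemma, right end: if `(s,b)` maps into `range f` under `g` but `g b ∉ range f`,
then the transition map tends to `±∞` at `b⁻`. -/
lemma escape_right (hf : IsOpenEmbedding f) (hg : IsOpenEmbedding g) {s b : ℝ}
    (hsb : s < b) (hsub : Ioo s b ⊆ g ⁻¹' (range f)) (hb : b ∉ g ⁻¹' (range f)) :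
    Tendsto (invFun f ∘ g) (𝓝[<] b) atTop ∨ Tendsto (invFun f ∘ g) (𝓝[<] b) atBot := by
  set m := invFun f ∘ g with hm
  have hfm : ∀ u ∈ Ioo s b, f (m u) = g u := fun u hu => Function.invFun_eq (hsub hu)
  have hcont : ContinuousOn m (Ioo s b) :=
    (contOn_invFun hf).comp hg.continuous.continuousOn fun u hu => hsub hu
  have hinj : InjOn m (Ioo s b) := fun u hu v hv he =>
    hg.injective (by rw [← hfm u hu, ← hfm v hv, he])
  have hne : (Ioo s b).Nonempty := nonempty_Ioo.2 hsb
  have hIoo : Ioo s b ∈ 𝓝[<] b := Ioo_mem_nhdsLT_of_mem ⟨hsb, le_rfl⟩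
  have lim_con : ∀ L, ¬ Tendsto m (𝓝[<] b) (𝓝 L) := by
    intro L hT
    have h1 : Tendsto g (𝓝[<] b) (𝓝 (f L)) := by
      have h' : Tendsto (f ∘ m) (𝓝[<] b) (𝓝 (f L)) := (hf.continuous.tendsto L).comp hT
      exact h'.congr' (eventually_of_mem hIoo fun u hu => hfm u hu)
    have h2 : Tendsto g (𝓝[<] b) (𝓝 (g b)) := (hg.continuous.tendsto b).mono_left nhdsWithin_le_nhds
    exact hb ⟨L, tendsto_nhds_unique h1 h2⟩
  rcases mono_or_anti ordConnected_Ioo hcont hinj with hmono | hanti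
  · left
    by_cases hbdd : BddAbove (m '' Ioo s b)
    · exact absurd (MonotoneOn.tendsto_nhdsWithin_Ioo_left hne hmono.monotoneOn hbdd) (lim_con _)
    · rw [tendsto_atTop]
      intro M
      obtain ⟨y, ⟨u, hu, rfl⟩, hyM⟩ := not_bddAbove_iff.1 hbdd M
      filter_upwards [Ioo_mem_nhdsLT_of_mem ⟨hu.2, le_rfl⟩] with v hv
      exact hyM.le.trans (hmono hu ⟨hu.1.trans hv.1, hv.2⟩ hv.1).le
  · right
    by_cases hbdd : BddBelow (m '' Ioo s b)
    · exact absurd (AntitoneOn.tendsto_nhdsWithin_Ioo_left hne hanti.antitoneOn hbdd) (lim_con _)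
    · rw [tendsto_atBot]
      intro M
      obtain ⟨y, ⟨u, hu, rfl⟩, hyM⟩ := not_bddBelow_iff.1 hbdd M
      filter_upwards [Ioo_mem_nhdsLT_of_mem ⟨hu.2, le_rfl⟩] with v hv
      exact (hanti hu ⟨hu.1.trans hv.1, hv.2⟩ hv.1).le.trans hyM.le
/-- Escape lemma, left end. -/
lemma escape_left (hf : IsOpenEmbedding f) (hg : IsOpenEmbedding g) {a t : ℝ}
    (hat : a < t) (hsub : Ioo a t ⊆ g ⁻¹' (range f)) (ha : a ∉ g ⁻¹' (range f)) :
    Tendsto (invFun f ∘ g) (𝓝[>] a) atTop ∨ Tendsto (invFun f ∘ g) (𝓝[>] a) atBot := by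
  set m := invFun f ∘ g with hm
  have hfm : ∀ u ∈ Ioo a t, f (m u) = g u := fun u hu => Function.invFun_eq (hsub hu)
  have hcont : ContinuousOn m (Ioo a t) :=
    (contOn_invFun hf).comp hg.continuous.continuousOn fun u hu => hsub hu
  have hinj : InjOn m (Ioo a t) := fun u hu v hv he =>
    hg.injective (by rw [← hfm u hu, ← hfm v hv, he])
  have hne : (Ioo a t).Nonempty := nonempty_Ioo.2 hat
  have hIoo : Ioo a t ∈ 𝓝[>] a := Ioo_mem_nhdsGT_of_mem ⟨le_rfl, hat⟩
  have lim_con : ∀ L, ¬ Tendsto m (𝓝[>] a) (𝓝 L) := by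
    intro L hT
    have h1 : Tendsto g (𝓝[>] a) (𝓝 (f L)) := by
      have h' : Tendsto (f ∘ m) (𝓝[>] a) (𝓝 (f L)) := (hf.continuous.tendsto L).comp hT
      exact h'.congr' (eventually_of_mem hIoo fun u hu => hfm u hu)
    have h2 : Tendsto g (𝓝[>] a) (𝓝 (g a)) := (hg.continuous.tendsto a).mono_left nhdsWithin_le_nhds
    exact ha ⟨L, tendsto_nhds_unique h1 h2⟩
  rcases mono_or_anti ordConnected_Ioo hcont hinj with hmono | hanti
  · right
    by_cases hbdd : BddBelow (m '' Ioo a t)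
    · exact absurd (MonotoneOn.tendsto_nhdsWithin_Ioo_right hne hmono.monotoneOn hbdd) (lim_con _)
    · rw [tendsto_atBot]
      intro M
      obtain ⟨y, ⟨u, hu, rfl⟩, hyM⟩ := not_bddBelow_iff.1 hbdd M
      filter_upwards [Ioo_mem_nhdsGT_of_mem ⟨le_rfl, hu.1⟩] with v hv
      exact (hmono ⟨hv.1, hv.2.trans hu.2⟩ hu hv.2).le.trans hyM.le
  · left
    by_cases hbdd : BddAbove (m '' Ioo a t)
    · exact absurd (AntitoneOn.tendsto_nhdsWithin_Ioo_right hne hanti.antitoneOn hbdd) (lim_con _)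
    · rw [tendsto_atTop]
      intro M
      obtain ⟨y, ⟨u, hu, rfl⟩, hyM⟩ := not_bddAbove_iff.1 hbdd M
      filter_upwards [Ioo_mem_nhdsGT_of_mem ⟨le_rfl, hu.1⟩] with v hv
      exact hyM.le.trans (hanti ⟨hv.1, hv.2.trans hu.2⟩ hu hv.2).le
/-- If a component of the overlap is a bounded interval `(a,b)`, then `range f ⊆ range g`. -/
lemma surj_of_Ioo (hf : IsOpenEmbedding f) (hg : IsOpenEmbedding g) {a b : ℝ} (hab : a < b)
    (h1 : Ioo a b ⊆ g ⁻¹' (range f)) (ha : a ∉ g ⁻¹' (range f)) (hb : b ∉ g ⁻¹' (range f)) :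
    range f ⊆ range g := by
  set m := invFun f ∘ g with hmdef
  have hfm : ∀ u ∈ Ioo a b, f (m u) = g u := fun u hu => Function.invFun_eq (h1 hu)
  have hcont : ContinuousOn m (Ioo a b) :=
    (contOn_invFun hf).comp hg.continuous.continuousOn fun u hu => h1 hu
  have hinj : InjOn m (Ioo a b) := fun u hu v hv he =>
    hg.injective (by rw [← hfm u hu, ← hfm v hv, he])
  have hmid : (a + b) / 2 ∈ Ioo a b := ⟨by linarith, by linarith⟩
  have hRfilter : Ioo ((a + b) / 2) b ∈ 𝓝[<] b := Ioo_mem_nhdsLT_of_mem ⟨hmid.2, le_rfl⟩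
  have hLfilter : Ioo a ((a + b) / 2) ∈ 𝓝[>] a := Ioo_mem_nhdsGT_of_mem ⟨le_rfl, hmid.1⟩
  have hup : ∀ M : ℝ, ∃ u ∈ Ioo a b, M ≤ m u := by
    intro M
    rcases mono_or_anti ordConnected_Ioo hcont hinj with hmono | hanti
    · have hRT : Tendsto m (𝓝[<] b) atTop := by
        rcases escape_right hf hg hab h1 hb with h | h
        · exact h
        · exfalso
          obtain ⟨v, hv1, hv2⟩ :=
            ((h.eventually (eventually_le_atBot (m ((a + b) / 2) - 1))).and
              (eventually_of_mem hRfilter (fun x hx => hx))).exists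
          have := hmono hmid ⟨lt_trans hmid.1 hv2.1, hv2.2⟩ hv2.1
          linarith
      obtain ⟨v, hv1, hv2⟩ :=
        ((hRT.eventually (eventually_ge_atTop M)).and (eventually_of_mem hRfilter (fun x hx => hx))).exists
      exact ⟨v, ⟨lt_trans hmid.1 hv2.1, hv2.2⟩, hv1⟩
    · have hLT : Tendsto m (𝓝[>] a) atTop := by
        rcases escape_left hf hg hab h1 ha with h | h
        · exact h
        · exfalso
          obtain ⟨v, hv1, hv2⟩ :=
            ((h.eventually (eventually_le_atBot (m ((a + b) / 2) - 1))).and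
              (eventually_of_mem hLfilter (fun x hx => hx))).exists
          have := hanti ⟨hv2.1, lt_trans hv2.2 hmid.2⟩ hmid hv2.2
          linarith
      obtain ⟨v, hv1, hv2⟩ :=
        ((hLT.eventually (eventually_ge_atTop M)).and (eventually_of_mem hLfilter (fun x hx => hx))).exists
      exact ⟨v, ⟨hv2.1, lt_trans hv2.2 hmid.2⟩, hv1⟩
  have hdn : ∀ M : ℝ, ∃ u ∈ Ioo a b, m u ≤ M := by
    intro M
    rcases mono_or_anti ordConnected_Ioo hcont hinj with hmono | hanti
    · have hLB : Tendsto m (𝓝[>] a) atBot := by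
        rcases escape_left hf hg hab h1 ha with h | h
        · exfalso
          obtain ⟨v, hv1, hv2⟩ :=
            ((h.eventually (eventually_ge_atTop (m ((a + b) / 2) + 1))).and
              (eventually_of_mem hLfilter (fun x hx => hx))).exists
          have := hmono ⟨hv2.1, lt_trans hv2.2 hmid.2⟩ hmid hv2.2
          linarith
        · exact h
      obtain ⟨v, hv1, hv2⟩ :=
        ((hLB.eventually (eventually_le_atBot M)).and (eventually_of_mem hLfilter (fun x hx => hx))).exists
      exact ⟨v, ⟨hv2.1, lt_trans hv2.2 hmid.2⟩, hv1⟩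
    · have hRB : Tendsto m (𝓝[<] b) atBot := by
        rcases escape_right hf hg hab h1 hb with h | h
        · exfalso
          obtain ⟨v, hv1, hv2⟩ :=
            ((h.eventually (eventually_ge_atTop (m ((a + b) / 2) + 1))).and
              (eventually_of_mem hRfilter (fun x hx => hx))).exists
          have := hanti hmid ⟨lt_trans hmid.1 hv2.1, hv2.2⟩ hv2.1
          linarith
        · exact h
      obtain ⟨v, hv1, hv2⟩ :=
        ((hRB.eventually (eventually_le_atBot M)).and (eventually_of_mem hRfilter (fun x hx => hx))).exists
      exact ⟨v, ⟨lt_trans hmid.1 hv2.1, hv2.2⟩, hv1⟩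
  rintro x ⟨y, rfl⟩
  obtain ⟨u₁, hu₁, hy₁⟩ := hdn y
  obtain ⟨u₂, hu₂, hy₂⟩ := hup y
  have hpc : IsPreconnected (m '' Ioo a b) := isPreconnected_Ioo.image m hcont
  have hoc := hpc.ordConnected
  have : y ∈ m '' Ioo a b :=
    hoc.out (mem_image_of_mem m hu₁) (mem_image_of_mem m hu₂) ⟨hy₁, hy₂⟩
  obtain ⟨u, hu, hum⟩ := this
  exact ⟨u, by rw [← hfm u hu, hum]⟩
variable [CompactSpace X] [ConnectedSpace X]

lemma main_Iio_mono (hX : IsEmpty (X ≃ₜ AddCircle (1 : ℝ)))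
    (hf : IsOpenEmbedding f) (hg : IsOpenEmbedding g) {b : ℝ}
    (h1 : Iio b ⊆ g ⁻¹' (range f)) (h2 : b ∉ g ⁻¹' (range f))
    (hm : Tendsto (invFun f ∘ g) (𝓝[<] b) atTop) :
    IsFreeInterval (range f ∪ range g) := by
  classical
  set A := g ⁻¹' (range f) with hAdef
  set m : ℝ → ℝ := invFun f ∘ g with hmdef
  have hAopen : IsOpen A := hf.isOpen_range.preimage hg.continuous
  have hfm : ∀ u ∈ A, f (m u) = g u := fun u hu => Function.invFun_eq hu
  have hmcont : ContinuousOn m A :=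
    (contOn_invFun hf).comp hg.continuous.continuousOn fun u hu => hu
  have hminj : InjOn m A := fun u hu v hv he =>
    hg.injective (by rw [← hfm u hu, ← hfm v hv, he])
  have habs1 : range f ⊆ range g → IsFreeInterval (range f ∪ range g) := fun h => by
    rw [union_eq_self_of_subset_left h]; exact freeInterval_range hg
  have habs2 : range g ⊆ range f → IsFreeInterval (range f ∪ range g) := fun h => by
    rw [union_eq_self_of_subset_right h]; exact freeInterval_range hf
  -- strict monotonicity on (−∞, b)
  have hmono : StrictMonoOn m (Iio b) := by
    rcases mono_or_anti ordConnected_Iio (hmcont.mono h1) (hminj.mono h1) with h | h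
    · exact h
    · exfalso
      obtain ⟨v, hv1, hv2⟩ := ((hm.eventually (eventually_ge_atTop (m (b - 1) + 1))).and
        (eventually_of_mem (Ioo_mem_nhdsLT_of_mem ⟨(by linarith : b - 1 < b), le_rfl⟩)
          (fun x hx => hx))).exists
      have := h (show b - 1 ∈ Iio b by simp) (show v ∈ Iio b from hv2.2) hv2.1
      linarith
  by_cases hbdd : BddBelow (m '' Iio b)
  swap
  · -- image is everything: range f ⊆ range g
    apply habs1
    have himg : m '' Iio b = univ := by
      apply eq_univ_of_forall
      intro y
      obtain ⟨z, ⟨u₁, hu₁, rfl⟩, hz⟩ := not_bddBelow_iff.1 hbdd y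
      obtain ⟨u₂, hu₂a, hu₂b⟩ := ((hm.eventually (eventually_ge_atTop y)).and
        (eventually_of_mem (Ioo_mem_nhdsLT_of_mem ⟨hu₁, le_rfl⟩) (fun x hx => hx))).exists
      have hpc : IsPreconnected (m '' Iio b) :=
        isPreconnected_Iio.image m (hmcont.mono h1)
      exact hpc.ordConnected.out (mem_image_of_mem m hu₁)
        (mem_image_of_mem m hu₂b.2) ⟨hz.le, hu₂a⟩
    rintro x ⟨y, rfl⟩
    have : y ∈ m '' Iio b := himg ▸ mem_univ y
    obtain ⟨u, hu, rfl⟩ := this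
    exact ⟨u, (hfm u (h1 hu)).symm⟩
  -- bounded below: the image is a ray (d, ∞)
  set d := sInf (m '' Iio b) with hddef
  have hne : (m '' Iio b).Nonempty := ⟨m (b - 1), mem_image_of_mem m (by simp)⟩
  have himg : m '' Iio b = Ioi d := by
    apply Subset.antisymm
    · rintro y ⟨u, hu, rfl⟩
      have h3 : m (u - 1) < m u := hmono (show u - 1 ∈ Iio b by simp only [mem_Iio] at hu ⊢; linarith) hu (by linarith)
      have h4 : d ≤ m (u - 1) := csInf_le hbdd (mem_image_of_mem m (by simp only [mem_Iio] at hu ⊢; linarith))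
      exact lt_of_le_of_lt h4 h3
    · intro y hy
      obtain ⟨z, ⟨u₁, hu₁, rfl⟩, hz⟩ := exists_lt_of_csInf_lt hne hy
      obtain ⟨u₂, hu₂a, hu₂b⟩ := ((hm.eventually (eventually_ge_atTop y)).and
        (eventually_of_mem (Ioo_mem_nhdsLT_of_mem ⟨hu₁, le_rfl⟩) (fun x hx => hx))).exists
      have hIcc : Icc u₁ u₂ ⊆ Iio b := fun x hx => lt_of_le_of_lt hx.2 hu₂b.2
      have := intermediate_value_Icc (le_of_lt hu₂b.1) ((hmcont.mono (fun x hx => h1 (hIcc hx))))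
      exact (image_mono hIcc) (this ⟨hz.le, hu₂a⟩)
  have hdtend : Tendsto m atBot (𝓝 d) := by
    rw [tendsto_order]
    constructor
    · intro y hy
      filter_upwards [eventually_lt_atBot b] with u hu
      have : m u ∈ Ioi d := himg ▸ mem_image_of_mem m hu
      exact lt_of_lt_of_le hy this.le
    · intro y hy
      obtain ⟨z, ⟨u₁, hu₁, rfl⟩, hz⟩ := exists_lt_of_csInf_lt hne hy
      filter_upwards [eventually_lt_atBot u₁] with u hu
      exact lt_trans (hmono (lt_trans hu hu₁) hu₁ hu) hz
  have hgtend : Tendsto g atBot (𝓝 (f d)) := by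
    have h' : Tendsto (f ∘ m) atBot (𝓝 (f d)) := (hf.continuous.tendsto d).comp hdtend
    exact h'.congr' (by filter_upwards [eventually_lt_atBot b] with u hu; exact hfm u (h1 hu))
  -- the inverse transition map and its limit
  have hnm : ∀ y ∈ Ioi d, invFun g (f y) ∈ Iio b ∧ m (invFun g (f y)) = y ∧ f y = g (invFun g (f y)) := by
    intro y hy
    obtain ⟨u, hu, rfl⟩ := himg ▸ hy
    have h3 : f (m u) = g u := hfm u (h1 hu)
    have h4 : invFun g (f (m u)) = u := by rw [h3, Function.leftInverse_invFun hg.injective u]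
    rw [h4]
    exact ⟨hu, rfl, h3⟩ 
  have hntend : Tendsto (fun y => invFun g (f y)) (𝓝[>] d) atBot := by
    rw [tendsto_atBot]
    intro M
    set u₁ := min (M - 1) (b - 1) with hu₁def
    have hu₁b : u₁ ∈ Iio b := by simp only [mem_Iio, hu₁def]; exact lt_of_le_of_lt (min_le_right _ _) (by linarith)
    have hu₁M : u₁ < M := lt_of_le_of_lt (min_le_left _ _) (by linarith)
    have hmu₁ : d < m u₁ := by
      have : m u₁ ∈ Ioi d := himg ▸ mem_image_of_mem m hu₁b
      exact this
    filter_upwards [Ioo_mem_nhdsGT_of_mem ⟨le_rfl, hmu₁⟩] with y hy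
    obtain ⟨hyb, hym, _⟩ := hnm y hy.1
    by_contra hcon
    push_neg at hcon
    have : u₁ < invFun g (f y) := lt_of_lt_of_le hu₁M hcon.le
    have := hmono hu₁b hyb this
    rw [hym] at this
    exact absurd hy.2 (not_lt.2 this.le)
  have hdB : d ∉ f ⁻¹' (range g) := by
    intro hdB'
    obtain ⟨v, hv⟩ := hdB'
    have hftend : Tendsto (fun y => f y) (𝓝[>] d) (𝓝 (g v)) := by
      rw [hv]
      exact (hf.continuous.tendsto d).mono_left nhdsWithin_le_nhds
    have hgn : Tendsto (fun y => g (invFun g (f y))) (𝓝[>] d) (𝓝 (g v)) := by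
      apply hftend.congr'
      filter_upwards [self_mem_nhdsWithin] with y hy
      exact (hnm y hy).2.2
    have hvals : ∀ᶠ y in 𝓝[>] d, g (invFun g (f y)) ∈ range g := by
      filter_upwards with y; exact ⟨_, rfl⟩
    have hnv : Tendsto (fun y => invFun g (f y)) (𝓝[>] d) (𝓝 v) := by
      have hcg : ContinuousWithinAt (invFun g) (range g) (g v) :=
        (contOn_invFun hg) (g v) ⟨v, rfl⟩
      have := hcg.tendsto.comp (tendsto_nhdsWithin_iff.2 ⟨hgn, hvals⟩)
      have hveq : invFun g (g v) = v := Function.leftInverse_invFun hg.injective v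
      rw [hveq] at this
      exact this.congr (fun y => by rw [Function.comp_apply,
        Function.leftInverse_invFun hg.injective])
    obtain ⟨y, hy1, hy2⟩ := ((hntend.eventually (eventually_lt_atBot (v - 1))).and
      (hnv.eventually (eventually_gt_nhds (by linarith : v - 1 < v)))).exists
    linarith
  by_cases hA' : ∀ t ∈ A, t < b
  · -- one component: glue the two lines into one
    have hAeq : A = Iio b := Subset.antisymm (fun t ht => hA' t ht) h1
    have hBeq : f ⁻¹' (range g) = Ioi d := by
      ext y
      constructor
      · rintro ⟨u, hu⟩
        have huA : u ∈ A := ⟨y, hu.symm⟩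
        have hym : m u = y := by
          rw [hmdef]
          simp only [Function.comp_apply]
          rw [hu]
          exact Function.leftInverse_invFun hf.injective y
        have : m u ∈ Ioi d := himg ▸ mem_image_of_mem m (hAeq ▸ huA)
        rwa [hym] at this
      · intro hy
        obtain ⟨hyb, hym, hfy⟩ := hnm y hy
        exact ⟨_, hfy.symm⟩
    set h : ℝ → X := fun t => if t ≤ 0 then f (d + t) else g (Real.log t) with hhdef
    have hval_le : ∀ t : ℝ, t ≤ 0 → h t = f (d + t) := fun t ht => if_pos ht
    have hval_pos : ∀ t : ℝ, 0 < t → h t = g (Real.log t) := fun t ht => if_neg (not_le.2 ht)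
    have hh0 : h 0 = f d := by rw [hval_le 0 le_rfl, add_zero]
    have hev_neg : ∀ t : ℝ, t < 0 → h =ᶠ[𝓝 t] fun u => f (d + u) := by
      intro t ht
      filter_upwards [Iio_mem_nhds ht] with u hu
      exact hval_le u hu.le
    have hev_pos : ∀ t : ℝ, 0 < t → h =ᶠ[𝓝 t] (g ∘ Real.log) := by
      intro t ht
      filter_upwards [Ioi_mem_nhds ht] with u hu
      exact hval_pos u hu
    have hcont : Continuous h := by
      rw [continuous_iff_continuousAt]
      intro t
      rcases lt_trichotomy t 0 with ht | rfl | ht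
      · rw [continuousAt_congr (hev_neg t ht)]
        exact (hf.continuous.comp (continuous_const.add continuous_id)).continuousAt
      · unfold ContinuousAt
        rw [hh0, ← nhdsLE_sup_nhdsGT (0 : ℝ), tendsto_sup]
        constructor
        · have hbase : Tendsto (fun u : ℝ => f (d + u)) (𝓝[≤] (0:ℝ)) (𝓝 (f d)) := by
            have h' : Tendsto (fun u : ℝ => f (d + u)) (𝓝 0) (𝓝 (f d)) := by
              have hc : Continuous (fun u : ℝ => f (d + u)) :=
                hf.continuous.comp (continuous_const.add continuous_id)
              have := hc.tendsto 0
              simpa using this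
            exact h'.mono_left nhdsWithin_le_nhds
          refine Tendsto.congr' ?_ hbase
          filter_upwards [self_mem_nhdsWithin] with u hu
          exact (hval_le u hu).symm
        · have hbase : Tendsto (g ∘ Real.log) (𝓝[>] (0:ℝ)) (𝓝 (f d)) :=
            hgtend.comp Real.tendsto_log_nhdsGT_zero
          refine Tendsto.congr' ?_ hbase
          filter_upwards [self_mem_nhdsWithin] with u hu
          exact (hval_pos u hu).symm
      · rw [continuousAt_congr (hev_pos t ht)]
        exact (hg.continuous.continuousAt).comp (Real.continuousAt_log (ne_of_gt ht))
    have hinj : Injective h := by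
      intro t t' he
      rcases le_or_gt t 0 with ht | ht <;> rcases le_or_gt t' 0 with ht' | ht'
      · rw [hval_le t ht, hval_le t' ht'] at he
        have := hf.injective he
        linarith
      · exfalso
        rw [hval_le t ht, hval_pos t' ht'] at he
        have : d + t ∈ Ioi d := hBeq ▸ (show f (d + t) ∈ range g from ⟨Real.log t', he.symm⟩)
        simp only [mem_Ioi] at this
        linarith
      · exfalso
        rw [hval_pos t ht, hval_le t' ht'] at he
        have : d + t' ∈ Ioi d := hBeq ▸ (show f (d + t') ∈ range g from ⟨Real.log t, he⟩)
        simp only [mem_Ioi] at this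
        linarith
      · rw [hval_pos t ht, hval_pos t' ht'] at he
        exact Real.log_injOn_pos (mem_Ioi.2 ht) (mem_Ioi.2 ht') (hg.injective he)
    have hrange : range h = range f ∪ range g := by
      apply Subset.antisymm
      · rintro x ⟨t, rfl⟩
        rcases le_or_gt t 0 with ht | ht
        · exact Or.inl ⟨d + t, (hval_le t ht).symm⟩
        · exact Or.inr ⟨Real.log t, (hval_pos t ht).symm⟩
      · rintro x (⟨y, rfl⟩ | ⟨u, rfl⟩)
        · rcases le_or_gt y d with hyd | hyd
          · refine ⟨y - d, ?_⟩
            rw [hval_le _ (by linarith), show d + (y - d) = y by ring]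
          · obtain ⟨hyb, hym, hfy⟩ := hnm y hyd
            refine ⟨Real.exp (invFun g (f y)), ?_⟩
            rw [hval_pos _ (Real.exp_pos _), Real.log_exp, ← hfy]
        · exact ⟨Real.exp u, by rw [hval_pos _ (Real.exp_pos _), Real.log_exp]⟩
    have hopen : IsOpenMap h := by
      rw [isOpenMap_iff_nhds_le]
      intro t
      rcases lt_trichotomy t 0 with ht | rfl | ht
      · have hmapeq : map h (𝓝 t) = 𝓝 (h t) := by
          rw [Filter.map_congr (hev_neg t ht), hval_le t ht.le]
          have h1' : (fun u : ℝ => f (d + u)) = f ∘ ⇑(Homeomorph.addLeft d) := rfl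
          rw [h1', ← Filter.map_map, (Homeomorph.addLeft d).map_nhds_eq, hf.map_nhds_eq]
          rfl
        exact le_of_eq hmapeq.symm
      · intro S hS
        rw [mem_map] at hS
        obtain ⟨ε, hε, hsub'⟩ := (nhds_basis_Ioo_pos (0 : ℝ)).mem_iff.1 hS
        obtain ⟨y₀, hy₀gt, hy₀⟩ := (nhdsGT_basis d).eventually_iff.1
          (hntend.eventually (eventually_lt_atBot (Real.log ε)))
        rw [hh0]
        refine mem_of_superset
          (hf.isOpenMap.image_mem_nhds (Ioo_mem_nhds (by linarith : d - ε < d) hy₀gt)) ?_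
        rintro x ⟨y, hy, rfl⟩
        rcases le_or_gt y d with hyd | hyd
        · have hmem : y - d ∈ Ioo (0 - ε) (0 + ε) := by
            constructor
            · have := hy.1; simp only [zero_sub]; linarith
            · simp only [zero_add]; linarith
          have := hsub' hmem
          rw [mem_preimage, hval_le _ (by linarith), show d + (y - d) = y by ring] at this
          exact this
        · obtain ⟨hyb, hym, hfy⟩ := hnm y hyd
          have hlt : invFun g (f y) < Real.log ε := hy₀ ⟨hyd, hy.2⟩
          have hmem : Real.exp (invFun g (f y)) ∈ Ioo (0 - ε) (0 + ε) := by
            constructor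
            · have := Real.exp_pos (invFun g (f y)); simp only [zero_sub]; linarith
            · simp only [zero_add]
              calc Real.exp (invFun g (f y)) < Real.exp (Real.log ε) := Real.exp_lt_exp.2 hlt
                _ = ε := Real.exp_log hε
          have := hsub' hmem
          rw [mem_preimage, hval_pos _ (Real.exp_pos _), Real.log_exp, ← hfy] at this
          exact this
      · have hmapeq : map h (𝓝 t) = 𝓝 (h t) := by
          rw [Filter.map_congr (hev_pos t ht), hval_pos t ht]
          have hexp : t = Real.exp (Real.log t) := (Real.exp_log ht).symm
          rw [hexp, ← Real.isOpenEmbedding_exp.map_nhds_eq, Filter.map_map]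
          have hcomp : (g ∘ Real.log) ∘ Real.exp = g := by
            funext u; simp [Real.log_exp]
          rw [hcomp, hg.map_nhds_eq, Real.log_exp]
        exact le_of_eq hmapeq.symm
    have hOE : IsOpenEmbedding h := .of_continuous_injective_isOpenMap hcont hinj hopen
    refine ⟨hf.isOpen_range.union hg.isOpen_range, ⟨?_⟩⟩
    exact (Homeomorph.setCongr hrange).symm.trans
      (hOE.isEmbedding.toHomeomorph).symm
  · -- second component exists: the space is a circle, contradiction
    push_neg at hA'
    obtain ⟨t₁, ht₁A, ht₁b⟩ := hA'
    rcases comp_shape hAopen ht₁A with hsh | ⟨b₁, hsh, hb₁⟩ | ⟨a₁, hsh, ha₁⟩ | ⟨a₁, b₁, hab₁, hsh, ha₁, hb₁⟩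
    · exact absurd (connectedComponentIn_subset A t₁ (hsh ▸ mem_univ b)) h2
    · have ht₁C : t₁ < b₁ := by
        have := mem_connectedComponentIn ht₁A
        rwa [hsh, mem_Iio] at this
      exact absurd (connectedComponentIn_subset A t₁
        (by rw [hsh]; exact mem_Iio.2 (lt_of_le_of_lt ht₁b ht₁C))) h2
    · -- the circle case proper
      have hIoi : Ioi a₁ ⊆ A := hsh ▸ connectedComponentIn_subset A t₁
      have hba₁ : b ≤ a₁ := by
        by_contra hcon
        push_neg at hcon
        exact ha₁ (h1 hcon)
      have himg_le : ∀ u ∈ Ioi a₁, m u ≤ d := by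
        intro u hu
        by_contra hcon
        push_neg at hcon
        have : m u ∈ Ioi d := hcon
        rw [← himg] at this
        obtain ⟨u', hu', he⟩ := this
        have : u' = u := hminj (h1 hu') (hIoi hu) he
        rw [this] at hu'
        exact absurd hu' (not_lt.2 (le_trans hba₁ (le_of_lt hu)))
      have hesc : Tendsto m (𝓝[>] a₁) atBot := by
        have hIoosub : Ioo a₁ (a₁ + 1) ⊆ A := fun u hu => hIoi hu.1
        rcases escape_left hf hg (by linarith : a₁ < a₁ + 1) hIoosub ha₁ with h | h
        · exfalso
          obtain ⟨v, hv1, hv2⟩ := ((h.eventually (eventually_ge_atTop (d + 1))).and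
            (eventually_of_mem (Ioo_mem_nhdsGT_of_mem
              ⟨le_rfl, (by linarith : a₁ < a₁ + 1)⟩) (fun x hx => hx))).exists
          have := himg_le v hv2.1
          linarith
        · exact h
      have hmono1 : StrictMonoOn m (Ioi a₁) := by
        rcases mono_or_anti ordConnected_Ioi (hmcont.mono hIoi) (hminj.mono hIoi) with h | h
        · exact h
        · exfalso
          obtain ⟨v, hv1, hv2⟩ := ((hesc.eventually
              (eventually_le_atBot (m (a₁ + 1) - 1))).and
            (eventually_of_mem (Ioo_mem_nhdsGT_of_mem
              ⟨le_rfl, (by linarith : a₁ < a₁ + 1)⟩) (fun x hx => hx))).exists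
          have := h hv2.1 (show a₁ + 1 ∈ Ioi a₁ by simp) hv2.2
          linarith
      have hbdd1 : BddAbove (m '' Ioi a₁) := by
        refine ⟨d, ?_⟩
        rintro y ⟨u, hu, rfl⟩
        exact himg_le u hu
      set d₁ := sSup (m '' Ioi a₁) with hd₁def
      have hne1 : (m '' Ioi a₁).Nonempty := ⟨m (a₁ + 1), mem_image_of_mem m (by simp)⟩
      have hd₁d : d₁ ≤ d := csSup_le hne1 (by rintro y ⟨u, hu, rfl⟩; exact himg_le u hu)
      have himg1 : m '' Ioi a₁ = Iio d₁ := by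
        apply Subset.antisymm
        · rintro y ⟨u, hu, rfl⟩
          have h3 : m u < m (u + 1) := hmono1 hu (by simp only [mem_Ioi] at hu ⊢; linarith) (by linarith)
          have h4 : m (u + 1) ≤ d₁ := le_csSup hbdd1 (mem_image_of_mem m (by simp only [mem_Ioi] at hu ⊢; linarith))
          exact lt_of_lt_of_le h3 h4
        · intro y hy
          obtain ⟨z, ⟨u₂, hu₂, rfl⟩, hz⟩ := exists_lt_of_lt_csSup hne1 hy
          obtain ⟨u₁, hu₁a, hu₁b⟩ := ((hesc.eventually (eventually_le_atBot y)).and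
            (eventually_of_mem (Ioo_mem_nhdsGT_of_mem ⟨le_rfl, hu₂⟩) (fun x hx => hx))).exists
          have hIcc : Icc u₁ u₂ ⊆ Ioi a₁ := fun x hx => lt_of_lt_of_le hu₁b.1 hx.1
          have := intermediate_value_Icc (le_of_lt hu₁b.2)
            ((hmcont.mono (fun x hx => hIoi (hIcc hx))))
          exact (image_mono hIcc) (this ⟨hu₁a, hz.le⟩)
      have hd₁tend : Tendsto m atTop (𝓝 d₁) := by
        rw [tendsto_order]
        constructor
        · intro y hy
          obtain ⟨z, ⟨u₂, hu₂, rfl⟩, hz⟩ := exists_lt_of_lt_csSup hne1 hy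
          filter_upwards [eventually_gt_atTop u₂] with u hu
          exact lt_trans hz (hmono1 hu₂ (lt_trans hu₂ hu) hu)
        · intro y hy
          filter_upwards [eventually_gt_atTop a₁] with u hu
          have : m u ∈ Iio d₁ := himg1 ▸ mem_image_of_mem m hu
          exact lt_trans this hy
      have hgtend1 : Tendsto g atTop (𝓝 (f d₁)) := by
        have h' : Tendsto (f ∘ m) atTop (𝓝 (f d₁)) := (hf.continuous.tendsto d₁).comp hd₁tend
        apply h'.congr'
        filter_upwards [eventually_gt_atTop a₁] with u hu
        exact hfm u (hIoi hu)
      have hnm1 : ∀ y ∈ Iio d₁, invFun g (f y) ∈ Ioi a₁ ∧ m (invFun g (f y)) = y ∧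
          f y = g (invFun g (f y)) := by
        intro y hy
        obtain ⟨u, hu, rfl⟩ := himg1 ▸ hy
        have h3 : f (m u) = g u := hfm u (hIoi hu)
        have h4 : invFun g (f (m u)) = u := by
          rw [h3]
          exact Function.leftInverse_invFun hg.injective u
        rw [h4]
        exact ⟨hu, rfl, h3⟩
      have hntend1 : Tendsto (fun y => invFun g (f y)) (𝓝[<] d₁) atTop := by
        rw [tendsto_atTop]
        intro M
        set u₁ := max (M + 1) (a₁ + 1) with hu₁def
        have hu₁a : u₁ ∈ Ioi a₁ := lt_of_lt_of_le (by linarith : a₁ < a₁ + 1) (le_max_right _ _)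
        have hu₁M : M < u₁ := lt_of_lt_of_le (by linarith : M < M + 1) (le_max_left _ _)
        have hmu₁ : m u₁ < d₁ := by
          have : m u₁ ∈ Iio d₁ := himg1 ▸ mem_image_of_mem m hu₁a
          exact this
        filter_upwards [Ioo_mem_nhdsLT_of_mem ⟨hmu₁, le_rfl⟩] with y hy
        obtain ⟨hya, hym, _⟩ := hnm1 y hy.2
        by_contra hcon
        push_neg at hcon
        have h5 : invFun g (f y) < u₁ := lt_of_lt_of_le hcon hu₁M.le
        have := hmono1 hya hu₁a h5
        rw [hym] at this
        exact absurd hy.1 (not_lt.2 this.le)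
      have hd₁B : d₁ ∉ f ⁻¹' (range g) := by
        intro hdB'
        obtain ⟨v, hv⟩ := hdB'
        have hftend : Tendsto (fun y => f y) (𝓝[<] d₁) (𝓝 (g v)) := by
          rw [hv]
          exact (hf.continuous.tendsto d₁).mono_left nhdsWithin_le_nhds
        have hgn : Tendsto (fun y => g (invFun g (f y))) (𝓝[<] d₁) (𝓝 (g v)) := by
          apply hftend.congr'
          filter_upwards [Ioo_mem_nhdsLT_of_mem ⟨(by linarith : d₁ - 1 < d₁), le_rfl⟩] with y hy
          exact (hnm1 y hy.2).2.2
        have hvals : ∀ᶠ y in 𝓝[<] d₁, g (invFun g (f y)) ∈ range g := by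
          filter_upwards with y; exact ⟨_, rfl⟩
        have hnv : Tendsto (fun y => invFun g (f y)) (𝓝[<] d₁) (𝓝 v) := by
          have hcg : ContinuousWithinAt (invFun g) (range g) (g v) :=
            (contOn_invFun hg) (g v) ⟨v, rfl⟩
          have := hcg.tendsto.comp (tendsto_nhdsWithin_iff.2 ⟨hgn, hvals⟩)
          have hveq : invFun g (g v) = v := Function.leftInverse_invFun hg.injective v
          rw [hveq] at this
          exact this.congr (fun y => by rw [Function.comp_apply,
            Function.leftInverse_invFun hg.injective])
        obtain ⟨y, hy1, hy2⟩ := ((hntend1.eventually (eventually_gt_atTop (v + 1))).and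
          (hnv.eventually (eventually_lt_nhds (by linarith : v < v + 1)))).exists
        linarith
      have hT4 : Tendsto (fun y => invFun g (f y)) atBot (𝓝 a₁) := by
        rw [tendsto_order]
        constructor
        · intro y' hy'
          filter_upwards [eventually_lt_atBot d₁] with y hy
          exact lt_trans hy' (hnm1 y hy).1
        · intro y' hy'
          set u₀ := a₁ + min (y' - a₁) 1 / 2 with hu₀def
          have hu₀a : a₁ < u₀ := by
            have h5 : (0:ℝ) < min (y' - a₁) 1 := lt_min (by linarith) one_pos
            simp only [hu₀def]; linarith
          have hu₀y : u₀ < y' := by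
            have h5 : min (y' - a₁) 1 ≤ y' - a₁ := min_le_left _ _
            have h6 : (0:ℝ) < min (y' - a₁) 1 := lt_min (by linarith) one_pos
            simp only [hu₀def]; linarith
          have hmu₀ : m u₀ < d₁ := by
            have : m u₀ ∈ Iio d₁ := himg1 ▸ mem_image_of_mem m hu₀a
            exact this
          filter_upwards [eventually_lt_atBot (m u₀)] with y hy
          have hyd₁ : y < d₁ := lt_trans hy hmu₀
          obtain ⟨hya, hym, _⟩ := hnm1 y hyd₁
          by_contra hcon
          push_neg at hcon
          have h5 : m u₀ ≤ m (invFun g (f y)) :=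
            hmono1.monotoneOn (mem_Ioi.2 hu₀a) hya (le_trans hu₀y.le hcon)
          rw [hym] at h5
          linarith
      have hftendBot : Tendsto f atBot (𝓝 (g a₁)) := by
        have hgn : Tendsto (fun y => g (invFun g (f y))) atBot (𝓝 (g a₁)) :=
          (hg.continuous.tendsto a₁).comp hT4
        apply hgn.congr'
        filter_upwards [eventually_lt_atBot d₁] with y hy
        exact ((hnm1 y hy).2.2).symm
      by_cases hmid : ∃ t₂ ∈ A, t₂ ∈ Icc b a₁
      · obtain ⟨t₂, ht₂A, ht₂⟩ := hmid
        rcases comp_shape hAopen ht₂A with hsh2 | ⟨b₂, hsh2, hb₂⟩ | ⟨a₂, hsh2, ha₂⟩ |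
          ⟨a₂, b₂, hab₂, hsh2, ha₂, hb₂⟩
        · exact absurd (connectedComponentIn_subset A t₂ (hsh2 ▸ mem_univ b)) h2
        · have ht₂C : t₂ < b₂ := by
            have := mem_connectedComponentIn ht₂A
            rwa [hsh2, mem_Iio] at this
          exact absurd (connectedComponentIn_subset A t₂
            (by rw [hsh2]; exact mem_Iio.2 (lt_of_le_of_lt ht₂.1 ht₂C))) h2
        · have ht₂C : a₂ < t₂ := by
            have := mem_connectedComponentIn ht₂A
            rwa [hsh2, mem_Ioi] at this
          exact absurd (connectedComponentIn_subset A t₂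
            (by rw [hsh2]; exact mem_Ioi.2 (lt_of_lt_of_le ht₂C ht₂.2))) ha₁
        · exact habs1 (surj_of_Ioo hf hg hab₂
            (hsh2 ▸ connectedComponentIn_subset A t₂) ha₂ hb₂)
      · push_neg at hmid
        have hAshape : A = Iio b ∪ Ioi a₁ := by
          apply Subset.antisymm
          · intro t ht
            by_contra hcon
            simp only [mem_union, mem_Iio, mem_Ioi, not_or, not_lt] at hcon
            exact absurd ⟨hcon.1, hcon.2⟩ (hmid t ht)
          · exact union_subset h1 hIoi
        -- build the circle parametrization
        set F : ℝ → X := fun t => if t ≤ 0 then f d else if t ≤ 1/2 then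
          g (a₁ + Real.log (2*t)) else if t < 1 then f (d + Real.log (2*t - 1)) else f d
          with hFdef
        have hF0 : ∀ t : ℝ, t ≤ 0 → F t = f d := fun t ht => if_pos ht
        have hFg : ∀ t : ℝ, 0 < t → t ≤ 1/2 → F t = g (a₁ + Real.log (2*t)) := by
          intro t h h'
          rw [hFdef]
          simp only
          rw [if_neg (not_le.2 h), if_pos h']
        have hFf : ∀ t : ℝ, 1/2 < t → t < 1 → F t = f (d + Real.log (2*t - 1)) := by
          intro t h h'
          rw [hFdef]
          simp only
          rw [if_neg (not_le.2 (by linarith)), if_neg (not_le.2 h), if_pos h']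
        have hF1 : ∀ t : ℝ, 1 ≤ t → F t = f d := by
          intro t h
          rw [hFdef]
          simp only
          rw [if_neg (not_le.2 (by linarith)), if_neg (not_le.2 (by linarith)),
            if_neg (not_lt.2 h)]
        have hgval : ∀ t : ℝ, ContinuousAt (fun u : ℝ => g (a₁ + Real.log (2*u))) t → True := fun _ _ => trivial
        have hctg : ∀ t : ℝ, 0 < t → ContinuousAt (fun u : ℝ => g (a₁ + Real.log (2*u))) t := by
          intro t ht
          apply hg.continuous.continuousAt.comp
          apply ContinuousAt.add continuousAt_const
          exact (Real.continuousAt_log (by linarith : (2:ℝ)*t ≠ 0)).comp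
            ((continuous_const.mul continuous_id).continuousAt)
        have hctf : ∀ t : ℝ, 1/2 < t → ContinuousAt (fun u : ℝ => f (d + Real.log (2*u - 1))) t := by
          intro t ht
          apply hf.continuous.continuousAt.comp
          apply ContinuousAt.add continuousAt_const
          refine (Real.continuousAt_log ?_).comp
            (((continuous_const.mul continuous_id).sub continuous_const).continuousAt)
          show (2:ℝ)*t - 1 ≠ 0
          linarith
        have htend_right0 : Tendsto (fun u : ℝ => g (a₁ + Real.log (2*u))) (𝓝[>] 0) (𝓝 (f d)) := by
          apply hgtend.comp
          apply tendsto_atBot_add_const_left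
          apply Real.tendsto_log_nhdsGT_zero.comp
          rw [tendsto_nhdsWithin_iff]
          constructor
          · have h' : Tendsto (fun u : ℝ => 2*u) (𝓝 0) (𝓝 (2*0)) :=
              ((continuous_const.mul continuous_id).tendsto 0)
            simpa using h'.mono_left nhdsWithin_le_nhds
          · filter_upwards [self_mem_nhdsWithin] with u hu
            exact mul_pos two_pos (mem_Ioi.1 hu)
        have htend_right12 : Tendsto (fun u : ℝ => f (d + Real.log (2*u - 1)))
            (𝓝[>] (1/2:ℝ)) (𝓝 (g a₁)) := by
          apply hftendBot.comp
          apply tendsto_atBot_add_const_left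
          apply Real.tendsto_log_nhdsGT_zero.comp
          rw [tendsto_nhdsWithin_iff]
          constructor
          · have h' : Tendsto (fun u : ℝ => 2*u - 1) (𝓝 (1/2:ℝ)) (𝓝 (2*(1/2) - 1)) :=
              (((continuous_const.mul continuous_id).sub continuous_const).tendsto (1/2:ℝ))
            have h'' : (2:ℝ)*(1/2) - 1 = 0 := by norm_num
            rw [h''] at h'
            exact h'.mono_left nhdsWithin_le_nhds
          · filter_upwards [self_mem_nhdsWithin] with u hu
            simp only [mem_Ioi] at hu ⊢
            linarith
        have hFc : Continuous F := by
          rw [continuous_iff_continuousAt]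
          intro t
          rcases lt_trichotomy t 0 with ht | rfl | ht
          · have hev : F =ᶠ[𝓝 t] fun _ => f d := by
              filter_upwards [Iio_mem_nhds ht] with u hu
              exact hF0 u hu.le
            rw [continuousAt_congr hev]
            exact continuousAt_const
          · unfold ContinuousAt
            rw [hF0 0 le_rfl, ← nhdsLE_sup_nhdsGT (0:ℝ), tendsto_sup]
            constructor
            · refine Tendsto.congr' ?_ tendsto_const_nhds
              filter_upwards [self_mem_nhdsWithin] with u hu
              exact (hF0 u hu).symm
            · refine Tendsto.congr' ?_ htend_right0
              filter_upwards [Ioo_mem_nhdsGT_of_mem ⟨le_rfl, (by norm_num : (0:ℝ) < 1/2)⟩]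
                with u hu
              exact (hFg u hu.1 hu.2.le).symm
          · rcases lt_trichotomy t (1/2) with ht2 | rfl | ht2
            · have hev : F =ᶠ[𝓝 t] fun u => g (a₁ + Real.log (2*u)) := by
                filter_upwards [Ioo_mem_nhds ht ht2] with u hu
                exact hFg u hu.1 hu.2.le
              rw [continuousAt_congr hev]
              exact hctg t ht
            · have hval12 : F (1/2) = g a₁ := by
                rw [hFg _ (by norm_num) le_rfl, show (2:ℝ)*(1/2) = 1 by norm_num,
                  Real.log_one, add_zero]
              unfold ContinuousAt
              rw [hval12, ← nhdsLE_sup_nhdsGT (1/2:ℝ), tendsto_sup]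
              constructor
              · have hbase := (hctg (1/2) (by norm_num)).tendsto
                rw [show (2:ℝ)*(1/2) = 1 by norm_num, Real.log_one, add_zero] at hbase
                refine Tendsto.congr' ?_ (hbase.mono_left nhdsWithin_le_nhds)
                filter_upwards [Ioc_mem_nhdsLE_of_mem ⟨(by norm_num : (0:ℝ) < 1/2), le_rfl⟩]
                  with u hu
                exact (hFg u hu.1 hu.2).symm
              · refine Tendsto.congr' ?_ htend_right12
                filter_upwards [Ioo_mem_nhdsGT_of_mem ⟨le_rfl, (by norm_num : (1/2:ℝ) < 1)⟩]
                  with u hu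
                exact (hFf u hu.1 hu.2).symm
            · rcases lt_trichotomy t 1 with ht3 | rfl | ht3
              · have hev : F =ᶠ[𝓝 t] fun u => f (d + Real.log (2*u - 1)) := by
                  filter_upwards [Ioo_mem_nhds ht2 ht3] with u hu
                  exact hFf u hu.1 hu.2
                rw [continuousAt_congr hev]
                exact hctf t ht2
              · have hval1 : F 1 = f d := hF1 1 le_rfl
                unfold ContinuousAt
                rw [hval1, ← nhdsLT_sup_nhdsGE (1:ℝ), tendsto_sup]
                constructor
                · have hbase := (hctf 1 (by norm_num)).tendsto
                  rw [show (2:ℝ)*1 - 1 = 1 by norm_num, Real.log_one, add_zero] at hbase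
                  refine Tendsto.congr' ?_ (hbase.mono_left nhdsWithin_le_nhds)
                  filter_upwards [Ioo_mem_nhdsLT_of_mem ⟨(by norm_num : (1/2:ℝ) < 1), le_rfl⟩]
                    with u hu
                  exact (hFf u hu.1 hu.2).symm
                · refine Tendsto.congr' ?_ tendsto_const_nhds
                  filter_upwards [self_mem_nhdsWithin] with u hu
                  exact (hF1 u hu).symm
              · have hev : F =ᶠ[𝓝 t] fun _ => f d := by
                  filter_upwards [Ioi_mem_nhds ht3] with u hu
                  exact hF1 u hu.le
                rw [continuousAt_congr hev]
                exact continuousAt_const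
        -- basic facts for injectivity / range
        have rep : ∀ t ∈ Ico (0:ℝ) 1, (F t = f d ∧ t = 0) ∨
            (0 < t ∧ t ≤ 1/2 ∧ F t = g (a₁ + Real.log (2*t))) ∨
            (1/2 < t ∧ t < 1 ∧ F t = f (d + Real.log (2*t - 1))) := by
          rintro t ⟨h0, h1'⟩
          rcases eq_or_lt_of_le h0 with heq | hpos
          · exact Or.inl ⟨heq ▸ hF0 t (le_of_eq heq.symm), heq.symm⟩
          · rcases le_or_gt t (1/2) with hle | hgt
            · exact Or.inr (Or.inl ⟨hpos, hle, hFg t hpos hle⟩)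
            · exact Or.inr (Or.inr ⟨hgt, h1', hFf t hgt h1'⟩)
        have hlog_le : ∀ t : ℝ, 0 < t → t ≤ 1/2 → a₁ + Real.log (2*t) ≤ a₁ := by
          intro t h h'
          have := Real.log_nonpos (by linarith) (by linarith : 2*t ≤ 1)
          linarith
        have hlog_lt : ∀ t : ℝ, 1/2 < t → t < 1 → d + Real.log (2*t - 1) < d := by
          intro t h h'
          have := Real.log_neg (by linarith : (0:ℝ) < 2*t - 1) (by linarith : 2*t - 1 < 1)
          linarith
        have hdisj1 : ∀ u, u ≤ a₁ → ∀ y, y < d → g u ≠ f y := by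
          intro u hu y hy he
          have huA : u ∈ A := ⟨y, he.symm⟩
          have hub : u < b := by
            rw [hAshape] at huA
            rcases huA with h | h
            · exact h
            · exact absurd h (not_lt.2 hu)
          have hmu : m u ∈ Ioi d := himg ▸ mem_image_of_mem m hub
          have h5 : f (m u) = f y := by rw [hfm u (h1 hub), he]
          have := hf.injective h5
          rw [this] at hmu
          exact absurd hmu (not_lt.2 hy.le)
        have hFinj : InjOn F (Ico 0 1) := by
          intro t ht t' ht' he
          rcases rep t ht with ⟨hv, h0⟩ | ⟨h1a, h1b, hv⟩ | ⟨h1a, h1b, hv⟩ <;>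
            rcases rep t' ht' with ⟨hv', h0'⟩ | ⟨h1a', h1b', hv'⟩ | ⟨h1a', h1b', hv'⟩
          · rw [h0, h0']
          · exfalso
            rw [hv, hv'] at he
            exact hdB ⟨_, he.symm⟩
          · exfalso
            rw [hv, hv'] at he
            have := hf.injective he
            have := hlog_lt t' h1a' h1b'
            linarith
          · exfalso
            rw [hv, hv'] at he
            exact hdB ⟨_, he⟩
          · rw [hv, hv'] at he
            have h5 := hg.injective he
            have h6 := add_left_cancel h5
            have h7 := Real.log_injOn_pos (mem_Ioi.2 (by linarith : (0:ℝ) < 2*t))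
              (mem_Ioi.2 (by linarith : (0:ℝ) < 2*t')) h6
            linarith
          · exfalso
            rw [hv, hv'] at he
            exact hdisj1 _ (hlog_le t h1a h1b) _ (hlog_lt t' h1a' h1b') he
          · exfalso
            rw [hv, hv'] at he
            have := hf.injective he
            have := hlog_lt t h1a h1b
            linarith
          · exfalso
            rw [hv, hv'] at he
            exact hdisj1 _ (hlog_le t' h1a' h1b') _ (hlog_lt t h1a h1b) he.symm
          · rw [hv, hv'] at he
            have h5 := hf.injective he
            have h6 := add_left_cancel h5
            have h7 := Real.log_injOn_pos (mem_Ioi.2 (by linarith : (0:ℝ) < 2*t - 1))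
              (mem_Ioi.2 (by linarith : (0:ℝ) < 2*t' - 1)) h6
            linarith
        haveI : Fact ((0:ℝ) < 1) := ⟨zero_lt_one⟩
        set e := AddCircle.liftIco 1 0 F with hedef
        have hFeq : F 0 = F (0 + 1) := by rw [zero_add, hF0 0 le_rfl, hF1 1 le_rfl]
        have hecont : Continuous e := AddCircle.liftIco_continuous hFeq hFc.continuousOn
        have heinj : Injective e := by
          intro x y hexy
          have h5 : F ((AddCircle.equivIco 1 0 x : Ico (0:ℝ) (0+1)) : ℝ)
              = F ((AddCircle.equivIco 1 0 y : Ico (0:ℝ) (0+1)) : ℝ) := hexy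
          have hx2 := (AddCircle.equivIco 1 0 x).2
          have hy2 := (AddCircle.equivIco 1 0 y).2
          simp only [zero_add] at hx2 hy2
          have h6 : ((AddCircle.equivIco 1 0 x) : ℝ) = ((AddCircle.equivIco 1 0 y) : ℝ) :=
            hFinj hx2 hy2 h5
          exact (AddCircle.equivIco 1 0).injective (Subtype.ext h6)
        have hrange1 : range e = F '' Ico 0 1 := by
          apply Subset.antisymm
          · rintro x ⟨z, rfl⟩
            have hz2 := (AddCircle.equivIco 1 0 z).2
            simp only [zero_add] at hz2
            exact ⟨_, hz2, rfl⟩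
          · rintro x ⟨t, ht, rfl⟩
            refine ⟨((t : ℝ) : AddCircle (1:ℝ)), ?_⟩
            exact AddCircle.liftIco_coe_apply (by simpa using ht)
        have gIic : ∀ u, u ≤ a₁ → g u ∈ F '' Ico 0 1 := by
          intro u hu
          have hexp := Real.exp_pos (u - a₁)
          have hexp1 : Real.exp (u - a₁) ≤ 1 := Real.exp_le_one_iff.2 (by linarith)
          refine ⟨Real.exp (u - a₁)/2, ⟨by linarith, by linarith⟩, ?_⟩
          rw [hFg _ (by linarith) (by linarith),
            show 2*(Real.exp (u - a₁)/2) = Real.exp (u - a₁) by ring, Real.log_exp,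
            show a₁ + (u - a₁) = u by ring]
        have fIic : ∀ y, y ≤ d → f y ∈ F '' Ico 0 1 := by
          intro y hy
          rcases eq_or_lt_of_le hy with heq | hlt
          · exact ⟨0, ⟨le_rfl, by norm_num⟩, by rw [hF0 0 le_rfl, heq]⟩
          · have hexp := Real.exp_pos (y - d)
            have hexp1 : Real.exp (y - d) < 1 := Real.exp_lt_one_iff.2 (by linarith)
            refine ⟨(Real.exp (y - d) + 1)/2, ⟨by linarith, by linarith⟩, ?_⟩
            rw [hFf _ (by linarith) (by linarith),
              show 2*((Real.exp (y - d) + 1)/2) - 1 = Real.exp (y - d) by ring, Real.log_exp,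
              show d + (y - d) = y by ring]
        have hrange2 : F '' Ico 0 1 = range f ∪ range g := by
          apply Subset.antisymm
          · rintro x ⟨t, ht, rfl⟩
            rcases rep t ht with ⟨hv, _⟩ | ⟨_, _, hv⟩ | ⟨_, _, hv⟩
            · rw [hv]; exact Or.inl ⟨d, rfl⟩
            · rw [hv]; exact Or.inr ⟨_, rfl⟩
            · rw [hv]; exact Or.inl ⟨_, rfl⟩
          · rintro x (⟨y, rfl⟩ | ⟨u, rfl⟩)
            · rcases le_or_gt y d with hyd | hyd
              · exact fIic y hyd
              · obtain ⟨u', hu', he⟩ : y ∈ m '' Iio b := by rw [himg]; exact hyd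
                have h5 : f y = g u' := by rw [← he]; exact hfm u' (h1 hu')
                rw [h5]
                exact gIic u' (le_trans (le_of_lt hu') hba₁)
            · rcases le_or_gt u a₁ with hua | hua
              · exact gIic u hua
              · have h5 : g u = f (m u) := (hfm u (hIoi hua)).symm
                have hmu : m u < d :=
                  lt_of_lt_of_le (show m u ∈ Iio d₁ from himg1 ▸ mem_image_of_mem m hua) hd₁d
                rw [h5]
                exact fIic (m u) hmu.le
        have hVcompact : IsCompact (range f ∪ range g) := by
          rw [← hrange2, ← hrange1]
          exact isCompact_range hecont
        have hVuniv : range f ∪ range g = univ :=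
          IsClopen.eq_univ ⟨hVcompact.isClosed, hf.isOpen_range.union hg.isOpen_range⟩
            ⟨f d, Or.inl ⟨d, rfl⟩⟩
        have hesurj : Surjective e := by
          rw [← Set.range_eq_univ, hrange1, hrange2]
          exact hVuniv
        have hbij : Function.Bijective e := ⟨heinj, hesurj⟩
        have hcont2 : Continuous ⇑(Equiv.ofBijective e hbij) := hecont
        exact (hX.false (hcont2.homeoOfEquivCompactToT2).symm).elim
    · exact habs1 (surj_of_Ioo hf hg hab₁ (hsh ▸ connectedComponentIn_subset A t₁) ha₁ hb₁)
lemma main_Iio (hX : IsEmpty (X ≃ₜ AddCircle (1 : ℝ)))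
    (hf : IsOpenEmbedding f) (hg : IsOpenEmbedding g) {b : ℝ}
    (h1 : Iio b ⊆ g ⁻¹' (range f)) (h2 : b ∉ g ⁻¹' (range f)) :
    IsFreeInterval (range f ∪ range g) := by
  have hsub : Ioo (b - 1) b ⊆ g ⁻¹' (range f) := fun u hu => h1 hu.2
  rcases escape_right hf hg (by linarith) hsub h2 with hT | hB
  · exact main_Iio_mono hX hf hg h1 h2 hT
  · set f' : ℝ → X := f ∘ Neg.neg with hf'def
    have hf' : IsOpenEmbedding f' := hf.comp (Homeomorph.neg ℝ).isOpenEmbedding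
    have hr' : range f' = range f := neg_surjective.range_comp f
    have h1' : Iio b ⊆ g ⁻¹' (range f') := by rw [hr']; exact h1
    have h2' : b ∉ g ⁻¹' (range f') := by rw [mem_preimage, hr']; exact h2
    have hinv : ∀ u ∈ Iio b, invFun f' (g u) = - invFun f (g u) := by
      intro u hu
      have hgu : g u ∈ range f := h1 hu
      have h3 : f (invFun f (g u)) = g u := Function.invFun_eq hgu
      have h4 : f' (-invFun f (g u)) = g u := by
        simp only [hf'def, Function.comp_apply, neg_neg, h3]
      have h5 : f' (invFun f' (g u)) = g u := Function.invFun_eq ⟨_, h4⟩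
      exact hf'.injective (h5.trans h4.symm)
    have hm' : Tendsto (invFun f' ∘ g) (𝓝[<] b) atTop := by
      have hev : (invFun f' ∘ g) =ᶠ[𝓝[<] b] fun u => - (invFun f ∘ g) u := by
        filter_upwards [self_mem_nhdsWithin] with u hu
        exact hinv u hu
      rw [tendsto_congr' hev]
      exact tendsto_neg_atBot_atTop.comp hB
    have := main_Iio_mono hX hf' hg h1' h2' hm'
    rwa [hr'] at this
end Main

/-- In a continuum not homeomorphic to the circle, the union of two
non-disjoint free intervals is a free interval. -/
theorem stmt1 {X : Type*} [TopologicalSpace X] [CompactSpace X] [ConnectedSpace X]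
    [TopologicalSpace.MetrizableSpace X] (hX : IsEmpty (X ≃ₜ AddCircle (1 : ℝ)))
    (J₁ J₂ : Set X) (h₁ : IsFreeInterval J₁) (h₂ : IsFreeInterval J₂)
    (hmeet : (J₁ ∩ J₂).Nonempty) :
    IsFreeInterval (J₁ ∪ J₂) := by
  obtain ⟨hJ₁, ⟨φ⟩⟩ := h₁
  obtain ⟨hJ₂, ⟨ψ⟩⟩ := h₂
  set f : ℝ → X := Subtype.val ∘ φ.symm with hfdef
  set g : ℝ → X := Subtype.val ∘ ψ.symm with hgdef
  have hf : IsOpenEmbedding f := hJ₁.isOpenEmbedding_subtypeVal.comp φ.symm.isOpenEmbedding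
  have hg : IsOpenEmbedding g := hJ₂.isOpenEmbedding_subtypeVal.comp ψ.symm.isOpenEmbedding
  have hrf : range f = J₁ := by
    rw [hfdef, range_comp, φ.symm.surjective.range_eq, image_univ, Subtype.range_val]
  have hrg : range g = J₂ := by
    rw [hgdef, range_comp, ψ.symm.surjective.range_eq, image_univ, Subtype.range_val]
  rw [← hrf, ← hrg]
  obtain ⟨x, hx1, hx2⟩ := hmeet
  rw [← hrg] at hx2
  obtain ⟨u₀, rfl⟩ := hx2
  rw [← hrf] at hx1
  have hu₀ : u₀ ∈ g ⁻¹' (range f) := hx1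
  have hA : IsOpen (g ⁻¹' (range f)) := hf.isOpen_range.preimage hg.continuous
  rcases comp_shape hA hu₀ with hsh | ⟨b, hsh, hb⟩ | ⟨a, hsh, ha⟩ | ⟨a, b, hab, hsh, ha, hb⟩
  · -- range g ⊆ range f
    have hsub : range g ⊆ range f := by
      rintro x ⟨u, rfl⟩
      have : u ∈ connectedComponentIn (g ⁻¹' (range f)) u₀ := hsh ▸ mem_univ u
      exact connectedComponentIn_subset (g ⁻¹' (range f)) u₀ this
    rw [union_eq_self_of_subset_right hsub]
    exact freeInterval_range hf
  · exact main_Iio hX hf hg (hsh ▸ connectedComponentIn_subset _ u₀) hb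
  · -- flip g
    have hg' : IsOpenEmbedding (g ∘ Neg.neg) := hg.comp (Homeomorph.neg ℝ).isOpenEmbedding
    have hr' : range (g ∘ Neg.neg) = range g := neg_surjective.range_comp g
    have h1' : Iio (-a) ⊆ (g ∘ Neg.neg) ⁻¹' (range f) := by
      intro t ht
      have ht' : t < -a := ht
      have : -t ∈ Ioi a := by simp only [mem_Ioi]; linarith
      exact (hsh ▸ connectedComponentIn_subset _ u₀ : Ioi a ⊆ g ⁻¹' (range f)) this
    have h2' : -a ∉ (g ∘ Neg.neg) ⁻¹' (range f) := by
      simpa using ha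
    have := main_Iio hX hf hg' h1' h2'
    rwa [hr'] at this
  · -- bounded component: range f ⊆ range g
    have hsub := surj_of_Ioo hf hg hab (hsh ▸ connectedComponentIn_subset _ u₀) ha hb
    rw [union_eq_self_of_subset_left hsub]
    exact freeInterval_range hg
end

section
/- Let X be a continuum that is not homeomorphic to the circle. If J₁ and J₂ are free intervals of X that are each maximal with respect to inclusion among free intervals, then either J₁ ∩ J₂ = ∅ or J₁ = J₂. -/
set_option linter.unusedVariables false
set_option linter.unusedSectionVars false
set_option maxHeartbeats 1000000

open Set Function Topology Bornology

namespace Stmt2Aux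

variable {X : Type*} [TopologicalSpace X]

/-- Overlap of chart `f₁` with chart `f₂`, in `f₁`-coordinates. -/
def ov (f₁ f₂ : ℝ → X) : Set ℝ := f₁ ⁻¹' (Set.range f₂)

/-- Transition map from `f₁`-coordinates to `f₂`-coordinates. -/
noncomputable def tr (f₁ f₂ : ℝ → X) : ℝ → ℝ := fun t => Function.invFun f₂ (f₁ t)

/-- The squashing homeomorphism onto `(-1,1)`. -/
noncomputable def sig (t : ℝ) : ℝ := t / (1 + |t|)

variable {f₁ f₂ : ℝ → X}

theorem ov_isOpen (hf₁ : IsOpenEmbedding f₁) (hf₂ : IsOpenEmbedding f₂) :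
    IsOpen (ov f₁ f₂) := hf₂.isOpen_range.preimage hf₁.continuous

theorem tr_spec (hf₂ : IsOpenEmbedding f₂) {t : ℝ} (ht : t ∈ ov f₁ f₂) :
    f₂ (tr f₁ f₂ t) = f₁ t := Function.invFun_eq ht

theorem tr_mem (hf₂ : IsOpenEmbedding f₂) {t : ℝ} (ht : t ∈ ov f₁ f₂) :
    tr f₁ f₂ t ∈ ov f₂ f₁ := by
  have := tr_spec (f₁ := f₁) hf₂ ht
  simp only [ov, mem_preimage, this]
  exact mem_range_self _

theorem tr_tr (hf₁ : IsOpenEmbedding f₁) (hf₂ : IsOpenEmbedding f₂) {t : ℝ}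
    (ht : t ∈ ov f₁ f₂) : tr f₂ f₁ (tr f₁ f₂ t) = t := by
  have h1 := tr_spec (f₁ := f₁) hf₂ ht
  unfold tr at h1 ⊢
  rw [h1]
  exact Function.leftInverse_invFun hf₁.injective t

theorem tr_injOn (hf₁ : IsOpenEmbedding f₁) (hf₂ : IsOpenEmbedding f₂) :
    InjOn (tr f₁ f₂) (ov f₁ f₂) := by
  intro x hx y hy h
  rw [← tr_tr hf₁ hf₂ hx, ← tr_tr hf₁ hf₂ hy, h]

theorem tr_image (hf₁ : IsOpenEmbedding f₁) (hf₂ : IsOpenEmbedding f₂) :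
    tr f₁ f₂ '' (ov f₁ f₂) = ov f₂ f₁ := by
  apply Subset.antisymm
  · rintro _ ⟨t, ht, rfl⟩; exact tr_mem hf₂ ht
  · intro s hs
    exact ⟨tr f₂ f₁ s, tr_mem hf₁ hs, tr_tr hf₂ hf₁ hs⟩

theorem invFun_continuousOn (hf₂ : IsOpenEmbedding f₂) :
    ContinuousOn (Function.invFun f₂) (Set.range f₂) := by
  rw [continuousOn_iff_continuous_restrict]
  have : (Set.range f₂).domRestrict (Function.invFun f₂) =
      hf₂.isEmbedding.toHomeomorph.symm := by
    funext y
    apply hf₂.injective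
    have h2 : f₂ (Function.invFun f₂ (y : X)) = (y : X) := Function.invFun_eq y.2
    rw [show (Set.range f₂).domRestrict (Function.invFun f₂) y = Function.invFun f₂ (y : X) from rfl,
      h2]
    exact (congrArg Subtype.val
      (hf₂.isEmbedding.toHomeomorph.apply_symm_apply y)).symm
  rw [this]
  exact hf₂.isEmbedding.toHomeomorph.symm.continuous

theorem tr_continuousOn (hf₁ : IsOpenEmbedding f₁) (hf₂ : IsOpenEmbedding f₂) :
    ContinuousOn (tr f₁ f₂) (ov f₁ f₂) :=
  (invFun_continuousOn hf₂).comp hf₁.continuous.continuousOn (fun _ ht => ht)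

theorem unbd [T2Space X] (hf₁ : IsOpenEmbedding f₁) (hf₂ : IsOpenEmbedding f₂) {C : Set ℝ}
    (hC : C ⊆ ov f₁ f₂) {β : ℝ} (hβ : β ∉ ov f₁ f₂) (hcl : β ∈ closure C) :
    ¬ IsBounded (tr f₁ f₂ '' C) := by
  intro hbd
  obtain ⟨c, hc, hlim⟩ := mem_closure_iff_seq_limit.1 hcl
  obtain ⟨M, hM⟩ := hbd.subset_closedBall 0
  have hcomp : IsCompact (Metric.closedBall (0:ℝ) M) := isCompact_closedBall _ _
  have hmem : ∀ n, tr f₁ f₂ (c n) ∈ Metric.closedBall (0:ℝ) M := fun n => hM ⟨c n, hc n, rfl⟩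
  obtain ⟨ℓ, -, φ, hφ, hconv⟩ := hcomp.tendsto_subseq hmem
  have h1 : Filter.Tendsto (fun n => f₂ (tr f₁ f₂ (c (φ n)))) Filter.atTop (𝓝 (f₂ ℓ)) :=
    (hf₂.continuous.tendsto ℓ).comp hconv
  have h2 : (fun n => f₂ (tr f₁ f₂ (c (φ n)))) = fun n => f₁ (c (φ n)) :=
    funext fun n => tr_spec hf₂ (hC (hc _))
  rw [h2] at h1
  have h3 : Filter.Tendsto (fun n => f₁ (c (φ n))) Filter.atTop (𝓝 (f₁ β)) :=
    (hf₁.continuous.tendsto β).comp (hlim.comp hφ.tendsto_atTop)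
  exact hβ ⟨ℓ, (tendsto_nhds_unique h3 h1).symm⟩

/-- If an ord-connected set is unbounded above, it contains upper rays. -/
theorem ray_up {P : Set ℝ} (hP : P.OrdConnected) (h : ¬ BddAbove P) {p : ℝ} (hp : p ∈ P) :
    Ici p ⊆ P := by
  intro q hq
  obtain ⟨z, hz, hqz⟩ := not_bddAbove_iff.1 h q
  exact hP.out hp hz ⟨hq, hqz.le⟩

theorem ray_down {P : Set ℝ} (hP : P.OrdConnected) (h : ¬ BddBelow P) {p : ℝ} (hp : p ∈ P) :
    Iic p ⊆ P := by
  intro q hq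
  obtain ⟨z, hz, hqz⟩ := not_bddBelow_iff.1 h q
  exact hP.out hz hp ⟨hqz.le, hq⟩

theorem ici_subset [T2Space X] (hf₁ : IsOpenEmbedding f₁) (hf₂ : IsOpenEmbedding f₂)
    (hT : ov f₂ f₁ ≠ univ) {x₀ t : ℝ}
    (hx₀ : x₀ ∉ ov f₁ f₂) (ht : t ∈ ov f₁ f₂) (hlt : x₀ < t) : Ici t ⊆ ov f₁ f₂ := by
  set S := ov f₁ f₂ with hSdef
  have hSopen : IsOpen S := ov_isOpen hf₁ hf₂
  by_contra hicc
  obtain ⟨y₀, hy₀t, hy₀⟩ := not_subset.1 hicc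
  rw [mem_Ici] at hy₀t
  -- the sets R (right-reach) and L (left-reach)
  set R := {y : ℝ | Icc t y ⊆ S} with hRdef
  have htR : t ∈ R := by simp only [hRdef, mem_setOf_eq, Icc_self, singleton_subset_iff]; exact ht
  have hRbdd : BddAbove R := by
    refine ⟨y₀, fun y hy => ?_⟩
    by_contra hyy
    push_neg at hyy
    exact hy₀ (hy ⟨hy₀t, hyy.le⟩)
  set r := sSup R with hrdef
  have htr : t ≤ r := le_csSup hRbdd htR
  have htr' : t < r := by
    obtain ⟨ε, hε, hball⟩ := Metric.isOpen_iff.1 hSopen t ht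
    have : t + ε/2 ∈ R := by
      intro z hz
      apply hball
      rw [Metric.mem_ball, Real.dist_eq, abs_lt]
      constructor <;> [linarith [hz.1]; linarith [hz.2]]
    calc t < t + ε/2 := by linarith
    _ ≤ r := le_csSup hRbdd this
  have hIco : Ico t r ⊆ S := by
    intro y hy
    obtain ⟨y', hy'R, hyy'⟩ := exists_lt_of_lt_csSup ⟨t, htR⟩ hy.2
    exact hy'R ⟨hy.1, hyy'.le⟩
  have hrS : r ∉ S := by
    intro hr
    obtain ⟨ε, hε, hball⟩ := Metric.isOpen_iff.1 hSopen r hr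
    obtain ⟨y, hyR, hy⟩ := exists_lt_of_lt_csSup ⟨t, htR⟩ (show r - ε/2 < r by linarith)
    have hmem : r + ε/2 ∈ R := by
      intro z hz
      rcases le_or_gt z y with h | h
      · exact hyR ⟨hz.1, h⟩
      · apply hball
        rw [Metric.mem_ball, Real.dist_eq, abs_lt]
        constructor <;> [linarith [hz.2]; linarith [hz.2]]
    have := le_csSup hRbdd hmem
    linarith [this]
  set L := {y : ℝ | Icc y t ⊆ S} with hLdef
  have htL : t ∈ L := by simp only [hLdef, mem_setOf_eq, Icc_self, singleton_subset_iff]; exact ht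
  have hLbdd : BddBelow L := by
    refine ⟨x₀, fun y hy => ?_⟩
    by_contra hyy
    push_neg at hyy
    exact hx₀ (hy ⟨hyy.le, hlt.le⟩)
  set l := sInf L with hldef
  have hlt' : l ≤ t := csInf_le hLbdd htL
  have hIoc : Ioc l t ⊆ S := by
    intro y hy
    obtain ⟨y', hy'L, hyy'⟩ := exists_lt_of_csInf_lt ⟨t, htL⟩ hy.1
    exact hy'L ⟨hyy'.le, hy.2⟩
  have hlS : l ∉ S := by
    intro hl
    obtain ⟨ε, hε, hball⟩ := Metric.isOpen_iff.1 hSopen l hl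
    obtain ⟨y, hyL, hy⟩ := exists_lt_of_csInf_lt ⟨t, htL⟩ (show l < l + ε/2 by linarith)
    have hmem : l - ε/2 ∈ L := by
      intro z hz
      rcases le_or_gt y z with h | h
      · exact hyL ⟨h, hz.2⟩
      · apply hball
        rw [Metric.mem_ball, Real.dist_eq, abs_lt]
        constructor <;> [linarith [hz.1]; linarith [hz.1]]
    have := csInf_le hLbdd hmem
    linarith [this]
  have hltt : l < t := lt_of_le_of_ne hlt' (fun h => hlS (h ▸ ht))
  -- the three intervals are in S
  have hIoolt : Ioo l t ⊆ S := fun z hz => hIoc ⟨hz.1, hz.2.le⟩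
  have hIootr : Ioo t r ⊆ S := fun z hz => hIco ⟨hz.1.le, hz.2⟩
  have hIoolr : Ioo l r ⊆ S := by
    intro z hz
    rcases le_or_gt z t with h | h
    · exact hIoc ⟨hz.1, h⟩
    · exact hIco ⟨h.le, hz.2⟩
  -- unboundedness of the transition images near both ends
  have h1 : ¬ IsBounded (tr f₁ f₂ '' Ioo l t) := by
    refine unbd hf₁ hf₂ hIoolt hlS ?_
    rw [closure_Ioo hltt.ne]
    exact ⟨le_refl l, hltt.le⟩
  have h2 : ¬ IsBounded (tr f₁ f₂ '' Ioo t r) := by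
    refine unbd hf₁ hf₂ hIootr hrS ?_
    rw [closure_Ioo htr'.ne]
    exact ⟨htr'.le, le_refl r⟩
  -- preconnectedness / ordConnectedness of the images
  have hPC : ∀ u v : ℝ, Ioo u v ⊆ S → (tr f₁ f₂ '' Ioo u v).OrdConnected := by
    intro u v h
    exact (isPreconnected_Ioo.image _ ((tr_continuousOn hf₁ hf₂).mono h)).ordConnected
  set P₁ := tr f₁ f₂ '' Ioo l t with hP₁
  set P₂ := tr f₁ f₂ '' Ioo t r with hP₂
  have hP₁ne : P₁.Nonempty := (nonempty_Ioo.2 hltt).image _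
  have hP₂ne : P₂.Nonempty := (nonempty_Ioo.2 htr').image _
  have hdisj : ∀ z, z ∈ P₁ → z ∈ P₂ → False := by
    rintro z ⟨x, hx, rfl⟩ ⟨y, hy, hxy⟩
    have := tr_injOn hf₁ hf₂ (hIoolt hx) (hIootr hy) hxy.symm
    rw [this] at hx
    exact absurd hx.2 (not_lt.2 hy.1.le)
  have hcone₁ := hPC l t hIoolt
  have hcone₂ := hPC t r hIootr
  rw [isBounded_iff_bddBelow_bddAbove] at h1 h2
  have hnAA : ¬ (¬ BddAbove P₁ ∧ ¬ BddAbove P₂) := by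
    rintro ⟨hA₁, hA₂⟩
    obtain ⟨p₁, hp₁⟩ := hP₁ne
    obtain ⟨p₂, hp₂⟩ := hP₂ne
    exact hdisj (max p₁ p₂) (ray_up hcone₁ hA₁ hp₁ (mem_Ici.2 (le_max_left _ _)))
      (ray_up hcone₂ hA₂ hp₂ (mem_Ici.2 (le_max_right _ _)))
  have hnBB : ¬ (¬ BddBelow P₁ ∧ ¬ BddBelow P₂) := by
    rintro ⟨hA₁, hA₂⟩
    obtain ⟨p₁, hp₁⟩ := hP₁ne
    obtain ⟨p₂, hp₂⟩ := hP₂ne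
    exact hdisj (min p₁ p₂) (ray_down hcone₁ hA₁ hp₁ (mem_Iic.2 (min_le_left _ _)))
      (ray_down hcone₂ hA₂ hp₂ (mem_Iic.2 (min_le_right _ _)))
  -- hence the full image is unbounded both ways
  set P := tr f₁ f₂ '' Ioo l r with hP
  have hsub₁ : P₁ ⊆ P := image_mono (Ioo_subset_Ioo le_rfl htr'.le)
  have hsub₂ : P₂ ⊆ P := image_mono (Ioo_subset_Ioo hltt.le le_rfl)
  have hPA : ¬ BddAbove P := by
    intro h
    rcases not_and_or.1 h1 with hB1 | hA1
    · rcases not_and_or.1 h2 with hB2 | hA2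
      · exact hnBB ⟨hB1, hB2⟩
      · exact hA2 (h.mono hsub₂)
    · exact hA1 (h.mono hsub₁)
  have hPB : ¬ BddBelow P := by
    intro h
    rcases not_and_or.1 h1 with hB1 | hA1
    · exact hB1 (h.mono hsub₁)
    · rcases not_and_or.1 h2 with hB2 | hA2
      · exact hB2 (h.mono hsub₂)
      · exact hnAA ⟨hA1, hA2⟩
  have hPord : P.OrdConnected := hPC l r hIoolr
  have hPuniv : ∀ y : ℝ, y ∈ P := by
    intro y
    obtain ⟨z, hz, hyz⟩ := not_bddAbove_iff.1 hPA y
    obtain ⟨w, hw, hwy⟩ := not_bddBelow_iff.1 hPB y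
    exact hPord.out hw hz ⟨hwy.le, hyz.le⟩
  apply hT
  apply eq_univ_of_forall
  intro s
  obtain ⟨z, hzS, rfl⟩ := hPuniv s
  exact tr_mem hf₂ (hIoolr hzS)

theorem neg_isOpenEmbedding (hf₁ : IsOpenEmbedding f₁) :
    IsOpenEmbedding (fun u : ℝ => f₁ (-u)) :=
  hf₁.comp (Homeomorph.neg ℝ).isOpenEmbedding

theorem range_neg_comp : range (fun u : ℝ => f₁ (-u)) = range f₁ :=
  neg_surjective.range_comp f₁

theorem ov_neg_left : ov (fun u : ℝ => f₁ (-u)) f₂ = (fun u : ℝ => -u) ⁻¹' (ov f₁ f₂) := rfl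

theorem ov_neg_right : ov f₂ (fun u : ℝ => f₁ (-u)) = ov f₂ f₁ := by
  unfold ov; rw [range_neg_comp]

theorem iic_subset [T2Space X] (hf₁ : IsOpenEmbedding f₁) (hf₂ : IsOpenEmbedding f₂)
    (hT : ov f₂ f₁ ≠ univ) {x₀ t : ℝ}
    (hx₀ : x₀ ∉ ov f₁ f₂) (ht : t ∈ ov f₁ f₂) (hlt : t < x₀) : Iic t ⊆ ov f₁ f₂ := by
  have hg : IsOpenEmbedding (fun u : ℝ => f₁ (-u)) := neg_isOpenEmbedding hf₁
  have hT' : ov f₂ (fun u : ℝ => f₁ (-u)) ≠ univ := by rw [ov_neg_right]; exact hT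
  have hx₀' : -x₀ ∉ ov (fun u : ℝ => f₁ (-u)) f₂ := by
    rw [ov_neg_left]; simpa using hx₀
  have ht' : -t ∈ ov (fun u : ℝ => f₁ (-u)) f₂ := by
    rw [ov_neg_left]; simpa using ht
  have h := ici_subset hg hf₂ hT' hx₀' ht' (by linarith)
  intro y hy
  have h2 : -y ∈ ov (fun u : ℝ => f₁ (-u)) f₂ := h (mem_Ici.2 (neg_le_neg hy))
  rw [ov_neg_left] at h2
  simpa using h2

theorem upper_part [T2Space X] (hf₁ : IsOpenEmbedding f₁) (hf₂ : IsOpenEmbedding f₂)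
    (hT : ov f₂ f₁ ≠ univ) {x₀ : ℝ} (hx₀ : x₀ ∉ ov f₁ f₂)
    (hne : (ov f₁ f₂ ∩ Ioi x₀).Nonempty) : ∃ a, ov f₁ f₂ ∩ Ioi x₀ = Ioi a := by
  set S := ov f₁ f₂ with hSdef
  have hSopen : IsOpen S := ov_isOpen hf₁ hf₂
  have hup : ∀ t ∈ S, x₀ < t → Ici t ⊆ S := fun t ht h => ici_subset hf₁ hf₂ hT hx₀ ht h
  set Sp := S ∩ Ioi x₀ with hSp
  obtain ⟨p, hp⟩ := hne
  have hbdd : BddBelow Sp := ⟨x₀, fun y hy => hy.2.le⟩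
  refine ⟨sInf Sp, Subset.antisymm ?_ ?_⟩
  · intro y hy
    rcases lt_or_ge (sInf Sp) y with h | h
    · exact h
    · exfalso
      have hyeq : y = sInf Sp := le_antisymm h (csInf_le hbdd hy)
      have h1 : sInf Sp ∈ Sp := hyeq ▸ hy
      obtain ⟨ε, hε, hball⟩ := Metric.isOpen_iff.1 hSopen _ h1.1
      have hx₀i : x₀ < sInf Sp := h1.2
      have h2 : 0 < min (ε/2) ((sInf Sp - x₀)/2) := by apply lt_min <;> linarith
      have h3 : min (ε/2) ((sInf Sp - x₀)/2) ≤ ε/2 := min_le_left _ _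
      have h4 : min (ε/2) ((sInf Sp - x₀)/2) ≤ (sInf Sp - x₀)/2 := min_le_right _ _
      have hmem : sInf Sp - min (ε/2) ((sInf Sp - x₀)/2) ∈ Sp := by
        constructor
        · apply hball
          rw [Metric.mem_ball, Real.dist_eq, abs_lt]
          constructor <;> linarith
        · simp only [mem_Ioi]; linarith
      have := csInf_le hbdd hmem
      linarith
  · intro y hy
    rw [mem_Ioi] at hy
    obtain ⟨z, hz, hzy⟩ := exists_lt_of_csInf_lt ⟨p, hp⟩ hy
    exact ⟨hup z hz.1 hz.2 (mem_Ici.2 hzy.le), hz.2.trans hzy⟩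

theorem lower_part [T2Space X] (hf₁ : IsOpenEmbedding f₁) (hf₂ : IsOpenEmbedding f₂)
    (hT : ov f₂ f₁ ≠ univ) {x₀ : ℝ} (hx₀ : x₀ ∉ ov f₁ f₂)
    (hne : (ov f₁ f₂ ∩ Iio x₀).Nonempty) : ∃ b, ov f₁ f₂ ∩ Iio x₀ = Iio b := by
  have hg : IsOpenEmbedding (fun u : ℝ => f₁ (-u)) := neg_isOpenEmbedding hf₁
  have hT' : ov f₂ (fun u : ℝ => f₁ (-u)) ≠ univ := by rw [ov_neg_right]; exact hT
  have hx₀' : -x₀ ∉ ov (fun u : ℝ => f₁ (-u)) f₂ := by rw [ov_neg_left]; simpa using hx₀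
  have hkey : ov (fun u : ℝ => f₁ (-u)) f₂ ∩ Ioi (-x₀) =
      (fun u : ℝ => -u) ⁻¹' (ov f₁ f₂ ∩ Iio x₀) := by
    rw [ov_neg_left]
    ext u
    simp only [mem_inter_iff, mem_preimage, mem_Ioi, mem_Iio]
    constructor
    · rintro ⟨h1, h2⟩; exact ⟨h1, by linarith⟩
    · rintro ⟨h1, h2⟩; exact ⟨h1, by linarith⟩
  obtain ⟨q, hq⟩ := hne
  obtain ⟨a, ha⟩ := upper_part hg hf₂ hT' hx₀' (by rw [hkey]; exact ⟨-q, by simpa using hq⟩)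
  rw [hkey] at ha
  refine ⟨-a, ?_⟩
  ext y
  constructor
  · intro hy
    have : -y ∈ Ioi a := by rw [← ha]; simpa using hy
    simpa [mem_Iio] using (by linarith [mem_Ioi.1 this] : y < -a)
  · intro hy
    have : (-y : ℝ) ∈ Ioi a := mem_Ioi.2 (by have := mem_Iio.1 hy; linarith)
    rw [← ha] at this
    simpa using this

/-- Structure of the overlap set: one of three interval shapes. -/
theorem struct [T2Space X] (hf₁ : IsOpenEmbedding f₁) (hf₂ : IsOpenEmbedding f₂)
    (hS0 : (ov f₁ f₂).Nonempty) (hS : ov f₁ f₂ ≠ univ) (hT : ov f₂ f₁ ≠ univ) :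
    (∃ a, ov f₁ f₂ = Ioi a) ∨ (∃ b, ov f₁ f₂ = Iio b) ∨
      (∃ b a, b ≤ a ∧ ov f₁ f₂ = Iio b ∪ Ioi a) := by
  set S := ov f₁ f₂ with hSdef
  obtain ⟨x₀, hx₀⟩ : ∃ x₀, x₀ ∉ S := by
    by_contra h; push_neg at h; exact hS (eq_univ_of_forall h)
  have hdecomp : S = (S ∩ Iio x₀) ∪ (S ∩ Ioi x₀) := by
    apply Subset.antisymm
    · intro t ht
      rcases lt_trichotomy t x₀ with h | h | h
      · exact Or.inl ⟨ht, h⟩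
      · exact absurd ht (h ▸ hx₀)
      · exact Or.inr ⟨ht, h⟩
    · exact union_subset inter_subset_left inter_subset_left
  rcases eq_empty_or_nonempty (S ∩ Iio x₀) with hm | hm <;>
    rcases eq_empty_or_nonempty (S ∩ Ioi x₀) with hp | hp
  · exfalso
    obtain ⟨t, ht⟩ := hS0
    rw [hdecomp, hm, hp] at ht
    simpa using ht
  · obtain ⟨a, ha⟩ := upper_part hf₁ hf₂ hT hx₀ hp
    exact Or.inl ⟨a, by rw [hdecomp, hm, ha, empty_union]⟩
  · obtain ⟨b, hb⟩ := lower_part hf₁ hf₂ hT hx₀ hm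
    exact Or.inr (Or.inl ⟨b, by rw [hdecomp, hp, hb, union_empty]⟩)
  · obtain ⟨b, hb⟩ := lower_part hf₁ hf₂ hT hx₀ hm
    obtain ⟨a, ha⟩ := upper_part hf₁ hf₂ hT hx₀ hp
    refine Or.inr (Or.inr ⟨b, a, ?_, by rw [hdecomp, hb, ha]⟩)
    have hbx : b ≤ x₀ := by
      by_contra h
      push_neg at h
      have : x₀ ∈ S ∩ Iio x₀ := hb ▸ mem_Iio.2 h
      exact hx₀ this.1
    have hax : x₀ ≤ a := by
      by_contra h
      push_neg at h
      have : x₀ ∈ S ∩ Ioi x₀ := ha ▸ mem_Ioi.2 h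
      exact hx₀ this.1
    linarith

theorem mono_or_anti (hf₁ : IsOpenEmbedding f₁) (hf₂ : IsOpenEmbedding f₂) {K : Set ℝ}
    (hK : K ⊆ ov f₁ f₂) (hord : K.OrdConnected) :
    StrictMonoOn (tr f₁ f₂) K ∨ StrictAntiOn (tr f₁ f₂) K := by
  by_contra h
  push_neg at h
  obtain ⟨hm, ha⟩ := h
  rw [StrictMonoOn] at hm; push_neg at hm
  obtain ⟨x, hx, y, hy, hxy, hmxy⟩ := hm
  rw [StrictAntiOn] at ha; push_neg at ha
  obtain ⟨z, hz, w, hw, hzw, hazw⟩ := ha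
  have hpK : min x z ∈ K := by rcases min_cases x z with ⟨h1, -⟩ | ⟨h1, -⟩ <;> rw [h1] <;>
    assumption
  have hqK : max y w ∈ K := by rcases max_cases y w with ⟨h1, -⟩ | ⟨h1, -⟩ <;> rw [h1] <;>
    assumption
  have hIcc : Icc (min x z) (max y w) ⊆ K := fun u hu => hord.out hpK hqK hu
  have hpq : min x z ≤ max y w := le_trans (le_trans (min_le_left _ _) hxy.le) (le_max_left _ _)
  have hmx : x ∈ Icc (min x z) (max y w) :=
    ⟨min_le_left _ _, le_trans hxy.le (le_max_left _ _)⟩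
  have hmy : y ∈ Icc (min x z) (max y w) :=
    ⟨le_trans (min_le_left _ _) hxy.le, le_max_left _ _⟩
  have hmz : z ∈ Icc (min x z) (max y w) :=
    ⟨min_le_right _ _, le_trans hzw.le (le_max_right _ _)⟩
  have hmw : w ∈ Icc (min x z) (max y w) :=
    ⟨le_trans (min_le_right _ _) hzw.le, le_max_right _ _⟩
  rcases ContinuousOn.strictMonoOn_of_injOn_Icc' hpq
    ((tr_continuousOn hf₁ hf₂).mono (hIcc.trans hK))
    ((tr_injOn hf₁ hf₂).mono (hIcc.trans hK)) with hd | hd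
  · exact absurd (hd hmx hmy hxy) (not_lt.2 hmxy)
  · exact absurd (hd hmz hmw hzw) (not_lt.2 hazw)

/-- A strictly monotone surjection from an open ord-connected set is continuous and
relatively open. -/
theorem openEmbedding_on (I : Set ℝ) [I.OrdConnected] (ρ : ℝ → ℝ)
    (hmono : StrictMonoOn ρ I) (hsurj : ∀ y : ℝ, ∃ u ∈ I, ρ u = y) :
    ContinuousOn ρ I ∧ ∀ O : Set ℝ, IsOpen O → IsOpen (ρ '' (O ∩ I)) := by
  have hmono' : StrictMono (fun u : I => ρ u) := fun u v h => hmono u.2 v.2 h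
  have hsurj' : Function.Surjective (fun u : I => ρ u) := by
    intro y; obtain ⟨u, hu, huy⟩ := hsurj y; exact ⟨⟨u, hu⟩, huy⟩
  set E := StrictMono.orderIsoOfSurjective _ hmono' hsurj' with hE
  have hcoe : ∀ u : I, E u = ρ u := fun u =>
    congrFun (StrictMono.coe_orderIsoOfSurjective _ hmono' hsurj') u
  constructor
  · rw [continuousOn_iff_continuous_restrict]
    have h1 : I.domRestrict ρ = fun u : I => E u := by funext u; exact (hcoe u).symm
    rw [h1]
    exact E.toHomeomorph.continuous
  · intro O hO
    have himg : ρ '' (O ∩ I) = E.toHomeomorph '' (Subtype.val ⁻¹' O) := by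
      ext y; constructor
      · rintro ⟨u, ⟨huO, huI⟩, rfl⟩; exact ⟨⟨u, huI⟩, huO, hcoe _⟩
      · rintro ⟨u, huO, rfl⟩; exact ⟨u, ⟨huO, u.2⟩, (hcoe u).symm⟩
    rw [himg]
    exact E.toHomeomorph.isOpenMap _ (hO.preimage continuous_subtype_val)

theorem lemA [T2Space X] (hf₁ : IsOpenEmbedding f₁) (hf₂ : IsOpenEmbedding f₂) {a b' : ℝ}
    (hS : ov f₁ f₂ = Ioi a) (hT : ov f₂ f₁ = Iio b') :
    Nonempty (↥(range f₁ ∪ range f₂) ≃ₜ ℝ) := by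
  set τ := tr f₁ f₂ with hτ
  have himg : τ '' (Ioi a) = Iio b' := by rw [← hS, hτ, tr_image hf₁ hf₂, hT]
  have hmono : StrictMonoOn τ (Ioi a) := by
    rcases mono_or_anti hf₁ hf₂ (by rw [hS]) ordConnected_Ioi with h | h
    · exact h
    · exfalso
      apply unbd hf₁ hf₂ (C := Ioo a (a+1)) (by rw [hS]; exact Ioo_subset_Ioi_self)
        (β := a) (by rw [hS]; simp)
        (by rw [closure_Ioo (by norm_num : a ≠ a+1)]; exact ⟨le_rfl, by norm_num⟩)
      rw [isBounded_iff_bddBelow_bddAbove]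
      constructor
      · refine ⟨τ (a+1), ?_⟩
        rintro _ ⟨z, hz, rfl⟩
        exact (h (mem_Ioi.2 hz.1) (mem_Ioi.2 (by norm_num)) hz.2).le
      · refine ⟨b', ?_⟩
        rintro _ ⟨z, hz, rfl⟩
        exact (mem_Iio.1 (himg ▸ mem_image_of_mem τ (mem_Ioi.2 hz.1))).le
  -- the explicit reparametrisation ρ₁ : (-∞,1) ≃ ℝ with (0,1) ↦ (a,∞)
  set ρ₁ : ℝ → ℝ := fun u => a + min u 0 + max u 0 / (1 - u) with hρ₁def
  have hρ₁neg : ∀ u : ℝ, u ≤ 0 → ρ₁ u = a + u := by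
    intro u hu; simp [hρ₁def, min_eq_left hu, max_eq_right hu]
  have hρ₁pos : ∀ u : ℝ, 0 ≤ u → ρ₁ u = a + u / (1 - u) := by
    intro u hu; simp [hρ₁def, min_eq_right hu, max_eq_left hu]
  have hρ₁mono : StrictMonoOn ρ₁ (Iio 1) := by
    intro u hu v hv huv
    rcases le_or_gt v 0 with h | h
    · rw [hρ₁neg u (huv.le.trans h), hρ₁neg v h]; linarith
    · rcases le_or_gt u 0 with h2 | h2
      · rw [hρ₁neg u h2, hρ₁pos v h.le]
        have : 0 < v / (1 - v) := div_pos h (by linarith [mem_Iio.1 hv])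
        linarith
      · rw [hρ₁pos u h2.le, hρ₁pos v h.le]
        have h3 : 0 < 1 - u := by linarith [mem_Iio.1 hu]
        have h4 : 0 < 1 - v := by linarith [mem_Iio.1 hv]
        have : u / (1 - u) < v / (1 - v) := by rw [div_lt_div_iff₀ h3 h4]; nlinarith
        linarith
  have hρ₁surjIoi : ∀ y, a < y → ∃ u, 0 < u ∧ u < 1 ∧ ρ₁ u = y := by
    intro y hy
    have hd : (0:ℝ) < 1 + (y - a) := by linarith
    refine ⟨(y - a)/(1 + (y - a)), div_pos (by linarith) hd,
      (div_lt_one hd).2 (by linarith), ?_⟩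
    rw [hρ₁pos _ (le_of_lt (div_pos (by linarith) hd))]
    have h1 : 1 - (y - a)/(1 + (y - a)) = 1/(1 + (y - a)) := by field_simp; ring
    rw [h1]
    field_simp
    ring
  have hρ₁surj : ∀ y : ℝ, ∃ u, u < 1 ∧ ρ₁ u = y := by
    intro y
    rcases le_or_gt y a with h | h
    · exact ⟨y - a, by linarith, by rw [hρ₁neg _ (by linarith)]; ring⟩
    · obtain ⟨u, h1, h2, h3⟩ := hρ₁surjIoi y h; exact ⟨u, h2, h3⟩
  have hρ₁Ioi : ∀ u, 0 < u → u < 1 → a < ρ₁ u := by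
    intro u h1 h2
    rw [hρ₁pos u h1.le]
    have : 0 < u/(1 - u) := div_pos h1 (by linarith)
    linarith
  have hρ₁le : ∀ u, u ≤ 0 → ρ₁ u ≤ a := fun u hu => by rw [hρ₁neg u hu]; linarith
  -- second reparametrisation
  set ρ₂ : ℝ → ℝ := fun u => if u < 1 then τ (ρ₁ u) else b' + (u - 1) with hρ₂def
  have hρ₂lt : ∀ u : ℝ, u < 1 → ρ₂ u = τ (ρ₁ u) := fun u h => if_pos h
  have hρ₂ge : ∀ u : ℝ, 1 ≤ u → ρ₂ u = b' + (u - 1) := fun u h => if_neg (not_lt.2 h)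
  have hmemT : ∀ u, 0 < u → u < 1 → τ (ρ₁ u) < b' := fun u h1 h2 =>
    mem_Iio.1 (himg ▸ mem_image_of_mem τ (mem_Ioi.2 (hρ₁Ioi u h1 h2)))
  have hρ₂mono : StrictMonoOn ρ₂ (Ioi 0) := by
    intro u hu v hv huv
    rcases lt_or_ge v 1 with h | h
    · rw [hρ₂lt u (huv.trans h), hρ₂lt v h]
      exact hmono (mem_Ioi.2 (hρ₁Ioi u (mem_Ioi.1 hu) (huv.trans h)))
        (mem_Ioi.2 (hρ₁Ioi v (mem_Ioi.1 hv) h))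
        (hρ₁mono (mem_Iio.2 (huv.trans h)) (mem_Iio.2 h) huv)
    · rcases lt_or_ge u 1 with h2 | h2
      · rw [hρ₂lt u h2, hρ₂ge v h]
        have := hmemT u (mem_Ioi.1 hu) h2
        linarith
      · rw [hρ₂ge u h2, hρ₂ge v h]; linarith
  have hρ₂surj : ∀ y : ℝ, ∃ u, 0 < u ∧ ρ₂ u = y := by
    intro y
    rcases lt_or_ge y b' with h | h
    · have : y ∈ τ '' (Ioi a) := himg ▸ mem_Iio.2 h
      obtain ⟨t, ht, hty⟩ := this
      obtain ⟨u, h1, h2, h3⟩ := hρ₁surjIoi t (mem_Ioi.1 ht)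
      exact ⟨u, h1, by rw [hρ₂lt u h2, h3, hty]⟩
    · exact ⟨y - b' + 1, by linarith, by rw [hρ₂ge _ (by linarith)]; ring⟩
  -- the glued chart
  set g : ℝ → X := fun u => if u < 1 then f₁ (ρ₁ u) else f₂ (ρ₂ u) with hgdef
  have hg₁ : ∀ u : ℝ, u < 1 → g u = f₁ (ρ₁ u) := fun u h => if_pos h
  have hg₂ : ∀ u : ℝ, 0 < u → g u = f₂ (ρ₂ u) := by
    intro u hu
    rcases lt_or_ge u 1 with h | h
    · rw [hg₁ u h, hρ₂lt u h]
      exact (tr_spec hf₂ (by rw [hS]; exact mem_Ioi.2 (hρ₁Ioi u hu h))).symm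
    · exact if_neg (not_lt.2 h)
  haveI : OrdConnected (Iio (1:ℝ)) := ordConnected_Iio
  haveI : OrdConnected (Ioi (0:ℝ)) := ordConnected_Ioi
  obtain ⟨hcont₁, hopen₁⟩ := openEmbedding_on (Iio 1) ρ₁ hρ₁mono
    (fun y => let ⟨u, h1, h2⟩ := hρ₁surj y; ⟨u, mem_Iio.2 h1, h2⟩)
  obtain ⟨hcont₂, hopen₂⟩ := openEmbedding_on (Ioi 0) ρ₂ hρ₂mono
    (fun y => let ⟨u, h1, h2⟩ := hρ₂surj y; ⟨u, mem_Ioi.2 h1, h2⟩)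
  have hgc : Continuous g := by
    rw [continuous_iff_continuousAt]
    intro u
    rcases lt_or_ge u 1 with h | h
    · have hco : ContinuousOn g (Iio 1) :=
        (hf₁.continuous.comp_continuousOn hcont₁).congr (fun z hz => hg₁ z hz)
      exact hco.continuousAt (isOpen_Iio.mem_nhds h)
    · have hco : ContinuousOn g (Ioi 0) :=
        (hf₂.continuous.comp_continuousOn hcont₂).congr (fun z hz => hg₂ z hz)
      exact hco.continuousAt (isOpen_Ioi.mem_nhds (by linarith : (0:ℝ) < u))
  have hltv : ∀ u v : ℝ, u < v → g u ≠ g v := by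
    intro u v huv
    rcases lt_or_ge v 1 with h | h
    · rw [hg₁ u (huv.trans h), hg₁ v h]
      intro he
      have h2 := hf₁.injective he
      have := hρ₁mono (mem_Iio.2 (huv.trans h)) (mem_Iio.2 h) huv
      rw [h2] at this
      exact lt_irrefl _ this
    · rcases le_or_gt u 0 with h2 | h2
      · rw [hg₁ u (by linarith), hg₂ v (by linarith)]
        intro he
        have hmem : ρ₁ u ∈ ov f₁ f₂ := ⟨ρ₂ v, he.symm⟩
        rw [hS] at hmem
        exact absurd (mem_Ioi.1 hmem) (not_lt.2 (hρ₁le u h2))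
      · rw [hg₂ u h2, hg₂ v (by linarith)]
        intro he
        have h3 := hf₂.injective he
        have := hρ₂mono (mem_Ioi.2 h2) (mem_Ioi.2 (by linarith)) huv
        rw [h3] at this
        exact lt_irrefl _ this
  have hginj : Injective g := by
    intro u v h
    rcases lt_trichotomy u v with hc | hc | hc
    · exact absurd h (hltv u v hc)
    · exact hc
    · exact absurd h.symm (hltv v u hc)
  have hrange : range g = range f₁ ∪ range f₂ := by
    apply Subset.antisymm
    · rintro _ ⟨u, rfl⟩
      rcases lt_or_ge u 1 with h | h
      · rw [hg₁ u h]; exact Or.inl (mem_range_self _)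
      · rw [hg₂ u (by linarith)]; exact Or.inr (mem_range_self _)
    · rintro x (⟨t, rfl⟩ | ⟨s, rfl⟩)
      · obtain ⟨u, h1, h2⟩ := hρ₁surj t
        exact ⟨u, by rw [hg₁ u h1, h2]⟩
      · obtain ⟨u, h1, h2⟩ := hρ₂surj s
        exact ⟨u, by rw [hg₂ u h1, h2]⟩
  have hgopen : IsOpenMap g := by
    intro O hO
    have himgO : g '' O = f₁ '' (ρ₁ '' (O ∩ Iio 1)) ∪ f₂ '' (ρ₂ '' (O ∩ Ioi 0)) := by
      apply Subset.antisymm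
      · rintro _ ⟨u, hu, rfl⟩
        rcases lt_or_ge u 1 with h | h
        · exact Or.inl ⟨ρ₁ u, ⟨u, ⟨hu, h⟩, rfl⟩, (hg₁ u h).symm⟩
        · exact Or.inr ⟨ρ₂ u, ⟨u, ⟨hu, by exact mem_Ioi.2 (by linarith)⟩, rfl⟩,
            (hg₂ u (by linarith)).symm⟩
      · rintro x hx
        rcases hx with ⟨_, ⟨u, ⟨hu, h⟩, rfl⟩, rfl⟩ | ⟨_, ⟨u, ⟨hu, h⟩, rfl⟩, rfl⟩
        · exact ⟨u, hu, (hg₁ u h)⟩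
        · exact ⟨u, hu, (hg₂ u h)⟩
    rw [himgO]
    exact (hf₁.isOpenMap _ (hopen₁ O hO)).union (hf₂.isOpenMap _ (hopen₂ O hO))
  have hemb : IsOpenEmbedding g :=
    IsOpenEmbedding.of_continuous_injective_isOpenMap hgc hginj hgopen
  exact ⟨(Homeomorph.setCongr hrange).symm.trans hemb.isEmbedding.toHomeomorph.symm⟩

/-- In the two-component situation, the image of a preconnected piece of the overlap
lands in a single component on the other side. -/
theorem split_sub (hf₁ : IsOpenEmbedding f₁) (hf₂ : IsOpenEmbedding f₂) {b' a' : ℝ}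
    (hT : ov f₂ f₁ = Iio b' ∪ Ioi a') (hba' : b' ≤ a') {K : Set ℝ}
    (hK : K ⊆ ov f₁ f₂) (hKpre : IsPreconnected K) :
    tr f₁ f₂ '' K ⊆ Iio b' ∨ tr f₁ f₂ '' K ⊆ Ioi a' := by
  have hb'T : b' ∉ ov f₂ f₁ := by
    rw [hT]; rintro (h | h)
    · exact lt_irrefl b' (mem_Iio.1 h)
    · exact absurd hba' (not_le.2 (mem_Ioi.1 h))
  have himgT : tr f₁ f₂ '' K ⊆ ov f₂ f₁ := by
    rintro _ ⟨t, ht, rfl⟩; exact tr_mem hf₂ (hK ht)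
  have hord : (tr f₁ f₂ '' K).OrdConnected :=
    (hKpre.image _ ((tr_continuousOn hf₁ hf₂).mono hK)).ordConnected
  by_contra hcon
  push_neg at hcon
  obtain ⟨h1, h2⟩ := hcon
  obtain ⟨x, hx, hxb⟩ := not_subset.1 h1
  obtain ⟨y, hy, hya⟩ := not_subset.1 h2
  rw [mem_Iio, not_lt] at hxb
  rw [mem_Ioi, not_lt] at hya
  have hxa : a' < x := by
    rcases (hT ▸ himgT hx) with h | h
    · exact absurd (mem_Iio.1 h) (not_lt.2 hxb)
    · exact h
  have hyb : y < b' := by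
    rcases (hT ▸ himgT hy) with h | h
    · exact h
    · exact absurd (mem_Ioi.1 h) (not_lt.2 hya)
  have : b' ∈ tr f₁ f₂ '' K := hord.out hy hx ⟨hyb.le, hxb⟩
  exact hb'T (himgT this)

theorem lemB_huniv [T2Space X] [ConnectedSpace X]
    (hf₁ : IsOpenEmbedding f₁) (hf₂ : IsOpenEmbedding f₂) {a b a' b' : ℝ}
    (hS : ov f₁ f₂ = Iio b ∪ Ioi a) (hba : b ≤ a)
    (hT : ov f₂ f₁ = Iio b' ∪ Ioi a') (hba' : b' ≤ a')
    (himg₁ : tr f₁ f₂ '' (Ioi a) = Iio b') (himg₂ : tr f₁ f₂ '' (Iio b) = Ioi a')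
    (himg₁' : tr f₂ f₁ '' (Iio b') = Ioi a) (himg₂' : tr f₂ f₁ '' (Ioi a') = Iio b)
    (hmono₁ : StrictMonoOn (tr f₁ f₂) (Ioi a)) (hmono₂ : StrictMonoOn (tr f₁ f₂) (Iio b))
    (hmono₁' : StrictMonoOn (tr f₂ f₁) (Iio b')) (hmono₂' : StrictMonoOn (tr f₂ f₁) (Ioi a')) :
    range f₁ ∪ range f₂ = univ := by
  set τ := tr f₁ f₂
  set σ' := tr f₂ f₁
  have hIoiaS : Ioi a ⊆ ov f₁ f₂ := by rw [hS]; exact subset_union_right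
  have hIiobS : Iio b ⊆ ov f₁ f₂ := by rw [hS]; exact subset_union_left
  have hIoiaT : Ioi a' ⊆ ov f₂ f₁ := by rw [hT]; exact subset_union_right
  have hIiobT : Iio b' ⊆ ov f₂ f₁ := by rw [hT]; exact subset_union_left
  set c₁ := min (b' - 1) (τ (a + 1)) with hc₁
  set c₂ := max (a' + 1) (τ (b - 1)) with hc₂
  set d₁ := min (b - 1) (σ' (a' + 1)) with hd₁
  set d₂ := max (a + 1) (σ' (b' - 1)) with hd₂
  set K := f₁ '' Icc d₁ d₂ ∪ f₂ '' Icc c₁ c₂ with hK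
  have hcov₁ : range f₁ ⊆ K := by
    rintro _ ⟨t, rfl⟩
    rcases le_or_gt t d₁ with h | h
    · rcases eq_or_lt_of_le h with rfl | h
      · exact Or.inl (mem_image_of_mem _ ⟨le_rfl, min_le_left _ _ |>.trans ((le_max_left _ _).trans' (by linarith))⟩)
      · have htb : t < b := by
          have : d₁ ≤ b - 1 := min_le_left _ _
          linarith
        have htS : t ∈ ov f₁ f₂ := hIiobS htb
        refine Or.inr ⟨τ t, ⟨?_, ?_⟩, tr_spec hf₂ htS⟩
        · have : τ t ∈ Ioi a' := himg₂ ▸ mem_image_of_mem τ htb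
          calc c₁ ≤ b' - 1 := min_le_left _ _
          _ ≤ a' := by linarith
          _ ≤ τ t := (mem_Ioi.1 this).le
        · have htb1 : t < b - 1 := lt_of_lt_of_le h (min_le_left _ _)
          calc τ t ≤ τ (b - 1) := (hmono₂ (mem_Iio.2 htb) (mem_Iio.2 (by linarith)) htb1).le
          _ ≤ c₂ := le_max_right _ _
    · rcases le_or_gt t d₂ with h2 | h2
      · exact Or.inl (mem_image_of_mem _ ⟨h.le, h2⟩)
      · have hta : a < t := by
          have : a + 1 ≤ d₂ := le_max_left _ _
          linarith
        have htS : t ∈ ov f₁ f₂ := hIoiaS hta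
        refine Or.inr ⟨τ t, ⟨?_, ?_⟩, tr_spec hf₂ htS⟩
        · have hta1 : a + 1 < t := by
            have : a + 1 ≤ d₂ := le_max_left _ _
            linarith
          calc c₁ ≤ τ (a+1) := min_le_right _ _
          _ ≤ τ t := (hmono₁ (mem_Ioi.2 (by linarith)) (mem_Ioi.2 (by linarith)) hta1).le
        · have : τ t ∈ Iio b' := himg₁ ▸ mem_image_of_mem τ hta
          calc τ t ≤ b' := (mem_Iio.1 this).le
          _ ≤ a' + 1 := by linarith
          _ ≤ c₂ := le_max_left _ _
  have hcov₂ : range f₂ ⊆ K := by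
    rintro _ ⟨s, rfl⟩
    rcases le_or_gt s c₁ with h | h
    · rcases eq_or_lt_of_le h with rfl | h
      · exact Or.inr (mem_image_of_mem _ ⟨le_rfl, (min_le_left _ _).trans ((le_max_left _ _).trans' (by linarith))⟩)
      · have hsb : s < b' := by
          have : c₁ ≤ b' - 1 := min_le_left _ _
          linarith
        have hsT : s ∈ ov f₂ f₁ := hIiobT hsb
        refine Or.inl ⟨σ' s, ⟨?_, ?_⟩, tr_spec hf₁ hsT⟩
        · have : σ' s ∈ Ioi a := himg₁' ▸ mem_image_of_mem σ' hsb
          calc d₁ ≤ b - 1 := min_le_left _ _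
          _ ≤ a := by linarith
          _ ≤ σ' s := (mem_Ioi.1 this).le
        · have hsb1 : s < b' - 1 := lt_of_lt_of_le h (min_le_left _ _)
          calc σ' s ≤ σ' (b' - 1) := (hmono₁' (mem_Iio.2 hsb) (mem_Iio.2 (by linarith)) hsb1).le
          _ ≤ d₂ := le_max_right _ _
    · rcases le_or_gt s c₂ with h2 | h2
      · exact Or.inr (mem_image_of_mem _ ⟨h.le, h2⟩)
      · have hsa : a' < s := by
          have : a' + 1 ≤ c₂ := le_max_left _ _
          linarith
        have hsT : s ∈ ov f₂ f₁ := hIoiaT hsa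
        refine Or.inl ⟨σ' s, ⟨?_, ?_⟩, tr_spec hf₁ hsT⟩
        · have hsa1 : a' + 1 < s := by
            have : a' + 1 ≤ c₂ := le_max_left _ _
            linarith
          calc d₁ ≤ σ' (a'+1) := min_le_right _ _
          _ ≤ σ' s := (hmono₂' (mem_Ioi.2 (by linarith)) (mem_Ioi.2 (by linarith)) hsa1).le
        · have : σ' s ∈ Iio b := himg₂' ▸ mem_image_of_mem σ' hsa
          calc σ' s ≤ b := (mem_Iio.1 this).le
          _ ≤ a + 1 := by linarith
          _ ≤ d₂ := le_max_left _ _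
  have hKsub : K ⊆ range f₁ ∪ range f₂ := by
    rintro x (⟨t, -, rfl⟩ | ⟨s, -, rfl⟩)
    · exact Or.inl (mem_range_self _)
    · exact Or.inr (mem_range_self _)
  have hKeq : range f₁ ∪ range f₂ = K := Subset.antisymm (union_subset hcov₁ hcov₂) hKsub
  have hKcomp : IsCompact K :=
    (isCompact_Icc.image hf₁.continuous).union (isCompact_Icc.image hf₂.continuous)
  apply IsClopen.eq_univ
  · exact ⟨hKeq ▸ hKcomp.isClosed, hf₁.isOpen_range.union hf₂.isOpen_range⟩
  · exact ⟨f₁ 0, Or.inl (mem_range_self _)⟩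

theorem image_flip (hf₁ : IsOpenEmbedding f₁) (hf₂ : IsOpenEmbedding f₂) {K M : Set ℝ}
    (hK : K ⊆ ov f₁ f₂) (h : tr f₁ f₂ '' K = M) : tr f₂ f₁ '' M = K := by
  subst h
  ext t
  constructor
  · rintro ⟨_, ⟨k, hk, rfl⟩, rfl⟩
    rw [tr_tr hf₁ hf₂ (hK hk)]
    exact hk
  · intro ht
    exact ⟨tr f₁ f₂ t, mem_image_of_mem _ ht, tr_tr hf₁ hf₂ (hK ht)⟩

theorem mono_Ioi_of_imageIio [T2Space X] (hf₁ : IsOpenEmbedding f₁) (hf₂ : IsOpenEmbedding f₂)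
    {a c : ℝ} (hsub : Ioi a ⊆ ov f₁ f₂) (haS : a ∉ ov f₁ f₂)
    (himg : tr f₁ f₂ '' (Ioi a) ⊆ Iio c) : StrictMonoOn (tr f₁ f₂) (Ioi a) := by
  rcases mono_or_anti hf₁ hf₂ hsub ordConnected_Ioi with h | h
  · exact h
  · exfalso
    apply unbd hf₁ hf₂ (C := Ioo a (a+1)) (Ioo_subset_Ioi_self.trans hsub)
      (β := a) haS
      (by rw [closure_Ioo (by norm_num : a ≠ a+1)]; exact ⟨le_rfl, by norm_num⟩)
    rw [isBounded_iff_bddBelow_bddAbove]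
    constructor
    · refine ⟨tr f₁ f₂ (a+1), ?_⟩
      rintro _ ⟨z, hz, rfl⟩
      exact (h (mem_Ioi.2 hz.1) (mem_Ioi.2 (by norm_num)) hz.2).le
    · refine ⟨c, ?_⟩
      rintro _ ⟨z, hz, rfl⟩
      exact (mem_Iio.1 (himg (mem_image_of_mem _ (mem_Ioi.2 hz.1)))).le

theorem mono_Iio_of_imageIoi [T2Space X] (hf₁ : IsOpenEmbedding f₁) (hf₂ : IsOpenEmbedding f₂)
    {b c : ℝ} (hsub : Iio b ⊆ ov f₁ f₂) (hbS : b ∉ ov f₁ f₂)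
    (himg : tr f₁ f₂ '' (Iio b) ⊆ Ioi c) : StrictMonoOn (tr f₁ f₂) (Iio b) := by
  rcases mono_or_anti hf₁ hf₂ hsub ordConnected_Iio with h | h
  · exact h
  · exfalso
    apply unbd hf₁ hf₂ (C := Ioo (b-1) b) (Ioo_subset_Iio_self.trans hsub)
      (β := b) hbS
      (by rw [closure_Ioo (by norm_num : b - 1 ≠ b)]; exact ⟨by norm_num, le_rfl⟩)
    rw [isBounded_iff_bddBelow_bddAbove]
    constructor
    · refine ⟨c, ?_⟩
      rintro _ ⟨z, hz, rfl⟩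
      exact (mem_Ioi.1 (himg (mem_image_of_mem _ (mem_Iio.2 hz.2)))).le
    · refine ⟨tr f₁ f₂ (b-1), ?_⟩
      rintro _ ⟨z, hz, rfl⟩
      exact (h (mem_Iio.2 (by norm_num)) (mem_Iio.2 hz.2) hz.1).le

theorem lemB_images [T2Space X] (hf₁ : IsOpenEmbedding f₁) (hf₂ : IsOpenEmbedding f₂)
    {a b a' b' : ℝ}
    (hS : ov f₁ f₂ = Iio b ∪ Ioi a) (hba : b ≤ a)
    (hT : ov f₂ f₁ = Iio b' ∪ Ioi a') (hba' : b' ≤ a')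
    (hsub : f₁ '' (Ioi a) ⊆ f₂ '' (Iio b')) :
    tr f₁ f₂ '' (Ioi a) = Iio b' ∧ tr f₁ f₂ '' (Iio b) = Ioi a' := by
  set τ := tr f₁ f₂ with hτ
  have hIoiaS : Ioi a ⊆ ov f₁ f₂ := by rw [hS]; exact subset_union_right
  have hIiobS : Iio b ⊆ ov f₁ f₂ := by rw [hS]; exact subset_union_left
  have hD₁sub : τ '' (Ioi a) ⊆ Iio b' := by
    rintro _ ⟨t, ht, rfl⟩
    obtain ⟨s, hs, hfs⟩ := hsub (mem_image_of_mem f₁ ht)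
    have h1 : f₂ (τ t) = f₁ t := tr_spec hf₂ (hIoiaS ht)
    have h2 : τ t = s := hf₂.injective (h1.trans hfs.symm)
    rw [h2]; exact hs
  have hcover : τ '' (Iio b) ∪ τ '' (Ioi a) = ov f₂ f₁ := by
    rw [← image_union, hτ, ← hS]
    exact tr_image hf₁ hf₂
  have hD₂ : τ '' (Iio b) ⊆ Iio b' ∨ τ '' (Iio b) ⊆ Ioi a' :=
    split_sub hf₁ hf₂ hT hba' hIiobS isPreconnected_Iio
  have ha'1 : a' + 1 ∈ ov f₂ f₁ := by rw [hT]; exact Or.inr (mem_Ioi.2 (by norm_num))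
  have hD₂' : τ '' (Iio b) ⊆ Ioi a' := by
    rcases hD₂ with h | h
    · exfalso
      rcases (hcover ▸ ha'1 : a'+1 ∈ τ '' (Iio b) ∪ τ '' (Ioi a)) with h2 | h2
      · have := mem_Iio.1 (h h2); linarith
      · have := mem_Iio.1 (hD₁sub h2); linarith
    · exact h
  constructor
  · apply Subset.antisymm hD₁sub
    intro s hs
    rcases (hcover ▸ (show s ∈ ov f₂ f₁ from hT ▸ Or.inl hs)) with h2 | h2
    · exfalso
      have := mem_Ioi.1 (hD₂' h2)
      have := mem_Iio.1 hs
      linarith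
    · exact h2
  · apply Subset.antisymm hD₂'
    intro s hs
    rcases (hcover ▸ (show s ∈ ov f₂ f₁ from hT ▸ Or.inr hs)) with h2 | h2
    · exact h2
    · exfalso
      have := mem_Iio.1 (hD₁sub h2)
      have := mem_Ioi.1 hs
      linarith

/-! ### The squashing function -/

theorem sig_denom_pos (t : ℝ) : 0 < 1 + |t| := by positivity

theorem sig_mono : StrictMono sig := by
  intro t s h
  unfold sig
  rcases le_or_gt 0 t with h1 | h1
  · rw [abs_of_nonneg h1, abs_of_nonneg (by linarith : (0:ℝ) ≤ s),
      div_lt_div_iff₀ (by linarith) (by linarith)]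
    nlinarith
  · rcases le_or_gt 0 s with h2 | h2
    · have hl : t / (1 + |t|) < 0 := div_neg_of_neg_of_pos h1 (sig_denom_pos t)
      have hr : 0 ≤ s / (1 + |s|) := div_nonneg h2 (sig_denom_pos s).le
      linarith
    · rw [abs_of_neg h1, abs_of_neg h2, div_lt_div_iff₀ (by linarith) (by linarith)]
      nlinarith
theorem sig_mem (t : ℝ) : sig t ∈ Ioo (-1:ℝ) 1 := by
  unfold sig
  constructor
  · rw [neg_lt, ← neg_div]
    rw [div_lt_one (sig_denom_pos t)]
    have := neg_abs_le t
    linarith [abs_nonneg t, neg_le_abs t]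
  · rw [div_lt_one (sig_denom_pos t)]
    linarith [le_abs_self t]

theorem sig_surj {y : ℝ} (h : y ∈ Ioo (-1:ℝ) 1) : ∃ t, sig t = y := by
  obtain ⟨h1, h2⟩ := h
  have hpos : 0 < 1 - |y| := by
    rw [sub_pos]
    exact abs_lt.2 ⟨h1, h2⟩
  refine ⟨y / (1 - |y|), ?_⟩
  unfold sig
  rw [abs_div, abs_of_pos hpos]
  have h3 : 1 + |y| / (1 - |y|) = 1 / (1 - |y|) := by field_simp; ring
  rw [h3, div_div_div_cancel_right₀]
  · simp
  · exact hpos.ne'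

theorem sig_cont : Continuous sig :=
  continuous_id.div (continuous_const.add continuous_abs) (fun t => (sig_denom_pos t).ne')

theorem coe_injOn_Ioc' (u v : ℝ) (hu : u ∈ Ioc (0:ℝ) 1) (hv : v ∈ Ioc (0:ℝ) 1)
    (h : (u : AddCircle (1:ℝ)) = (v : AddCircle (1:ℝ))) : u = v := by
  have h2 : u - v ∈ AddSubgroup.zmultiples (1:ℝ) := by
    rwa [QuotientAddGroup.eq_iff_sub_mem] at h
  obtain ⟨k, hk⟩ := AddSubgroup.mem_zmultiples_iff.1 h2
  rw [zsmul_eq_mul, mul_one] at hk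
  obtain ⟨hu1, hu2⟩ := hu
  obtain ⟨hv1, hv2⟩ := hv
  have h3 : (-1:ℝ) < (k:ℝ) := by rw [hk]; linarith
  have h4 : ((k:ℝ)) < 1 := by rw [hk]; linarith
  have h5 : (-1:ℤ) < k := by exact_mod_cast h3
  have h6 : k < 1 := by exact_mod_cast h4
  have : k = 0 := by omega
  rw [this] at hk
  simp at hk
  linarith

theorem exists_rep_Ioc (z : AddCircle (1:ℝ)) : ∃ u ∈ Ioc (0:ℝ) 1, (u : AddCircle (1:ℝ)) = z := by
  induction z using QuotientAddGroup.induction_on with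
  | H r =>
    have hc : ((r - ⌈r⌉ : ℝ) : AddCircle (1:ℝ)) = (r : AddCircle (1:ℝ)) := by
      rw [QuotientAddGroup.eq_iff_sub_mem]
      refine AddSubgroup.mem_zmultiples_iff.2 ⟨-⌈r⌉, ?_⟩
      rw [zsmul_eq_mul, mul_one]; push_cast; ring
    refine ⟨r - ⌈r⌉ + 1, ⟨by linarith [Int.ceil_lt_add_one r], by linarith [Int.le_ceil r]⟩, ?_⟩
    rw [AddCircle.coe_add_period, hc]

theorem lemB [T2Space X] [CompactSpace X] [ConnectedSpace X]
    (hf₁ : IsOpenEmbedding f₁) (hf₂ : IsOpenEmbedding f₂) {a b a' b' : ℝ}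
    (hS : ov f₁ f₂ = Iio b ∪ Ioi a) (hba : b ≤ a)
    (hT : ov f₂ f₁ = Iio b' ∪ Ioi a') (hba' : b' ≤ a')
    (hsub : f₁ '' (Ioi a) ⊆ f₂ '' (Iio b')) :
    Nonempty (X ≃ₜ AddCircle (1:ℝ)) := by
  classical
  set τ := tr f₁ f₂ with hτdef
  set σ' := tr f₂ f₁ with hσ'def
  have hIoiaS : Ioi a ⊆ ov f₁ f₂ := by rw [hS]; exact subset_union_right
  have hIiobS : Iio b ⊆ ov f₁ f₂ := by rw [hS]; exact subset_union_left
  have hIoiaT : Ioi a' ⊆ ov f₂ f₁ := by rw [hT]; exact subset_union_right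
  have hIiobT : Iio b' ⊆ ov f₂ f₁ := by rw [hT]; exact subset_union_left
  have haS : a ∉ ov f₁ f₂ := by
    rw [hS]; rintro (h | h)
    · exact absurd hba (not_le.2 (mem_Iio.1 h))
    · exact lt_irrefl a (mem_Ioi.1 h)
  have hbS : b ∉ ov f₁ f₂ := by
    rw [hS]; rintro (h | h)
    · exact lt_irrefl b (mem_Iio.1 h)
    · exact absurd hba (not_le.2 (mem_Ioi.1 h))
  have ha'T : a' ∉ ov f₂ f₁ := by
    rw [hT]; rintro (h | h)
    · exact absurd hba' (not_le.2 (mem_Iio.1 h))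
    · exact lt_irrefl a' (mem_Ioi.1 h)
  have hb'T : b' ∉ ov f₂ f₁ := by
    rw [hT]; rintro (h | h)
    · exact lt_irrefl b' (mem_Iio.1 h)
    · exact absurd hba' (not_le.2 (mem_Ioi.1 h))
  obtain ⟨himg₁, himg₂⟩ := lemB_images hf₁ hf₂ hS hba hT hba' hsub
  have himg₁' : σ' '' (Iio b') = Ioi a := image_flip hf₁ hf₂ hIoiaS himg₁
  have himg₂' : σ' '' (Ioi a') = Iio b := image_flip hf₁ hf₂ hIiobS himg₂
  have hmono₁ : StrictMonoOn τ (Ioi a) := mono_Ioi_of_imageIio hf₁ hf₂ hIoiaS haS himg₁.subset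
  have hmono₂ : StrictMonoOn τ (Iio b) := mono_Iio_of_imageIoi hf₁ hf₂ hIiobS hbS himg₂.subset
  have hmono₁' : StrictMonoOn σ' (Iio b') :=
    mono_Iio_of_imageIoi hf₂ hf₁ hIiobT hb'T himg₁'.subset
  have hmono₂' : StrictMonoOn σ' (Ioi a') :=
    mono_Ioi_of_imageIio hf₂ hf₁ hIoiaT ha'T himg₂'.subset
  have huniv : range f₁ ∪ range f₂ = univ :=
    lemB_huniv hf₁ hf₂ hS hba hT hba' himg₁ himg₂ himg₁' himg₂' hmono₁ hmono₂ hmono₁' hmono₂'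
  -- the circle parametrisation data
  have hΔ0 : (0:ℝ) ≤ a' - b' := by linarith
  set L : ℝ := 1 / (1 + (a' - b')) with hL
  have hL0 : 0 < L := by rw [hL]; positivity
  have hL1 : L ≤ 1 := by
    rw [hL, div_le_one (by linarith)]; linarith
  set φ : ℝ → ℝ := fun t => L * (sig t + 1) / 2 with hφ
  have hφmono : StrictMono φ := by
    intro t s h
    have h2 := sig_mono h
    show L * (sig t + 1) / 2 < L * (sig s + 1) / 2
    nlinarith
  have hφmem : ∀ t, φ t ∈ Ioo 0 L := by
    intro t
    obtain ⟨h1, h2⟩ := sig_mem t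
    constructor
    · show 0 < L * (sig t + 1) / 2
      nlinarith
    · show L * (sig t + 1) / 2 < L
      nlinarith
  have hφsurj : ∀ y, 0 < y → y < L → ∃ t, φ t = y := by
    intro y h1 h2
    have h3 : 2*y/L - 1 ∈ Ioo (-1:ℝ) 1 := by
      constructor
      · have : 0 < 2*y/L := by positivity
        linarith
      · have : 2*y/L < 2 := by
          rw [div_lt_iff₀ hL0]; linarith
        linarith
    obtain ⟨t, ht⟩ := sig_surj h3
    refine ⟨t, ?_⟩
    show L * (sig t + 1) / 2 = y
    rw [ht]
    field_simp
    ring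
  have hφcont : Continuous φ := by
    apply Continuous.div_const
    exact continuous_const.mul (sig_cont.add continuous_const)
  -- the bridge over the complementary interval of J₂
  set β : ℝ → ℝ := fun s => 1 - (a' - s) / (1 + (a' - s)) with hβ
  have hβmono : StrictMonoOn β (Iic a') := by
    intro s₁ h1 s₂ h2 h
    rw [mem_Iic] at h1 h2
    show 1 - (a' - s₁) / (1 + (a' - s₁)) < 1 - (a' - s₂) / (1 + (a' - s₂))
    have d1 : (0:ℝ) ≤ a' - s₁ := by linarith
    have d2 : (0:ℝ) ≤ a' - s₂ := by linarith
    have key : (a' - s₂) / (1 + (a' - s₂)) < (a' - s₁) / (1 + (a' - s₁)) := by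
      rw [div_lt_div_iff₀ (by linarith) (by linarith)]
      nlinarith
    linarith
  have hβb' : β b' = L := by
    show 1 - (a' - b') / (1 + (a' - b')) = L
    rw [hL]
    field_simp
    ring
  have hβa' : β a' = 1 := by
    show 1 - (a' - a') / (1 + (a' - a')) = 1
    simp
  have hβmem : ∀ s, b' ≤ s → s ≤ a' → β s ∈ Icc L 1 := by
    intro s h1 h2
    constructor
    · rw [← hβb']
      rcases eq_or_lt_of_le h1 with rfl | h
      · exact le_rfl
      · exact (hβmono (mem_Iic.2 hba') (mem_Iic.2 h2) h).le
    · rw [← hβa']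
      rcases eq_or_lt_of_le h2 with rfl | h
      · exact le_rfl
      · exact (hβmono (mem_Iic.2 h2) (mem_Iic.2 le_rfl) h).le
  have hβsurj : ∀ y, L ≤ y → y ≤ 1 → ∃ s, b' ≤ s ∧ s ≤ a' ∧ β s = y := by
    intro y h1 h2
    have hy0 : 0 < y := lt_of_lt_of_le hL0 h1
    refine ⟨a' - (1 - y)/y, ?_, ?_, ?_⟩
    · have hkey : (1 - y)/y ≤ a' - b' := by
        rw [div_le_iff₀ hy0]
        have h3 : 1 ≤ y * (1 + (a' - b')) := by
          rw [hL, div_le_iff₀ (by linarith)] at h1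
          linarith
        nlinarith
      linarith
    · have : 0 ≤ (1 - y)/y := div_nonneg (by linarith) hy0.le
      linarith
    · show 1 - (a' - (a' - (1 - y)/y)) / (1 + (a' - (a' - (1 - y)/y))) = y
      have hd : a' - (a' - (1 - y)/y) = (1 - y)/y := by ring
      rw [hd]
      have h3 : 1 + (1 - y)/y = 1/y := by field_simp; ring
      rw [h3]
      field_simp
      ring
  -- the glued circle coordinate on J₂
  set ψ : ℝ → ℝ := fun s => if s < b' then φ (σ' s) else if s ≤ a' then β s else 1 + φ (σ' s)
    with hψ
  have hσ'mem₁ : ∀ s, s < b' → a < σ' s := fun s h =>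
    mem_Ioi.1 (himg₁' ▸ mem_image_of_mem σ' (mem_Iio.2 h))
  have hσ'mem₂ : ∀ s, a' < s → σ' s < b := fun s h =>
    mem_Iio.1 (himg₂' ▸ mem_image_of_mem σ' (mem_Ioi.2 h))
  have hψeq1 : ∀ s, s < b' → ψ s = φ (σ' s) := by
    intro s h
    show (if s < b' then φ (σ' s) else if s ≤ a' then β s else 1 + φ (σ' s)) = _
    rw [if_pos h]
  have hψeq2 : ∀ s, b' ≤ s → s ≤ a' → ψ s = β s := by
    intro s h1 h2
    show (if s < b' then φ (σ' s) else if s ≤ a' then β s else 1 + φ (σ' s)) = _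
    rw [if_neg (not_lt.2 h1), if_pos h2]
  have hψeq3 : ∀ s, a' < s → ψ s = 1 + φ (σ' s) := by
    intro s h
    show (if s < b' then φ (σ' s) else if s ≤ a' then β s else 1 + φ (σ' s)) = _
    rw [if_neg (not_lt.2 (hba'.trans h.le)), if_neg (not_le.2 h)]
  have hψval : ∀ s, ψ s ∈ Ioo (φ a) (1 + φ b) := by
    intro s
    show (if s < b' then φ (σ' s) else if s ≤ a' then β s else 1 + φ (σ' s)) ∈ _
    split_ifs with h1 h2
    · constructor
      · exact hφmono (hσ'mem₁ s h1)
      · have := (hφmem (σ' s)).2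
        have := (hφmem b).1
        linarith
    · obtain ⟨hl, hr⟩ := hβmem s (not_lt.1 h1) h2
      constructor
      · have := (hφmem a).2
        linarith
      · have := (hφmem b).1
        linarith
    · have hlt := hσ'mem₂ s (not_le.1 h2)
      constructor
      · have := (hφmem a).2
        have := (hφmem (σ' s)).1
        linarith
      · have := hφmono hlt
        linarith
  have hψmono : StrictMono ψ := by
    intro s₁ s₂ h
    show (if s₁ < b' then φ (σ' s₁) else if s₁ ≤ a' then β s₁ else 1 + φ (σ' s₁)) <
      (if s₂ < b' then φ (σ' s₂) else if s₂ ≤ a' then β s₂ else 1 + φ (σ' s₂))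
    split_ifs with h1 h2 h3 h4 h5 h6 h7 h8
    · exact hφmono (hmono₁' (mem_Iio.2 h1) (mem_Iio.2 h2) h)
    · have := (hφmem (σ' s₁)).2
      have := (hβmem s₂ (not_lt.1 h2) h3).1
      linarith
    · have := (hφmem (σ' s₁)).2
      have := (hφmem (σ' s₂)).1
      linarith
    · exfalso; rw [not_lt] at h1; linarith
    · exact hβmono (mem_Iic.2 h4) (mem_Iic.2 h6) h
    · have := (hβmem s₁ (not_lt.1 h1) h4).2
      have := (hφmem (σ' s₂)).1
      linarith
    · exfalso; rw [not_le] at h4; rw [not_lt] at h1; linarith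
    · exfalso; rw [not_le] at h4; linarith
    · have h4' := not_le.1 h4
      exact (add_lt_add_iff_left 1).2 (hφmono (hmono₂' (mem_Ioi.2 h4') (mem_Ioi.2 (h4'.trans h)) h))
  have hψsurj : ∀ y, φ a < y → y < 1 + φ b → ∃ s, ψ s = y := by
    intro y hy1 hy2
    rcases lt_or_ge y L with h | h
    · obtain ⟨t, ht⟩ := hφsurj y (lt_trans (hφmem a).1 hy1) h
      have hta : a < t := by
        by_contra hc
        push_neg at hc
        have := hφmono.monotone hc
        linarith
      obtain ⟨s, hs, hst⟩ := himg₁' ▸ (mem_Ioi.2 hta)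
      exact ⟨s, by rw [hψeq1 s (mem_Iio.1 hs), hst, ht]⟩
    · rcases le_or_gt y 1 with h2 | h2
      · obtain ⟨s, h3, h4, h5⟩ := hβsurj y h h2
        refine ⟨s, ?_⟩
        rw [hψeq2 s h3 h4]
        exact h5
      · obtain ⟨t, ht⟩ := hφsurj (y - 1) (by linarith) (by linarith [(hφmem b).2])
        have htb : t < b := by
          by_contra hc
          push_neg at hc
          have := hφmono.monotone hc
          linarith
        obtain ⟨s, hs, hst⟩ := himg₂' ▸ (mem_Iio.2 htb)
        have hsa : a' < s := mem_Ioi.1 hs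
        refine ⟨s, ?_⟩
        rw [hψeq3 s hsa, hst, ht]
        ring
  have hψcont : Continuous ψ := by
    haveI : OrdConnected (Ioo (φ a) (1 + φ b)) := ordConnected_Ioo
    set Ψ : ℝ → (Ioo (φ a) (1 + φ b)) := fun s => ⟨ψ s, hψval s⟩ with hΨ
    have hΨmono : StrictMono Ψ := fun u v h => by
      rw [hΨ]; exact Subtype.mk_lt_mk.2 (hψmono h)
    have hΨsurj : Function.Surjective Ψ := by
      rintro ⟨y, hy⟩
      obtain ⟨s, hs⟩ := hψsurj y hy.1 hy.2
      exact ⟨s, Subtype.ext hs⟩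
    have hΨcont : Continuous Ψ := by
      rw [show Ψ = ⇑(StrictMono.orderIsoOfSurjective _ hΨmono hΨsurj) from
        (StrictMono.coe_orderIsoOfSurjective _ hΨmono hΨsurj).symm]
      exact (StrictMono.orderIsoOfSurjective _ hΨmono hΨsurj).toHomeomorph.continuous
    have : ψ = fun s => ((Ψ s : ℝ)) := rfl
    rw [this]
    exact continuous_subtype_val.comp hΨcont
  -- the map to the circle
  set ι : ℝ → AddCircle (1:ℝ) := fun r => (r : AddCircle (1:ℝ)) with hι
  have hιcont : Continuous ι := AddCircle.continuous_mk' 1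
  set F : X → AddCircle (1:ℝ) :=
    fun x => if x ∈ range f₁ then ι (φ (invFun f₁ x)) else ι (ψ (invFun f₂ x)) with hF
  have hF₁ : ∀ t, F (f₁ t) = ι (φ t) := by
    intro t
    show (if f₁ t ∈ range f₁ then ι (φ (invFun f₁ (f₁ t))) else _) = ι (φ t)
    rw [if_pos (mem_range_self t), leftInverse_invFun hf₁.injective t]
  have hF₂ : ∀ s, F (f₂ s) = ι (ψ s) := by
    intro s
    by_cases hmem : f₂ s ∈ range f₁
    · have hsT : s ∈ ov f₂ f₁ := hmem
      rw [hT] at hsT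
      show (if f₂ s ∈ range f₁ then ι (φ (invFun f₁ (f₂ s)))
        else ι (ψ (invFun f₂ (f₂ s)))) = ι (ψ s)
      rw [if_pos hmem]
      have hfs : invFun f₁ (f₂ s) = σ' s := rfl
      rw [hfs]
      rcases hsT with h2 | h2
      · rw [hψeq1 s (mem_Iio.1 h2)]
      · rw [hψeq3 s (mem_Ioi.1 h2)]
        show (↑(φ (σ' s)) : AddCircle (1:ℝ)) = ↑(1 + φ (σ' s))
        rw [add_comm]
        exact (AddCircle.coe_add_period 1 (φ (σ' s))).symm
    · show (if f₂ s ∈ range f₁ then _ else ι (ψ (invFun f₂ (f₂ s)))) = ι (ψ s)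
      rw [if_neg hmem, leftInverse_invFun hf₂.injective s]
  have hFβ : ∀ s, b' ≤ s → s ≤ a' → F (f₂ s) = ι (β s) := by
    intro s h1 h2
    rw [hF₂ s, hψeq2 s h1 h2]
  have hcases : ∀ x : X, (∃ t, f₁ t = x) ∨ (∃ s, b' ≤ s ∧ s ≤ a' ∧ f₂ s = x ∧ x ∉ range f₁) := by
    intro x
    by_cases h : x ∈ range f₁
    · exact Or.inl h
    · have hx : x ∈ range f₁ ∪ range f₂ := huniv ▸ mem_univ x
      rcases hx with h2 | h2
      · exact absurd h2 h
      · obtain ⟨s, rfl⟩ := h2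
        have hsT : s ∉ ov f₂ f₁ := h
        rw [hT] at hsT
        simp only [mem_union, mem_Iio, mem_Ioi, not_or, not_lt] at hsT
        exact Or.inr ⟨s, hsT.1, hsT.2, rfl, h⟩
  have hmemφ : ∀ t, φ t ∈ Ioc (0:ℝ) 1 := fun t =>
    ⟨(hφmem t).1, ((hφmem t).2.le.trans hL1)⟩
  have hmemβ' : ∀ s, b' ≤ s → s ≤ a' → β s ∈ Ioc (0:ℝ) 1 := fun s h1 h2 =>
    ⟨lt_of_lt_of_le hL0 (hβmem s h1 h2).1, (hβmem s h1 h2).2⟩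
  have hFinj : Function.Injective F := by
    intro x y hxy
    rcases hcases x with ⟨t₁, rfl⟩ | ⟨s₁, hs₁b, hs₁a, rfl, -⟩ <;>
      rcases hcases y with ⟨t₂, rfl⟩ | ⟨s₂, hs₂b, hs₂a, rfl, -⟩
    · rw [hF₁, hF₁] at hxy
      rw [hφmono.injective (coe_injOn_Ioc' _ _ (hmemφ t₁) (hmemφ t₂) hxy)]
    · rw [hF₁, hFβ s₂ hs₂b hs₂a] at hxy
      have heq := coe_injOn_Ioc' _ _ (hmemφ t₁) (hmemβ' s₂ hs₂b hs₂a) hxy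
      exfalso
      have h2 := (hφmem t₁).2
      have h3 := (hβmem s₂ hs₂b hs₂a).1
      linarith
    · rw [hF₁, hFβ s₁ hs₁b hs₁a] at hxy
      have heq := coe_injOn_Ioc' _ _ (hmemβ' s₁ hs₁b hs₁a) (hmemφ t₂) hxy
      exfalso
      have h2 := (hφmem t₂).2
      have h3 := (hβmem s₁ hs₁b hs₁a).1
      linarith
    · rw [hFβ s₁ hs₁b hs₁a, hFβ s₂ hs₂b hs₂a] at hxy
      have heq := coe_injOn_Ioc' _ _ (hmemβ' s₁ hs₁b hs₁a) (hmemβ' s₂ hs₂b hs₂a) hxy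
      rw [hβmono.injOn (mem_Iic.2 hs₁a) (mem_Iic.2 hs₂a) heq]
  have hFsurj : Function.Surjective F := by
    intro z
    obtain ⟨u, hu, hzu⟩ := exists_rep_Ioc z
    rcases lt_or_ge u L with h | h
    · obtain ⟨t, ht⟩ := hφsurj u hu.1 h
      exact ⟨f₁ t, by rw [hF₁, ht]; exact hzu⟩
    · obtain ⟨s, h1, h2, h3⟩ := hβsurj u h hu.2
      exact ⟨f₂ s, by rw [hFβ s h1 h2, h3]; exact hzu⟩
  have hFcont : Continuous F := by
    rw [continuous_iff_continuousAt]
    intro x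
    have hx : x ∈ range f₁ ∪ range f₂ := huniv ▸ mem_univ x
    rcases hx with h | h
    · have hco : ContinuousOn F (range f₁) := by
        apply ContinuousOn.congr
          ((hιcont.comp hφcont).comp_continuousOn (invFun_continuousOn hf₁))
        rintro _ ⟨t, rfl⟩
        rw [hF₁]
        simp only [Function.comp_apply]
        rw [leftInverse_invFun hf₁.injective t]
      exact hco.continuousAt (hf₁.isOpen_range.mem_nhds h)
    · have hco : ContinuousOn F (range f₂) := by
        apply ContinuousOn.congr
          ((hιcont.comp hψcont).comp_continuousOn (invFun_continuousOn hf₂))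
        rintro _ ⟨s, rfl⟩
        rw [hF₂]
        simp only [Function.comp_apply]
        rw [leftInverse_invFun hf₂.injective s]
      exact hco.continuousAt (hf₂.isOpen_range.mem_nhds h)
  exact ⟨Continuous.homeoOfEquivCompactToT2 (f := Equiv.ofBijective F ⟨hFinj, hFsurj⟩) hFcont⟩

theorem neg_preimage_Ioi (c : ℝ) : (fun u : ℝ => -u) ⁻¹' (Ioi c) = Iio (-c) := by
  ext u; simp only [mem_preimage, mem_Ioi, mem_Iio]
  constructor <;> intro <;> linarith

theorem neg_preimage_Iio (c : ℝ) : (fun u : ℝ => -u) ⁻¹' (Iio c) = Ioi (-c) := by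
  ext u; simp only [mem_preimage, mem_Ioi, mem_Iio]
  constructor <;> intro <;> linarith

theorem not_preconn {b' a' : ℝ} (h : b' ≤ a') :
    ¬ IsPreconnected (Iio b' ∪ Ioi a' : Set ℝ) := by
  intro h2
  have hb : b' - 1 ∈ Iio b' ∪ Ioi a' := Or.inl (mem_Iio.2 (by linarith))
  have ha : a' + 1 ∈ Iio b' ∪ Ioi a' := Or.inr (mem_Ioi.2 (by linarith))
  have := h2.ordConnected.out hb ha (show b' ∈ Icc (b'-1) (a'+1) from ⟨by linarith, by linarith⟩)
  rcases this with h3 | h3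
  · exact lt_irrefl b' (mem_Iio.1 h3)
  · have := mem_Ioi.1 h3; linarith


end Stmt2Aux

open Stmt2Aux Set Function in

/-- In a continuum not homeomorphic to the circle, two maximal free
intervals are either disjoint or equal. -/
theorem stmt2 {X : Type*} [TopologicalSpace X] [CompactSpace X] [ConnectedSpace X]
    [TopologicalSpace.MetrizableSpace X] (hX : IsEmpty (X ≃ₜ AddCircle (1 : ℝ)))
    (J₁ J₂ : Set X)
    (h₁ : IsFreeInterval J₁) (h₁max : ∀ J' : Set X, IsFreeInterval J' → J₁ ⊆ J' → J₁ = J')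
    (h₂ : IsFreeInterval J₂) (h₂max : ∀ J' : Set X, IsFreeInterval J' → J₂ ⊆ J' → J₂ = J') :
    J₁ ∩ J₂ = ∅ ∨ J₁ = J₂ := by
  classical
  rcases eq_empty_or_nonempty (J₁ ∩ J₂) with hemp | hne
  · exact Or.inl hemp
  right
  by_cases h12 : J₁ ⊆ J₂
  · exact h₁max J₂ h₂ h12
  by_cases h21 : J₂ ⊆ J₁
  · exact (h₂max J₁ h₁ h21).symm
  obtain ⟨hJ₁o, ⟨e₁⟩⟩ := h₁
  obtain ⟨hJ₂o, ⟨e₂⟩⟩ := h₂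
  set f₁ : ℝ → X := fun t => (e₁.symm t : X) with hf₁def
  set f₂ : ℝ → X := fun t => (e₂.symm t : X) with hf₂def
  have hf₁ : IsOpenEmbedding f₁ :=
    hJ₁o.isOpenEmbedding_subtypeVal.comp e₁.symm.isOpenEmbedding
  have hf₂ : IsOpenEmbedding f₂ :=
    hJ₂o.isOpenEmbedding_subtypeVal.comp e₂.symm.isOpenEmbedding
  have hr₁ : range f₁ = J₁ := by
    apply Subset.antisymm
    · rintro _ ⟨t, rfl⟩; exact (e₁.symm t).2
    · intro x hx
      exact ⟨e₁ ⟨x, hx⟩, by rw [hf₁def]; simp⟩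
  have hr₂ : range f₂ = J₂ := by
    apply Subset.antisymm
    · rintro _ ⟨t, rfl⟩; exact (e₂.symm t).2
    · intro x hx
      exact ⟨e₂ ⟨x, hx⟩, by rw [hf₂def]; simp⟩
  have hS0 : (ov f₁ f₂).Nonempty := by
    obtain ⟨x, hx₁, hx₂⟩ := hne
    rw [← hr₁] at hx₁
    obtain ⟨t, rfl⟩ := hx₁
    exact ⟨t, show f₁ t ∈ range f₂ from hr₂ ▸ hx₂⟩
  have hSne : ov f₁ f₂ ≠ univ := by
    intro h
    apply h12
    intro x hx
    rw [← hr₁] at hx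
    obtain ⟨t, rfl⟩ := hx
    have ht : t ∈ ov f₁ f₂ := h ▸ mem_univ t
    exact hr₂ ▸ (ht : f₁ t ∈ range f₂)
  have hTne : ov f₂ f₁ ≠ univ := by
    intro h
    apply h21
    intro x hx
    rw [← hr₂] at hx
    obtain ⟨s, rfl⟩ := hx
    have hs : s ∈ ov f₂ f₁ := h ▸ mem_univ s
    exact hr₁ ▸ (hs : f₂ s ∈ range f₁)
  have hT0 : (ov f₂ f₁).Nonempty := by
    obtain ⟨t, ht⟩ := hS0
    exact ⟨tr f₁ f₂ t, tr_mem hf₂ ht⟩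
  have hfinish : Nonempty (↥(range f₁ ∪ range f₂) ≃ₜ ℝ) → J₁ = J₂ := by
    rintro ⟨e⟩
    have hset : J₁ ∪ J₂ = range f₁ ∪ range f₂ := by rw [hr₁, hr₂]
    have hfree : IsFreeInterval (J₁ ∪ J₂) :=
      ⟨hJ₁o.union hJ₂o, ⟨(Homeomorph.setCongr hset).trans e⟩⟩
    exact (h₁max _ hfree subset_union_left).trans (h₂max _ hfree subset_union_right).symm
  have hcirc : Nonempty (X ≃ₜ AddCircle (1:ℝ)) → J₁ = J₂ := by
    rintro ⟨e⟩
    exact (hX.false e).elim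
  rcases struct hf₁ hf₂ hS0 hSne hTne with ⟨aa, hSs⟩ | ⟨bb, hSs⟩ | ⟨bb, aa, hbale, hSs⟩ <;>
    rcases struct hf₂ hf₁ hT0 hTne hSne with ⟨aa', hTs⟩ | ⟨bb', hTs⟩ | ⟨bb', aa', hbale', hTs⟩
  · -- S = Ioi aa, T = Ioi aa' : flip f₂
    apply hfinish
    have hT' : ov (fun u : ℝ => f₂ (-u)) f₁ = Iio (-aa') := by
      rw [ov_neg_left, hTs, neg_preimage_Ioi]
    have hS' : ov f₁ (fun u : ℝ => f₂ (-u)) = Ioi aa := by rw [ov_neg_right, hSs]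
    have := lemA hf₁ (neg_isOpenEmbedding hf₂) hS' hT'
    rwa [range_neg_comp] at this
  · -- S = Ioi aa, T = Iio bb'
    exact hfinish (lemA hf₁ hf₂ hSs hTs)
  · -- S = Ioi aa, T double : contradiction
    exact absurd (by
      rw [← hTs, ← tr_image hf₁ hf₂, hSs]
      exact isPreconnected_Ioi.image _ (hSs ▸ tr_continuousOn hf₁ hf₂))
      (not_preconn hbale')
  · -- S = Iio bb, T = Ioi aa' : flip both
    apply hfinish
    have hT' : ov (fun u : ℝ => f₂ (-u)) (fun u : ℝ => f₁ (-u)) = Iio (-aa') := by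
      rw [show ov (fun u : ℝ => f₂ (-u)) (fun u : ℝ => f₁ (-u))
          = ov (fun u : ℝ => f₂ (-u)) f₁ from ov_neg_right, ov_neg_left, hTs, neg_preimage_Ioi]
    have hS' : ov (fun u : ℝ => f₁ (-u)) (fun u : ℝ => f₂ (-u)) = Ioi (-bb) := by
      rw [show ov (fun u : ℝ => f₁ (-u)) (fun u : ℝ => f₂ (-u))
          = ov (fun u : ℝ => f₁ (-u)) f₂ from ov_neg_right, ov_neg_left, hSs, neg_preimage_Iio]
    have := lemA (neg_isOpenEmbedding hf₁) (neg_isOpenEmbedding hf₂) hS' hT'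
    rwa [range_neg_comp, range_neg_comp] at this
  · -- S = Iio bb, T = Iio bb' : flip f₁
    apply hfinish
    have hS' : ov (fun u : ℝ => f₁ (-u)) f₂ = Ioi (-bb) := by
      rw [ov_neg_left, hSs, neg_preimage_Iio]
    have hT' : ov f₂ (fun u : ℝ => f₁ (-u)) = Iio bb' := by rw [ov_neg_right, hTs]
    have := lemA (neg_isOpenEmbedding hf₁) hf₂ hS' hT'
    rwa [range_neg_comp] at this
  · -- S = Iio bb, T double : contradiction
    exact absurd (by
      rw [← hTs, ← tr_image hf₁ hf₂, hSs]
      exact isPreconnected_Iio.image _ (hSs ▸ tr_continuousOn hf₁ hf₂))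
      (not_preconn hbale')
  · -- S double, T = Ioi : contradiction (mirror)
    exact absurd (by
      rw [← hSs, ← tr_image hf₂ hf₁, hTs]
      exact isPreconnected_Ioi.image _ (hTs ▸ tr_continuousOn hf₂ hf₁))
      (not_preconn hbale)
  · -- S double, T = Iio : contradiction (mirror)
    exact absurd (by
      rw [← hSs, ← tr_image hf₂ hf₁, hTs]
      exact isPreconnected_Iio.image _ (hTs ▸ tr_continuousOn hf₂ hf₁))
      (not_preconn hbale)
  · -- S double, T double : the circle case
    have hIoiaS : Ioi aa ⊆ ov f₁ f₂ := by rw [hSs]; exact subset_union_right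
    have htrans : ∀ M : Set ℝ, tr f₁ f₂ '' (Ioi aa) ⊆ M → f₁ '' (Ioi aa) ⊆ f₂ '' M := by
      rintro M hM _ ⟨t, ht, rfl⟩
      exact ⟨tr f₁ f₂ t, hM (mem_image_of_mem _ ht), tr_spec hf₂ (hIoiaS ht)⟩
    rcases split_sub hf₁ hf₂ hTs hbale' hIoiaS isPreconnected_Ioi with h | h
    · exact hcirc (lemB hf₁ hf₂ hSs hbale hTs hbale' (htrans _ h))
    · have hf₂' : IsOpenEmbedding (fun u : ℝ => f₂ (-u)) := neg_isOpenEmbedding hf₂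
      have hT' : ov (fun u : ℝ => f₂ (-u)) f₁ = Iio (-aa') ∪ Ioi (-bb') := by
        rw [ov_neg_left, hTs, preimage_union, neg_preimage_Iio, neg_preimage_Ioi, union_comm]
      have hS' : ov f₁ (fun u : ℝ => f₂ (-u)) = Iio bb ∪ Ioi aa := by
        rw [ov_neg_right, hSs]
      have hsub' : f₁ '' (Ioi aa) ⊆ (fun u : ℝ => f₂ (-u)) '' (Iio (-aa')) := by
        have himgeq : (fun u : ℝ => f₂ (-u)) '' (Iio (-aa')) = f₂ '' (Ioi aa') := by
          ext x
          constructor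
          · rintro ⟨u, hu, rfl⟩
            exact ⟨-u, mem_Ioi.2 (by have := mem_Iio.1 hu; linarith), rfl⟩
          · rintro ⟨v, hv, rfl⟩
            exact ⟨-v, mem_Iio.2 (by have := mem_Ioi.1 hv; linarith), by simp⟩
        rw [himgeq]
        exact htrans _ h
      exact hcirc (lemB hf₁ hf₂' hS' hbale hT' (by linarith) hsub')
end

section
/- Let X be a compact metrizable space and f : X → X a continuous map. Suppose there exist nonempty closed pairwise disjoint subsets A₁, …, A_m of X, a positive integer k, and for each i ∈ {1, …, m} a positive integer p_i such that the number of indices j ∈ {1, …, m} with f^{p_i}(A_i) ⊇ A_j is at least k. Then, with p = max{p₁, …, p_m}, the topological entropy of f satisfies h(f) ≥ (1/p)·log k. -/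
open Filter

variable {X : Type*} [MetricSpace X]

/-- A set `E` is `(n, ε)`-separated for `f` if any two distinct points of `E` are moved
at least `ε` apart by some iterate `f^i`, `0 ≤ i < n`. -/
def IsDynSeparated (f : X → X) (n : ℕ) (ε : ℝ) (E : Set X) : Prop :=
  ∀ x ∈ E, ∀ y ∈ E, x ≠ y → ∃ i < n, ε < dist (f^[i] x) (f^[i] y)

/-- The maximal cardinality of a finite `(n, ε)`-separated set for `f`. -/
noncomputable def maxSepCard (f : X → X) (n : ℕ) (ε : ℝ) : ℕ :=
  sSup {k : ℕ | ∃ E : Finset X, IsDynSeparated f n ε ↑E ∧ E.card = k}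

/-- Bowen's topological entropy via `(n, ε)`-separated sets:
`h(f) = sup_{ε > 0} limsup_{n → ∞} (1/n) log (maximal cardinality of an
`(n, ε)`-separated set)`. -/
noncomputable def bowenEntropy (f : X → X) : EReal :=
  ⨆ (ε : ℝ) (_ : 0 < ε),
    Filter.limsup (fun n : ℕ => ((Real.log (maxSepCard f n ε) / n : ℝ) : EReal)) atTop

/-- Monotonicity of separation in `n`. -/
lemma isDynSeparated_mono (f : X → X) {n n' : ℕ} (h : n ≤ n') {ε : ℝ} {E : Set X}
    (hE : IsDynSeparated f n ε E) : IsDynSeparated f n' ε E := by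
  intro x hx y hy hxy
  obtain ⟨i, hi, hd⟩ := hE x hx y hy hxy
  exact ⟨i, lt_of_lt_of_le hi h, hd⟩

/-- In a compact space, the cardinalities of `(n, ε)`-separated sets are uniformly bounded. -/
lemma sep_card_bdd [CompactSpace X] (f : X → X) (n : ℕ) {ε : ℝ} (hε : 0 < ε) :
    ∃ B : ℕ, ∀ E : Finset X, IsDynSeparated f n ε ↑E → E.card ≤ B := by
  classical
  obtain ⟨t, ht⟩ := (isCompact_univ (X := X)).elim_finite_subcover
    (fun x : X => Metric.ball x (ε / 2)) (fun _ => Metric.isOpen_ball)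
    (fun x _ => Set.mem_iUnion.2 ⟨x, Metric.mem_ball_self (by linarith)⟩)
  have hctr : ∀ z : X, ∃ c ∈ t, dist z c < ε / 2 := by
    intro z
    have hz := ht (Set.mem_univ z)
    simp only [Set.mem_iUnion, Metric.mem_ball] at hz
    obtain ⟨c, hc, hd⟩ := hz
    exact ⟨c, hc, hd⟩
  choose ctr hctr₁ hctr₂ using hctr
  refine ⟨t.card ^ n, fun E hE => ?_⟩
  have : E.card ≤ (Finset.univ : Finset (Fin n → {c // c ∈ t})).card := by
    apply Finset.card_le_card_of_injOn
      (fun x i => (⟨ctr (f^[i.1] x), hctr₁ _⟩ : {c // c ∈ t}))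
      (fun _ _ => Finset.mem_univ _)
    intro x hx y hy hxy
    by_contra hne
    obtain ⟨i, hi, hd⟩ := hE x hx y hy hne
    have := congrFun hxy ⟨i, hi⟩
    have hc : ctr (f^[i] x) = ctr (f^[i] y) := by simpa using this
    have h1 := hctr₂ (f^[i] x)
    have h2 := hctr₂ (f^[i] y)
    rw [hc] at h1
    have := dist_triangle_right (f^[i] x) (f^[i] y) (ctr (f^[i] y))
    linarith
  simpa using this

/-- Lower bound for `maxSepCard` from an explicit separated set. -/
lemma le_maxSepCard [CompactSpace X] (f : X → X) (n : ℕ) {ε : ℝ} (hε : 0 < ε)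
    (E : Finset X) (hE : IsDynSeparated f n ε ↑E) : E.card ≤ maxSepCard f n ε := by
  obtain ⟨B, hB⟩ := sep_card_bdd f n hε
  exact le_csSup ⟨B, fun b ⟨E', hE', hcard⟩ => hcard ▸ hB E' hE'⟩ ⟨E, hE, rfl⟩

/-- Disjoint closed sets in a compact space are uniformly separated. -/
lemma exists_sep_const [CompactSpace X] {m : ℕ} (hm : 0 < m) (A : Fin m → Set X)
    (hcl : ∀ i, IsClosed (A i)) (hdisj : ∀ i j, i ≠ j → Disjoint (A i) (A j)) :
    ∃ ε > 0, ∀ i j, i ≠ j → ∀ x ∈ A i, ∀ y ∈ A j, ε < dist x y := by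
  classical
  have key : ∀ q : Fin m × Fin m, ∃ r : ℝ, 0 < r ∧
      (q.1 ≠ q.2 → ∀ x ∈ A q.1, ∀ y ∈ A q.2, r ≤ dist x y) := by
    rintro ⟨i, j⟩
    by_cases h : i = j
    · exact ⟨1, one_pos, fun hc => absurd h hc⟩
    · obtain ⟨r, hr, hlt⟩ := EMetric.exists_pos_forall_lt_edist ((hcl i).isCompact) (hcl j)
        (hdisj i j h)
      refine ⟨r, hr, fun _ x hx y hy => le_of_lt ?_⟩
      have := hlt x hx y hy
      rw [edist_dist, ← ENNReal.ofReal_coe_nnreal,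
        ENNReal.ofReal_lt_ofReal_iff_of_nonneg (by positivity)] at this
      exact this
  choose r hr hsep using key
  have hne : (Finset.univ : Finset (Fin m × Fin m)).Nonempty := by
    haveI : NeZero m := ⟨hm.ne'⟩
    exact ⟨(⟨0, hm⟩, ⟨0, hm⟩), Finset.mem_univ _⟩
  refine ⟨(Finset.univ.inf' hne r) / 2, ?_, ?_⟩
  · have : (0 : ℝ) < Finset.univ.inf' hne r := by
      rw [Finset.lt_inf'_iff]
      exact fun q _ => hr q
    linarith
  · intro i j hij x hx y hy
    have h1 : Finset.univ.inf' hne r ≤ r (i, j) := Finset.inf'_le _ (Finset.mem_univ _)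
    have h2 : r (i, j) ≤ dist x y := hsep (i, j) hij x hx y hy
    have h3 : (0 : ℝ) < r (i, j) := hr _
    linarith

/-- Itinerary lemma: a point shadowing a sequence of sets connected by iterates. -/
lemma itin_exists (f : X → X) {m : ℕ} (A : Fin m → Set X) (hne : ∀ i, (A i).Nonempty)
    (p : Fin m → ℕ) (idx : ℕ → Fin m)
    (hstep : ∀ s, A (idx (s + 1)) ⊆ f^[p (idx s)] '' A (idx s)) (L : ℕ) :
    ∃ x, ∀ s ≤ L, f^[∑ t ∈ Finset.range s, p (idx t)] x ∈ A (idx s) := by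
  induction L generalizing idx with
  | zero =>
    obtain ⟨x, hx⟩ := hne (idx 0)
    refine ⟨x, fun s hs => ?_⟩
    interval_cases s
    simpa using hx
  | succ L IH =>
    obtain ⟨x', hx'⟩ := IH (fun s => idx (s + 1)) (fun s => hstep (s + 1))
    have h0 : x' ∈ A (idx 1) := by simpa using hx' 0 (Nat.zero_le _)
    obtain ⟨x, hx, hfx⟩ := hstep 0 h0
    refine ⟨x, fun s hs => ?_⟩
    match s with
    | 0 => simpa using hx
    | Nat.succ s =>
      have hsum : ∑ t ∈ Finset.range (s + 1), p (idx t)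
          = (∑ t ∈ Finset.range s, p (idx (t + 1))) + p (idx 0) := by
        rw [Finset.sum_range_succ']
      rw [hsum, Function.iterate_add_apply, hfx]
      exact hx' s (Nat.succ_le_succ_iff.mp hs)

/-- horseshoe lemma: if `A₁, …, A_m` are nonempty closed pairwise disjoint
sets such that each `f^{pᵢ}(Aᵢ)` contains at least `k` of the sets `Aⱼ`, then
`h(f) ≥ (1/p) log k` where `p = max pᵢ`. -/
theorem stmt5 [CompactSpace X] (f : X → X) (hf : Continuous f)
    (m k : ℕ) (hm : 0 < m) (hk : 0 < k)
    (A : Fin m → Set X) (hne : ∀ i, (A i).Nonempty) (hcl : ∀ i, IsClosed (A i))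
    (hdisj : ∀ i j, i ≠ j → Disjoint (A i) (A j))
    (p : Fin m → ℕ) (hp : ∀ i, 0 < p i)
    (hhorse : ∀ i, k ≤ Nat.card {j : Fin m // A j ⊆ f^[p i] '' (A i)}) :
    ((Real.log k / (Finset.univ.sup p : ℕ) : ℝ) : EReal) ≤ bowenEntropy f := by
  classical
  set P : ℕ := Finset.univ.sup p with hPdef
  have hP : 0 < P := lt_of_lt_of_le (hp ⟨0, hm⟩) (Finset.le_sup (Finset.mem_univ _))
  have hPR : (0 : ℝ) < (P : ℝ) := by exact_mod_cast hP
  -- choose the transition maps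
  have hemb : ∀ i, ∃ c : Fin k → Fin m, Function.Injective c ∧
      ∀ a, A (c a) ⊆ f^[p i] '' A i := by
    intro i
    haveI : Fintype {j : Fin m // A j ⊆ f^[p i] '' (A i)} := Fintype.ofFinite _
    have hcard : Fintype.card (Fin k) ≤ Fintype.card {j : Fin m // A j ⊆ f^[p i] '' (A i)} := by
      rw [Fintype.card_fin]
      calc k ≤ Nat.card {j : Fin m // A j ⊆ f^[p i] '' (A i)} := hhorse i
        _ = _ := Nat.card_eq_fintype_card
    obtain ⟨e⟩ := Function.Embedding.nonempty_of_card_le hcard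
    exact ⟨fun a => (e a).1, fun a b hab => e.injective (Subtype.ext hab),
      fun a => (e a).2⟩
  choose c hcinj hcsub using hemb
  -- separation constant
  obtain ⟨ε, hε, hεsep⟩ := exists_sep_const hm A hcl hdisj
  haveI : NeZero k := ⟨hk.ne'⟩
  -- key counting estimate
  have key : ∀ L n : ℕ, L * P + 1 ≤ n → k ^ L ≤ maxSepCard f n ε := by
    intro L n hn
    let i0 : Fin m := ⟨0, hm⟩
    let ext : (Fin L → Fin k) → ℕ → Fin k := fun w s =>
      if h : s < L then w ⟨s, h⟩ else ⟨0, hk⟩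
    let idx : (Fin L → Fin k) → ℕ → Fin m := fun w =>
      Nat.rec i0 (fun s i => c i (ext w s))
    have hidx_succ : ∀ w s, idx w (s + 1) = c (idx w s) (ext w s) := fun _ _ => rfl
    have hxw : ∀ w : Fin L → Fin k,
        ∃ x, ∀ s ≤ L, f^[∑ t ∈ Finset.range s, p (idx w t)] x ∈ A (idx w s) :=
      fun w => itin_exists f A hne p (idx w) (fun s => hcsub _ _) L
    choose xw hxw using hxw
    have main : ∀ w w' : Fin L → Fin k, w ≠ w' →
        ∃ i < n, ε < dist (f^[i] (xw w)) (f^[i] (xw w')) := by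
      intro w w' hww
      have hex : ∃ s : ℕ, ext w s ≠ ext w' s := by
        obtain ⟨t, ht⟩ := Function.ne_iff.mp hww
        refine ⟨t.1, ?_⟩
        simpa [ext, t.isLt, Fin.eta] using ht
      let s0 := Nat.find hex
      have hs0 : ext w s0 ≠ ext w' s0 := Nat.find_spec hex
      have hs0L : s0 < L := by
        by_contra h
        push_neg at h
        exact hs0 (by simp [ext, not_lt.mpr h])
      have hagree : ∀ t, t ≤ s0 → idx w t = idx w' t := by
        intro t ht
        induction t with
        | zero => rfl
        | succ t iht =>
          have h1 : idx w t = idx w' t := iht (le_trans (Nat.le_succ t) ht)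
          have h2 : ext w t = ext w' t := by
            by_contra hne2
            exact absurd (Nat.find_min hex (lt_of_lt_of_le (Nat.lt_succ_self t) ht)) (by simpa using hne2)
          rw [hidx_succ, hidx_succ, h1, h2]
      have hdiff : idx w (s0 + 1) ≠ idx w' (s0 + 1) := by
        rw [hidx_succ, hidx_succ, hagree s0 le_rfl]
        exact fun hc => hs0 (hcinj _ hc)
      set T := ∑ t ∈ Finset.range (s0 + 1), p (idx w t) with hTdef
      have hT' : ∑ t ∈ Finset.range (s0 + 1), p (idx w' t) = T := by
        refine Finset.sum_congr rfl fun t ht => ?_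
        rw [hagree t (Nat.lt_succ_iff.mp (Finset.mem_range.mp ht))]
      have hTle : T < n := by
        have h1 : T ≤ ∑ _t ∈ Finset.range (s0 + 1), P :=
          Finset.sum_le_sum fun t _ => Finset.le_sup (Finset.mem_univ _)
        have h2 : ∑ _t ∈ Finset.range (s0 + 1), P = (s0 + 1) * P := by
          rw [Finset.sum_const, Finset.card_range, smul_eq_mul]
        have h3 : (s0 + 1) * P ≤ L * P := Nat.mul_le_mul_right _ hs0L
        omega
      refine ⟨T, hTle, ?_⟩
      have m1 : f^[T] (xw w) ∈ A (idx w (s0 + 1)) := hxw w (s0 + 1) hs0L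
      have m2 : f^[T] (xw w') ∈ A (idx w' (s0 + 1)) := by
        have := hxw w' (s0 + 1) hs0L
        rwa [hT'] at this
      exact hεsep _ _ hdiff _ m1 _ m2
    have hinj : Function.Injective xw := by
      intro w w' h
      by_contra hne'
      obtain ⟨i, _, hd⟩ := main w w' hne'
      rw [h] at hd
      simp at hd
      linarith
    let E : Finset X := Finset.univ.image xw
    have hcard : E.card = k ^ L := by
      rw [Finset.card_image_of_injective _ hinj, Finset.card_univ]
      simp
    have hsep : IsDynSeparated f n ε ↑E := by
      intro x hx y hy hxy
      simp only [E, Finset.coe_image, Set.mem_image, Finset.coe_univ, Set.mem_univ] at hx hy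
      obtain ⟨w, -, rfl⟩ := hx
      obtain ⟨w', -, rfl⟩ := hy
      exact main w w' fun h => hxy (by rw [h])
    calc k ^ L = E.card := hcard.symm
      _ ≤ maxSepCard f n ε := le_maxSepCard f n hε E hsep
  -- analysis part
  have hlogk : 0 ≤ Real.log k := Real.log_nonneg (by exact_mod_cast hk)
  set g : ℕ → ℝ := fun nn => (1 / (P : ℝ) - 1 / (nn : ℝ)) * Real.log k with hgdef
  have hg : Tendsto g atTop (nhds (Real.log k / (P : ℝ))) := by
    have h1 : Tendsto (fun nn : ℕ => (1 / (P : ℝ) - 1 / (nn : ℝ))) atTop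
        (nhds (1 / (P : ℝ) - 0)) :=
      tendsto_const_nhds.sub tendsto_one_div_atTop_nhds_zero_nat
    have h2 := h1.mul_const (Real.log k)
    convert h2 using 2
    ring
  have hbound : ∀ᶠ nn : ℕ in atTop,
      ((g nn : ℝ) : EReal) ≤ ((Real.log (maxSepCard f nn ε) / nn : ℝ) : EReal) := by
    filter_upwards [eventually_ge_atTop 1] with nn hnn
    rw [EReal.coe_le_coe_iff]
    have hnnR : (0 : ℝ) < (nn : ℝ) := by exact_mod_cast hnn
    set L : ℕ := (nn - 1) / P with hLdef
    have hLP : L * P + 1 ≤ nn := by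
      have h1 : L * P ≤ nn - 1 := by rw [hLdef]; exact Nat.div_mul_le_self _ _
      omega
    have hsep : (k : ℝ) ^ L ≤ (maxSepCard f nn ε : ℝ) := by
      have := key L nn hLP
      exact_mod_cast this
    have hkL : (0 : ℝ) < (k : ℝ) ^ L := by positivity
    have hlog : (L : ℝ) * Real.log k ≤ Real.log (maxSepCard f nn ε) := by
      calc (L : ℝ) * Real.log k = Real.log ((k : ℝ) ^ L) := (Real.log_pow (k : ℝ) L).symm
        _ ≤ _ := Real.log_le_log hkL hsep
    -- (nn/P - 1) ≤ L
    have hnuL : (nn : ℝ) ≤ ((L : ℝ) + 1) * P := by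
      have h1 : P * L + (nn - 1) % P = nn - 1 := by rw [hLdef]; exact Nat.div_add_mod _ _
      have h2 : (nn - 1) % P < P := Nat.mod_lt _ hP
      have h3 : nn ≤ P * L + P := by omega
      calc (nn : ℝ) ≤ (P : ℝ) * L + P := by exact_mod_cast h3
        _ = ((L : ℝ) + 1) * P := by ring
    have hLlb : (nn : ℝ) / P - 1 ≤ (L : ℝ) := by
      rw [sub_le_iff_le_add, div_le_iff₀ hPR]
      linarith [hnuL]
    have hmain : ((nn : ℝ) / P - 1) * Real.log k ≤ Real.log (maxSepCard f nn ε) :=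
      le_trans (mul_le_mul_of_nonneg_right hLlb hlogk) hlog
    have heq : g nn = (((nn : ℝ) / P - 1) * Real.log k) / nn := by
      rw [hgdef]
      field_simp
    rw [heq]
    gcongr
  have hglim : Tendsto (fun nn : ℕ => ((g nn : ℝ) : EReal)) atTop
      (nhds ((Real.log k / (P : ℝ) : ℝ) : EReal)) :=
    (continuous_coe_real_ereal.tendsto _).comp hg
  have hlimsup : ((Real.log k / (P : ℝ) : ℝ) : EReal) ≤
      Filter.limsup (fun nn : ℕ => ((Real.log (maxSepCard f nn ε) / nn : ℝ) : EReal)) atTop := by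
    calc ((Real.log k / (P : ℝ) : ℝ) : EReal)
        = Filter.limsup (fun nn : ℕ => ((g nn : ℝ) : EReal)) atTop := hglim.limsup_eq.symm
      _ ≤ _ := limsup_le_limsup hbound
  refine le_trans hlimsup ?_
  exact le_iSup₂ (f := fun (ε' : ℝ) (_ : 0 < ε') =>
    Filter.limsup (fun n : ℕ => ((Real.log (maxSepCard f n ε') / n : ℝ) : EReal)) atTop) ε hε
end

section
/- Let a < d be real numbers, b, c ∈ (a, d), and let f : [a,b] → [a,d] and g : [c,d] → [a,d] be continuous maps such that f(a) = d, g(c) = a and g(d) ∈ f([a,b]). Then either f has a fixed point, or g has a fixed point, or there exists k ≥ 1 such that g^k ∘ f (where defined) has a fixed point. -/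
open Set

private lemma fix_of_le (p q : ℝ) (F : ℝ → ℝ) (hpq : p ≤ q) (hF : ContinuousOn F (Icc p q))
    (h1 : p ≤ F p) (h2 : F q ≤ q) : ∃ x ∈ Icc p q, F x = x := by
  have hcont : ContinuousOn (fun x => F x - x) (Icc p q) := hF.sub continuousOn_id
  have h0 : (0:ℝ) ∈ Icc (F q - q) (F p - p) := ⟨by linarith, by linarith⟩
  obtain ⟨x, hx, hfx⟩ := intermediate_value_Icc' hpq hcont h0
  refine ⟨x, hx, ?_⟩
  simp only [sub_eq_zero] at hfx
  exact hfx

/-- Given continuous `f : [a,b] → [a,d]` and `g : [c,d] → [a,d]` with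
`f(a) = d`, `g(c) = a` and `g(d) ∈ f([a,b])`, either `f` has a fixed point, or `g` has a
fixed point, or some composition `g^k ∘ f` (where defined) has a fixed point. -/
theorem stmt6 (a b c d : ℝ) (had : a < d) (hb : b ∈ Ioo a d) (hc : c ∈ Ioo a d)
    (f g : ℝ → ℝ)
    (hf : ContinuousOn f (Icc a b)) (hfm : MapsTo f (Icc a b) (Icc a d))
    (hg : ContinuousOn g (Icc c d)) (hgm : MapsTo g (Icc c d) (Icc a d))
    (hfa : f a = d) (hgc : g c = a) (hgd : g d ∈ f '' (Icc a b)) :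
    (∃ x ∈ Icc a b, f x = x) ∨ (∃ y ∈ Icc c d, g y = y) ∨
      (∃ k : ℕ, 1 ≤ k ∧ ∃ x ∈ Icc a b,
        (∀ i < k, g^[i] (f x) ∈ Icc c d) ∧ g^[k] (f x) = x) := by
  classical
  obtain ⟨hab, hbd⟩ := hb
  obtain ⟨hac, hcd⟩ := hc
  have hcd' : c ≤ d := le_of_lt hcd
  have hab' : a ≤ b := le_of_lt hab
  -- Case: g has a point with z ≤ g z → g has a fixed point
  by_cases hG : ∃ z ∈ Icc c d, z ≤ g z
  · obtain ⟨z, hz, hgz⟩ := hG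
    right; left
    have hsub : Icc c z ⊆ Icc c d := Icc_subset_Icc le_rfl hz.2
    have hcont : ContinuousOn (fun t => g t - t) (Icc c z) :=
      (hg.mono hsub).sub continuousOn_id
    have h0 : (0:ℝ) ∈ Icc (g c - c) (g z - z) := ⟨by rw [hgc]; linarith, by linarith⟩
    obtain ⟨t, ht, hft⟩ := intermediate_value_Icc hz.1 hcont h0
    refine ⟨t, hsub ht, ?_⟩
    simp only [sub_eq_zero] at hft
    exact hft
  push_neg at hG
  -- g z < z for all z ∈ [c,d]; uniform gap ε
  obtain ⟨w, hw, hwmin⟩ := isCompact_Icc.exists_isMinOn (Set.nonempty_Icc.2 hcd')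
    (continuousOn_id.sub hg)
  set ε := w - g w with hεdef
  have hεpos : 0 < ε := sub_pos.2 (hG w hw)
  have hstep : ∀ zz ∈ Icc c d, g zz ≤ zz - ε := by
    intro zz hzz
    have h := hwmin hzz
    simp only [id_eq, Pi.sub_apply, mem_setOf_eq] at h
    rw [hεdef]
    linarith
  -- orbit of d under g drops by ε each step while in [c,d]
  have hbound : ∀ n : ℕ, (∀ i < n, g^[i] d ∈ Icc c d) → g^[n] d ≤ d - n * ε := by
    intro n
    induction n with
    | zero => intro _; simp
    | succ k ih =>
      intro h
      have hk : g^[k] d ∈ Icc c d := h k (Nat.lt_succ_self k)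
      have h1 : g^[k] d ≤ d - k * ε := ih (fun i hi => h i (hi.trans (Nat.lt_succ_self k)))
      have h2 : g (g^[k] d) ≤ g^[k] d - ε := hstep _ hk
      rw [Function.iterate_succ_apply']
      push_cast
      linarith
  have hex : ∃ n : ℕ, g^[n] d ∉ Icc c d := by
    by_contra hcon
    push_neg at hcon
    obtain ⟨n, hn⟩ := exists_nat_gt ((d - c) / ε)
    have h1 : g^[n] d ≤ d - n * ε := hbound n (fun i _ => hcon i)
    have h2 : d - c < n * ε := by
      rw [div_lt_iff₀ hεpos] at hn; linarith
    have h3 := (hcon n).1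
    linarith
  set m := Nat.find hex with hmdef
  have hmspec : g^[m] d ∉ Icc c d := Nat.find_spec hex
  have hmlt : ∀ i < m, g^[i] d ∈ Icc c d := fun i hi => of_not_not (Nat.find_min hex hi)
  have hm0 : 0 < m := by
    rcases Nat.eq_zero_or_pos m with h | h
    · exfalso
      apply hmspec
      rw [h, Function.iterate_zero_apply]
      exact ⟨hcd', le_rfl⟩
    · exact h
  have hmc : g^[m] d < c := by
    have h1 : g^[m] d = g (g^[m-1] d) := by
      conv_lhs => rw [show m = (m-1) + 1 by omega]
      rw [Function.iterate_succ_apply']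
    have h2 : g^[m-1] d ∈ Icc c d := hmlt _ (by omega)
    have h3 : g^[m] d ∈ Icc a d := by rw [h1]; exact hgm h2
    by_contra hcc
    push_neg at hcc
    exact hmspec ⟨hcc, h3.2⟩
  -- continuity of iterates where valid
  have contY : ∀ (r : ℕ) (u : ℝ), u ∈ Icc a b →
      (∀ t ∈ Icc a u, ∀ i < r, g^[i] (f t) ∈ Icc c d) →
      ContinuousOn (fun t => g^[r] (f t)) (Icc a u) := by
    intro r
    induction r with
    | zero =>
      intro u hu _
      simp only [Function.iterate_zero_apply]
      exact hf.mono (Icc_subset_Icc le_rfl hu.2)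
    | succ k ih =>
      intro u hu hval
      have hk := ih u hu (fun t ht i hi => hval t ht i (hi.trans (Nat.lt_succ_self k)))
      have hmap : MapsTo (fun t => g^[k] (f t)) (Icc a u) (Icc c d) :=
        fun t ht => hval t ht k (Nat.lt_succ_self k)
      have h := hg.comp hk hmap
      simpa [Function.iterate_succ_apply', Function.comp_def] using h
  -- the orbit validity must fail by time m, via the point x₁ with f x₁ = g d
  obtain ⟨x₁, hx₁, hfx₁⟩ := hgd
  have hmbad : ¬ ∀ t ∈ Icc a b, ∀ i < m, g^[i] (f t) ∈ Icc c d := by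
    intro hcon
    have h1 : g^[m-1] (f x₁) = g^[m] d := by
      rw [hfx₁, ← Function.iterate_succ_apply]
      congr 1
      omega
    have h2 := hcon x₁ hx₁ (m-1) (by omega)
    rw [h1] at h2
    exact absurd h2.1 (not_le.2 hmc)
  have hbad : ∃ r : ℕ, ¬ ∀ t ∈ Icc a b, ∀ i < r, g^[i] (f t) ∈ Icc c d := ⟨m, hmbad⟩
  set R := Nat.find hbad with hRdef
  have hRspec : ¬ ∀ t ∈ Icc a b, ∀ i < R, g^[i] (f t) ∈ Icc c d := Nat.find_spec hbad
  have hRm : R ≤ m := Nat.find_le hmbad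
  have hR0 : 0 < R := by
    rcases Nat.eq_zero_or_pos R with h | h
    · exfalso
      apply hRspec
      intro t ht i hi
      rw [h] at hi
      exact absurd hi (Nat.not_lt_zero i)
    · exact h
  set s := R - 1 with hsdef
  have hvalid : ∀ t ∈ Icc a b, ∀ i < s, g^[i] (f t) ∈ Icc c d :=
    of_not_not (Nat.find_min hbad (by omega))
  have hsm : s < m := by omega
  -- upper bound: s-th iterate always ≤ d (when valid up to s)
  have hub : ∀ t ∈ Icc a b, g^[s] (f t) ≤ d := by
    intro t ht
    rcases Nat.eq_zero_or_pos s with h0 | hpos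
    · rw [h0, Function.iterate_zero_apply]
      exact (hfm ht).2
    · have h1 : g^[s] (f t) = g (g^[s-1] (f t)) := by
        conv_lhs => rw [show s = (s-1) + 1 by omega]
        rw [Function.iterate_succ_apply']
      have h2 := hvalid t ht (s-1) (by omega)
      rw [h1]
      exact (hgm h2).2
  have hsa : c ≤ g^[s] (f a) := by
    rw [hfa]
    exact (hmlt s hsm).1
  -- failure point: some x with g^[s] (f x) < c
  have hfail : ∃ t ∈ Icc a b, g^[s] (f t) < c := by
    push_neg at hRspec
    obtain ⟨t, ht, i, hi, hnot⟩ := hRspec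
    have his : i = s := by
      by_contra hne
      exact hnot (hvalid t ht i (by omega))
    subst his
    refine ⟨t, ht, ?_⟩
    by_contra hcc
    push_neg at hcc
    exact hnot ⟨hcc, hub t ht⟩
  obtain ⟨x, hx, hxc⟩ := hfail
  -- first crossing point z
  set S := {t : ℝ | t ∈ Icc a x ∧ g^[s] (f t) ≤ c} with hSdef
  have haxb : Icc a x ⊆ Icc a b := Icc_subset_Icc le_rfl hx.2
  have hcontS : ContinuousOn (fun t => g^[s] (f t)) (Icc a x) :=
    contY s x hx (fun t ht i hi => hvalid t (haxb ht) i hi)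
  have hSclosed : IsClosed S := by
    have heq : S = Icc a x ∩ (fun t => g^[s] (f t)) ⁻¹' (Iic c) := rfl
    rw [heq]
    exact hcontS.preimage_isClosed_of_isClosed isClosed_Icc isClosed_Iic
  have hSne : S.Nonempty := ⟨x, ⟨hx.1, le_rfl⟩, le_of_lt hxc⟩
  have hSbdd : BddBelow S := ⟨a, fun t ht => ht.1.1⟩
  set z := sInf S with hzdef
  have hzS : z ∈ S := hSclosed.csInf_mem hSne hSbdd
  have hza : a ≤ z := hzS.1.1
  have hzx : z ≤ x := hzS.1.2
  have hzb : z ≤ b := hzx.trans hx.2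
  have hzc : c ≤ g^[s] (f z) := by
    by_contra hlt
    push_neg at hlt
    have hza' : a < z := by
      rcases eq_or_lt_of_le hza with h | h
      · exfalso
        rw [← h] at hlt
        exact absurd hsa (not_le.2 hlt)
      · exact h
    have hcw : ContinuousWithinAt (fun t => g^[s] (f t)) (Icc a x) z :=
      hcontS.continuousWithinAt hzS.1
    have hev : ∀ᶠ t in nhdsWithin z (Icc a x), g^[s] (f t) < c :=
      hcw.eventually (Filter.Tendsto.eventually_lt_const hlt Filter.tendsto_id)
    have hclos : z ∈ closure (Ioo a z) := by
      rw [closure_Ioo hza'.ne]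
      exact ⟨hza, le_rfl⟩
    have hne : (nhdsWithin z (Ioo a z)).NeBot := mem_closure_iff_nhdsWithin_neBot.1 hclos
    have hsub2 : Ioo a z ⊆ Icc a x := fun t ht =>
      ⟨le_of_lt ht.1, (le_of_lt ht.2).trans hzx⟩
    have hev2 : ∀ᶠ t in nhdsWithin z (Ioo a z), g^[s] (f t) < c :=
      hev.filter_mono (nhdsWithin_mono z hsub2)
    have hev3 : ∀ᶠ t in nhdsWithin z (Ioo a z), t ∈ Ioo a z := eventually_mem_nhdsWithin
    obtain ⟨t, htlt, htmem⟩ := (hev2.and hev3).exists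
    have hle : z ≤ t := csInf_le hSbdd
      ⟨⟨le_of_lt htmem.1, (le_of_lt htmem.2).trans hzx⟩, le_of_lt htlt⟩
    exact absurd htmem.2 (not_lt.2 hle)
  have heqc : g^[s] (f z) = c := le_antisymm hzS.2 hzc
  -- validity up to s+1 on [a, z]
  have hvalidz : ∀ t ∈ Icc a z, ∀ i < s + 1, g^[i] (f t) ∈ Icc c d := by
    intro t ht i hi
    have htb : t ∈ Icc a b := ⟨ht.1, ht.2.trans hzb⟩
    rcases Nat.lt_or_ge i s with h | h
    · exact hvalid t htb i h
    · have his : i = s := by omega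
      subst his
      refine ⟨?_, hub t htb⟩
      by_contra hcc
      push_neg at hcc
      have htS : t ∈ S := ⟨⟨ht.1, ht.2.trans hzx⟩, le_of_lt hcc⟩
      have hle := csInf_le hSbdd htS
      have htz : t = z := le_antisymm ht.2 hle
      rw [htz, heqc] at hcc
      exact lt_irrefl c hcc
  -- IVT for g^[s+1] ∘ f on [a, z]
  have hza1 : a ≤ g^[s+1] (f a) := by
    rw [hfa, Function.iterate_succ_apply']
    exact (hgm (hmlt s hsm)).1
  have hzz : g^[s+1] (f z) ≤ z := by
    rw [Function.iterate_succ_apply', heqc, hgc]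
    exact hza
  have hcont2 : ContinuousOn (fun t => g^[s+1] (f t)) (Icc a z) :=
    contY (s+1) z ⟨hza, hzb⟩ hvalidz
  obtain ⟨x₀, hx₀, hfix⟩ := fix_of_le a z (fun t => g^[s+1] (f t)) hza hcont2 hza1 hzz
  right; right
  exact ⟨s+1, by omega, x₀, ⟨hx₀.1, hx₀.2.trans hzb⟩,
    fun i hi => hvalidz x₀ hx₀ i hi, hfix⟩
end

section
/- Let X be a connected topological space and a, b ∈ X be points such that X \ {a} = A₁ ∪ A₂ and X \ {b} = B₁ ∪ B₂, where in each case the two sets are nonempty, disjoint, and separated in X. If a ∈ B₁ and b ∈ A₂, then B₂ ∪ {b} ⊆ A₂. -/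
/-- for cut points `a`, `b` of a connected space `X` with separations
`X \ {a} = A₁ ∪ A₂` and `X \ {b} = B₁ ∪ B₂`, if `a ∈ B₁` and `b ∈ A₂` then
`B₂ ∪ {b} ⊆ A₂`. -/
theorem stmt9 {X : Type*} [TopologicalSpace X] [ConnectedSpace X] (a b : X)
    (A₁ A₂ B₁ B₂ : Set X)
    (hAcompl : ({a}ᶜ : Set X) = A₁ ∪ A₂) (hA₁ : A₁.Nonempty) (hA₂ : A₂.Nonempty)
    (hAdisj : Disjoint A₁ A₂)
    (hAsep₁ : Disjoint (closure A₁) A₂) (hAsep₂ : Disjoint A₁ (closure A₂))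
    (hBcompl : ({b}ᶜ : Set X) = B₁ ∪ B₂) (hB₁ : B₁.Nonempty) (hB₂ : B₂.Nonempty)
    (hBdisj : Disjoint B₁ B₂)
    (hBsep₁ : Disjoint (closure B₁) B₂) (hBsep₂ : Disjoint B₁ (closure B₂))
    (haB : a ∈ B₁) (hbA : b ∈ A₂) :
    B₂ ∪ {b} ⊆ A₂ := by
  set U : Set X := A₁ ∩ B₂ with hU
  -- U is closed
  have hUclosed : IsClosed U := by
    rw [← closure_subset_iff_isClosed]
    intro y hy
    have hyA : y ∈ closure A₁ := closure_mono Set.inter_subset_left hy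
    have hyB : y ∈ closure B₂ := closure_mono Set.inter_subset_right hy
    have hyA2 : y ∉ A₂ := fun h => hAsep₁.ne_of_mem hyA h rfl
    have hyB1 : y ∉ B₁ := fun h => hBsep₂.ne_of_mem h hyB rfl
    have hya : y ≠ a := fun h => hyB1 (h ▸ haB)
    have hyb : y ≠ b := fun h => hyA2 (h ▸ hbA)
    have h1 : y ∈ A₁ ∪ A₂ := hAcompl ▸ hya
    have h2 : y ∈ B₁ ∪ B₂ := hBcompl ▸ hyb
    exact ⟨h1.resolve_right hyA2, h2.resolve_left hyB1⟩
  -- Uᶜ is closed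
  have hW : (Uᶜ : Set X) ⊆ closure A₂ ∪ closure B₁ := by
    intro y hy
    by_cases hya : y = a
    · exact Or.inr (subset_closure (hya ▸ haB))
    by_cases hyb : y = b
    · exact Or.inl (subset_closure (hyb ▸ hbA))
    have h1 : y ∈ A₁ ∪ A₂ := hAcompl ▸ hya
    have h2 : y ∈ B₁ ∪ B₂ := hBcompl ▸ hyb
    rcases h1 with h1 | h1
    · rcases h2 with h2 | h2
      · exact Or.inr (subset_closure h2)
      · exact absurd (⟨h1, h2⟩ : y ∈ U) hy
    · exact Or.inl (subset_closure h1)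
  have hWU : (closure A₂ ∪ closure B₁) ∩ U = ∅ := by
    ext y
    simp only [Set.mem_inter_iff, Set.mem_union, Set.mem_empty_iff_false, iff_false]
    rintro ⟨h | h, hA, hB⟩
    · exact hAsep₂.ne_of_mem hA h rfl
    · exact hBsep₁.ne_of_mem h hB rfl
  have hUopen : IsOpen U := by
    rw [← isClosed_compl_iff, ← closure_subset_iff_isClosed]
    calc closure Uᶜ ⊆ closure (closure A₂ ∪ closure B₁) := closure_mono hW
      _ = closure A₂ ∪ closure B₁ :=
          (isClosed_closure.union isClosed_closure).closure_eq
      _ ⊆ Uᶜ := by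
          intro y hy hyU
          exact Set.eq_empty_iff_forall_notMem.mp hWU y ⟨hy, hyU⟩
  -- so U is empty (b ∉ U)
  have hbU : b ∉ U := fun h => hAdisj.ne_of_mem h.1 hbA rfl
  have hUempty : U = ∅ := by
    rcases isClopen_iff.mp ⟨hUclosed, hUopen⟩ with h | h
    · exact h
    · exact absurd (h ▸ Set.mem_univ b) hbU
  -- conclude
  intro x hx
  rcases hx with hx | hx
  · by_contra hxA2
    have hxa : x ≠ a := fun h => hBdisj.ne_of_mem haB (h ▸ hx) rfl
    have h1 : x ∈ A₁ ∪ A₂ := hAcompl ▸ hxa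
    have hxU : x ∈ U := ⟨h1.resolve_right hxA2, hx⟩
    rw [hUempty] at hxU
    exact hxU
  · exact hx ▸ hbA
end

section
/- Let X be a connected topological space, C a connected open subset of X, and suppose X \ C = A ∪ B with A, B nonempty, disjoint and separated in X. Then A and B are closed in X, and both ∂C ∩ A ≠ ∅ and ∂C ∩ B ≠ ∅, where ∂C denotes the boundary of C. -/
theorem stmt10_aux {X : Type*} [TopologicalSpace X] [ConnectedSpace X]
    (C A B : Set X) (hCopen : IsOpen C) (hcompl : Cᶜ = A ∪ B)
    (hA : A.Nonempty) (hB : B.Nonempty) (hAB : Disjoint A B)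
    (hsep₁ : Disjoint (closure A) B) (hsep₂ : Disjoint A (closure B)) :
    IsClosed A ∧ (frontier C ∩ A).Nonempty := by
  have hAc : A ⊆ Cᶜ := hcompl ▸ Set.subset_union_left
  have hBc : B ⊆ Cᶜ := hcompl ▸ Set.subset_union_right
  have hCc : IsClosed (Cᶜ) := hCopen.isClosed_compl
  have hclA : closure A ⊆ A := by
    intro x hx
    have hx' : x ∈ A ∪ B := by
      rw [← hcompl, ← hCc.closure_eq]
      exact closure_mono hAc hx
    rcases hx' with h | h
    · exact h
    · exact absurd h (Set.disjoint_left.mp hsep₁ hx)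
  have hclB : closure B ⊆ B := by
    intro x hx
    have hx' : x ∈ A ∪ B := by
      rw [← hcompl, ← hCc.closure_eq]
      exact closure_mono hBc hx
    rcases hx' with h | h
    · exact absurd hx (Set.disjoint_left.mp hsep₂ h)
    · exact h
  have hclosedA : IsClosed A := isClosed_of_closure_subset hclA
  refine ⟨hclosedA, ?_⟩
  by_contra hne
  have hfA : frontier C ∩ A = ∅ := Set.not_nonempty_iff_eq_empty.mp hne
  have hfB : frontier C ⊆ B := by
    intro x hx
    have hxc : x ∈ A ∪ B := by
      rw [← hcompl]
      exact fun hxC => (hCopen.frontier_eq ▸ hx).2 hxC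
    rcases hxc with h | h
    · exact absurd (Set.mem_inter hx h) (hfA ▸ Set.notMem_empty x)
    · exact h
  have hAcompl : Aᶜ = C ∪ B := by
    ext x
    constructor
    · intro hx
      by_cases hxC : x ∈ C
      · exact Or.inl hxC
      · rcases (hcompl ▸ hxC : x ∈ A ∪ B) with h | h
        · exact absurd h hx
        · exact Or.inr h
    · rintro (h | h)
      · exact fun hxA => hAc hxA h
      · exact fun hxA => Set.disjoint_left.mp hAB hxA h
  have hCBclosed : IsClosed (C ∪ B) := by
    refine isClosed_of_closure_subset ?_
    rw [closure_union]
    rintro x (h | h)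
    · have : x ∈ C ∪ frontier C := by
        rcases Classical.em (x ∈ C) with hc | hc
        · exact Or.inl hc
        · exact Or.inr ⟨h, by rwa [hCopen.interior_eq]⟩
      rcases this with hc | hc
      · exact Or.inl hc
      · exact Or.inr (hfB hc)
    · exact Or.inr (hclB h)
  have hopenA : IsOpen A := by
    rw [← isClosed_compl_iff, hAcompl]
    exact hCBclosed
  have hclopen : IsClopen A := ⟨hclosedA, hopenA⟩
  rcases isClopen_iff.mp hclopen with h | h
  · exact hA.ne_empty h
  · rcases hB with ⟨b, hb⟩
    exact Set.disjoint_left.mp hAB (h ▸ Set.mem_univ b) hb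

/-- If `C` is a connected open subset of a connected space `X` and
`X \ C = A ∪ B` with `A`, `B` nonempty, disjoint and separated, then `A`, `B` are closed
and the boundary of `C` meets both `A` and `B`. -/
theorem stmt10 {X : Type*} [TopologicalSpace X] [ConnectedSpace X]
    (C A B : Set X) (hC : IsConnected C) (hCopen : IsOpen C) (hcompl : Cᶜ = A ∪ B)
    (hA : A.Nonempty) (hB : B.Nonempty) (hAB : Disjoint A B)
    (hsep₁ : Disjoint (closure A) B) (hsep₂ : Disjoint A (closure B)) :
    IsClosed A ∧ IsClosed B ∧ (frontier C ∩ A).Nonempty ∧ (frontier C ∩ B).Nonempty := by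
  obtain ⟨h1, h2⟩ := stmt10_aux C A B hCopen hcompl hA hB hAB hsep₁ hsep₂
  obtain ⟨h3, h4⟩ := stmt10_aux C B A hCopen (by rw [hcompl, Set.union_comm]) hB hA hAB.symm
    hsep₂.symm hsep₁.symm
  exact ⟨h1, h3, h2, h4⟩
end

section
/- Let X be a connected topological space, C a connected closed subset of X, and suppose X \ C = A ∪ B with A, B nonempty, disjoint and separated in X. Then A and B are open in X, and both C ∩ ∂A ≠ ∅ and C ∩ ∂B ≠ ∅. -/
/-- If `C` is a connected closed subset of a connected space `X` and
`X \ C = A ∪ B` with `A`, `B` nonempty, disjoint and separated, then `A`, `B` are open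
and `C` meets the boundaries of both `A` and `B`. -/
theorem stmt11 {X : Type*} [TopologicalSpace X] [ConnectedSpace X]
    (C A B : Set X) (hC : IsConnected C) (hCclosed : IsClosed C) (hcompl : Cᶜ = A ∪ B)
    (hA : A.Nonempty) (hB : B.Nonempty) (hAB : Disjoint A B)
    (hsep₁ : Disjoint (closure A) B) (hsep₂ : Disjoint A (closure B)) :
    IsOpen A ∧ IsOpen B ∧ (C ∩ frontier A).Nonempty ∧ (C ∩ frontier B).Nonempty := by
  have hAeq : A = Cᶜ \ closure B := by
    apply Set.eq_of_subset_of_subset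
    · intro x hx
      refine ⟨?_, fun h => hsep₂.le_bot ⟨hx, h⟩⟩
      rw [hcompl]; exact Or.inl hx
    · rintro x ⟨hx1, hx2⟩
      rw [hcompl, Set.mem_union] at hx1
      rcases hx1 with h | h
      · exact h
      · exact absurd (subset_closure h) hx2
  have hBeq : B = Cᶜ \ closure A := by
    apply Set.eq_of_subset_of_subset
    · intro x hx
      refine ⟨?_, fun h => hsep₁.le_bot ⟨h, hx⟩⟩
      rw [hcompl]; exact Or.inr hx
    · rintro x ⟨hx1, hx2⟩
      rw [hcompl, Set.mem_union] at hx1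
      rcases hx1 with h | h
      · exact absurd (subset_closure h) hx2
      · exact h
  have hAopen : IsOpen A := by
    rw [hAeq]; exact hCclosed.isOpen_compl.sdiff isClosed_closure
  have hBopen : IsOpen B := by
    rw [hBeq]; exact hCclosed.isOpen_compl.sdiff isClosed_closure
  have hfront : ∀ (S T : Set X), IsOpen S → Cᶜ = S ∪ T → Disjoint (closure S) T →
      frontier S ⊆ C := by
    intro S T hSopen heq hdisj x hx
    rw [hSopen.frontier_eq] at hx
    by_contra hxC
    have hx1 : x ∈ S ∪ T := by rw [← heq]; exact hxC
    rcases hx1 with h | h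
    · exact hx.2 h
    · exact hdisj.le_bot ⟨hx.1, h⟩
  have hfA : frontier A ⊆ C := hfront A B hAopen hcompl hsep₁
  have hfB : frontier B ⊆ C := hfront B A hBopen (by rw [hcompl, Set.union_comm])
    (Disjoint.symm hsep₂)
  have hne : ∀ S : Set X, IsOpen S → S.Nonempty → S ≠ Set.univ → (frontier S).Nonempty := by
    intro S hSopen hSne hSnu
    by_contra h
    rw [Set.not_nonempty_iff_eq_empty] at h
    have hclopen : IsClopen S := isClopen_iff_frontier_eq_empty.mpr h
    rcases isClopen_iff.mp hclopen with h1 | h1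
    · exact hSne.ne_empty h1
    · exact hSnu h1
  have hAnu : A ≠ Set.univ := by
    intro h
    rcases hB with ⟨b, hb⟩
    exact hAB.le_bot ⟨h ▸ Set.mem_univ b, hb⟩
  have hBnu : B ≠ Set.univ := by
    intro h
    rcases hA with ⟨a, ha⟩
    exact hAB.le_bot ⟨ha, h ▸ Set.mem_univ a⟩
  obtain ⟨x, hx⟩ := hne A hAopen hA hAnu
  obtain ⟨y, hy⟩ := hne B hBopen hB hBnu
  exact ⟨hAopen, hBopen, ⟨x, hfA hx, hx⟩, ⟨y, hfB hy, hy⟩⟩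
end

section
/- Let X be a connected Hausdorff topological space with a free interval J (an open subset homeomorphic to an open interval of ℝ, with a fixed order ≺ induced by the homeomorphism), and let c ∈ J be a cut point of X. Then every point z ∈ J is a cut point of X. -/
open Set

lemma mem_val_preimage {X : Type*} [TopologicalSpace X] {J : Set X} (e : ↥J ≃ₜ ℝ)
    (S : Set ℝ) (x : X) :
    x ∈ Subtype.val '' (e ⁻¹' S) ↔ ∃ hx : x ∈ J, e ⟨x, hx⟩ ∈ S := by
  constructor
  · rintro ⟨⟨y, hy⟩, hmem, rfl⟩
    exact ⟨hy, hmem⟩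
  · rintro ⟨hx, h⟩
    exact ⟨⟨x, hx⟩, h, rfl⟩

lemma open_val_preimage {X : Type*} [TopologicalSpace X] {J : Set X} (hJopen : IsOpen J)
    (e : ↥J ≃ₜ ℝ) {S : Set ℝ} (hS : IsOpen S) :
    IsOpen (Subtype.val '' (e ⁻¹' S)) :=
  hJopen.isOpenMap_subtype_val _ (e.continuous.isOpen_preimage _ hS)

lemma preconn_val_preimage {X : Type*} [TopologicalSpace X] {J : Set X}
    (e : ↥J ≃ₜ ℝ) {S : Set ℝ} (hS : IsPreconnected S) :
    IsPreconnected (Subtype.val '' (e ⁻¹' S)) := by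
  have himg : e.symm '' S = e ⁻¹' S := by
    ext x
    constructor
    · rintro ⟨y, hy, rfl⟩; simpa using hy
    · intro hx; exact ⟨e x, hx, by simp⟩
  have h := (hS.image _ e.symm.continuous.continuousOn).image
    Subtype.val continuous_subtype_val.continuousOn
  rwa [himg] at h

/-- Key lemma: if `X \ {z}` has a separation `U ∪ V` with the left part of `J` at `z`
inside `U` and the right part inside `V`, then any point `z'` of `J` to the right of `z`
is also a cut point. -/
lemma key {X : Type*} [TopologicalSpace X] [ConnectedSpace X] [T2Space X]
    {J : Set X} (hJopen : IsOpen J) (e : ↥J ≃ₜ ℝ) {z z' : X} (hz : z ∈ J) (hz' : z' ∈ J)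
    (hlt : e ⟨z, hz⟩ < e ⟨z', hz'⟩)
    {U V : Set X} (hU : IsOpen U) (hV : IsOpen V) (hdisj : U ∩ V = ∅)
    (hcover : U ∪ V = {z}ᶜ)
    (hL : ∀ x (hx : x ∈ J), e ⟨x, hx⟩ < e ⟨z, hz⟩ → x ∈ U)
    (hR : ∀ x (hx : x ∈ J), e ⟨z, hz⟩ < e ⟨x, hx⟩ → x ∈ V) :
    ¬ IsPreconnected ({z'}ᶜ : Set X) := by
  set a := e ⟨z, hz⟩ with ha
  set b := e ⟨z', hz'⟩ with hb
  have hzV : z ∉ V := by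
    intro h
    have : z ∈ U ∪ V := Or.inr h
    rw [hcover] at this; exact this rfl
  -- any point of V inside J has coordinate > a
  have hVJ : ∀ x (hx : x ∈ J), x ∈ V → a < e ⟨x, hx⟩ := by
    intro x hx hxV
    rcases lt_trichotomy (e ⟨x, hx⟩) a with h | h | h
    · exact absurd (Set.mem_inter (hL x hx h) hxV) (by rw [hdisj]; exact id)
    · exfalso
      have h2 : (⟨x, hx⟩ : J) = ⟨z, hz⟩ := e.injective h
      have h3 : x = z := congrArg Subtype.val h2
      exact hzV (h3 ▸ hxV)
    · exact h
  -- the compact (hence closed) segment `[a, b]` inside `J`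
  set K : Set X := Subtype.val '' (e ⁻¹' Set.Icc a b) with hK
  have hKcl : IsClosed K := by
    have hcpt : IsCompact (e ⁻¹' Set.Icc a b) := e.isCompact_preimage.mpr isCompact_Icc
    exact (hcpt.image continuous_subtype_val).isClosed
  set Lb : Set X := Subtype.val '' (e ⁻¹' Set.Iio b) with hLb
  have hLbopen : IsOpen Lb := open_val_preimage hJopen e isOpen_Iio
  rw [IsPreconnected]
  push_neg
  refine ⟨U ∪ Lb, V ∩ Kᶜ, hU.union hLbopen, hV.inter hKcl.isOpen_compl, ?_, ?_, ?_, ?_⟩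
  · -- cover
    intro x hx
    have hxz' : x ≠ z' := hx
    by_cases hxz : x = z
    · subst hxz
      left; right
      exact (mem_val_preimage e _ x).mpr ⟨hz, hlt⟩
    · have : x ∈ U ∪ V := by rw [hcover]; exact hxz
      rcases this with h | h
      · exact Or.inl (Or.inl h)
      · by_cases hxK : x ∈ K
        · rcases (mem_val_preimage e _ x).mp hxK with ⟨hxJ, hIcc⟩
          have hltb : e ⟨x, hxJ⟩ < b := by
            rcases lt_or_eq_of_le hIcc.2 with h2 | h2
            · exact h2
            · exfalso
              have h3 : (⟨x, hxJ⟩ : J) = ⟨z', hz'⟩ := e.injective h2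
              exact hxz' (congrArg Subtype.val h3)
          exact Or.inl (Or.inr ((mem_val_preimage e _ x).mpr ⟨hxJ, hltb⟩))
        · exact Or.inr ⟨h, hxK⟩
  · -- left side nonempty : contains z
    refine ⟨z, ?_, ?_⟩
    · intro h
      exact ne_of_lt hlt (congrArg e (Subtype.ext (show z = z' from h)))
    · right
      exact (mem_val_preimage e _ z).mpr ⟨hz, hlt⟩
  · -- right side nonempty : contains the point with coordinate b+1
    have hb1 : ∀ (h : ((e.symm (b + 1) : X)) ∈ J), e ⟨(e.symm (b + 1) : X), h⟩ = b + 1 := by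
      intro h
      rw [show (⟨(e.symm (b + 1) : X), h⟩ : J) = e.symm (b + 1) from rfl, e.apply_symm_apply]
    refine ⟨(e.symm (b + 1) : X), ?_, ?_, ?_⟩
    · intro h
      have h2 : (e.symm (b + 1) : J) = ⟨z', hz'⟩ := Subtype.ext h
      have h3 := congrArg e h2
      rw [e.apply_symm_apply, ← hb] at h3
      linarith
    · exact hR _ (e.symm (b + 1)).2 (by rw [hb1]; linarith)
    · intro hmem
      rcases (mem_val_preimage e _ _).mp hmem with ⟨hxJ, hIcc⟩
      rw [hb1] at hIcc
      linarith [hIcc.2]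
  · -- disjointness
    ext x
    simp only [Set.mem_inter_iff, Set.mem_union, Set.mem_compl_iff,
      Set.mem_empty_iff_false, iff_false]
    rintro ⟨hxz', hxU | hxLb, hxV, hxK⟩
    · exact absurd (Set.mem_inter hxU hxV) (by rw [hdisj]; exact id)
    · rcases (mem_val_preimage e _ x).mp hxLb with ⟨hxJ, hlt'⟩
      exact hxK ((mem_val_preimage e _ x).mpr ⟨hxJ, ⟨le_of_lt (hVJ x hxJ hxV), le_of_lt hlt'⟩⟩)

/-- Orientation-free version of `key`: `z'` any point of `J` distinct from `z`. -/
lemma key2 {X : Type*} [TopologicalSpace X] [ConnectedSpace X] [T2Space X]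
    {J : Set X} (hJopen : IsOpen J) (e : ↥J ≃ₜ ℝ) {z z' : X} (hz : z ∈ J) (hz' : z' ∈ J)
    (hne : e ⟨z, hz⟩ ≠ e ⟨z', hz'⟩)
    {U V : Set X} (hU : IsOpen U) (hV : IsOpen V) (hdisj : U ∩ V = ∅)
    (hcover : U ∪ V = {z}ᶜ)
    (hL : ∀ x (hx : x ∈ J), e ⟨x, hx⟩ < e ⟨z, hz⟩ → x ∈ U)
    (hR : ∀ x (hx : x ∈ J), e ⟨z, hz⟩ < e ⟨x, hx⟩ → x ∈ V) :
    ¬ IsPreconnected ({z'}ᶜ : Set X) := by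
  rcases hne.lt_or_gt with h | h
  · exact key hJopen e hz hz' h hU hV hdisj hcover hL hR
  · refine key hJopen (e.trans (Homeomorph.neg ℝ)) hz hz' ?_ hV hU
      (by rw [Set.inter_comm]; exact hdisj) (by rw [Set.union_comm]; exact hcover) ?_ ?_
    · simp only [Homeomorph.trans_apply]
      simpa using h
    · intro x hx hlt'
      simp only [Homeomorph.trans_apply] at hlt'
      exact hR x hx (by simpa using hlt')
    · intro x hx hlt'
      simp only [Homeomorph.trans_apply] at hlt'
      exact hL x hx (by simpa using hlt')

/-- If there is a separation `A ∪ B = X \ {c}` with a punctured neighborhood of `c`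
inside `A`, then `B` is clopen, contradicting connectedness. -/
lemma clopen_aux {X : Type*} [TopologicalSpace X] [ConnectedSpace X] [T1Space X]
    {c : X} {A B W : Set X} (hA : IsOpen A) (hB : IsOpen B)
    (hAB : A ∪ B = {c}ᶜ) (hd : A ∩ B = ∅)
    (hW : IsOpen W) (hcW : c ∈ W) (hWA : W ⊆ A ∪ {c}) (hBne : B.Nonempty) : False := by
  have hcB : c ∉ B := by
    intro h
    have : c ∈ A ∪ B := Or.inr h
    rw [hAB] at this; exact this rfl
  have hBc : Bᶜ = A ∪ W := by
    ext x
    simp only [Set.mem_compl_iff, Set.mem_union]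
    constructor
    · intro hx
      by_cases hxc : x = c
      · exact Or.inr (hxc ▸ hcW)
      · have : x ∈ A ∪ B := by rw [hAB]; exact hxc
        rcases this with h | h
        · exact Or.inl h
        · exact absurd h hx
    · rintro (h | h)
      · intro hxB; exact absurd (Set.mem_inter h hxB) (by rw [hd]; exact id)
      · rcases hWA h with h2 | h2
        · intro hxB; exact absurd (Set.mem_inter h2 hxB) (by rw [hd]; exact id)
        · simp only [Set.mem_singleton_iff] at h2
          exact (h2 ▸ hcB :)
  have hBclosed : IsClosed B := by
    rw [← isOpen_compl_iff, hBc]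
    exact hA.union hW
  rcases isClopen_iff.mp ⟨hBclosed, hB⟩ with h | h
  · rw [h] at hBne; exact Set.not_nonempty_empty hBne
  · exact hcB (h ▸ Set.mem_univ c)

/-- In a connected Hausdorff space with a free interval `J`, if some point
of `J` is a cut point of `X` then every point of `J` is a cut point of `X`. -/
theorem stmt12 {X : Type*} [TopologicalSpace X] [ConnectedSpace X] [T2Space X]
    (J : Set X) (hJopen : IsOpen J) (hJfree : Nonempty (↥J ≃ₜ ℝ))
    (c : X) (hc : c ∈ J) (hcut : ¬ IsPreconnected ({c}ᶜ : Set X)) :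
    ∀ z ∈ J, ¬ IsPreconnected ({z}ᶜ : Set X) := by
  obtain ⟨e⟩ := hJfree
  set a := e ⟨c, hc⟩ with ha
  have hcut' := hcut
  -- Step 1: extract a clean separation of X \ {c}
  rw [IsPreconnected] at hcut
  push_neg at hcut
  obtain ⟨U₀, V₀, hU₀, hV₀, hcov₀, hne₀U, hne₀V, hempty₀⟩ := hcut
  set U : Set X := U₀ ∩ {c}ᶜ with hUdef
  set V : Set X := V₀ ∩ {c}ᶜ with hVdef
  have hU : IsOpen U := hU₀.inter isOpen_compl_singleton
  have hV : IsOpen V := hV₀.inter isOpen_compl_singleton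
  have hdisj : U ∩ V = ∅ := by
    rw [Set.eq_empty_iff_forall_notMem]
    rintro x ⟨⟨h1, h2⟩, ⟨h3, _⟩⟩
    have : x ∈ {c}ᶜ ∩ (U₀ ∩ V₀) := ⟨h2, h1, h3⟩
    rw [hempty₀] at this; exact this
  have hcover : U ∪ V = {c}ᶜ := by
    apply Set.Subset.antisymm
    · rintro x (⟨_, h⟩ | ⟨_, h⟩) <;> exact h
    · intro x hx
      rcases hcov₀ hx with h | h
      · exact Or.inl ⟨h, hx⟩
      · exact Or.inr ⟨h, hx⟩
  have hUne : U.Nonempty := by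
    obtain ⟨x, hx1, hx2⟩ := hne₀U; exact ⟨x, hx2, hx1⟩
  have hVne : V.Nonempty := by
    obtain ⟨x, hx1, hx2⟩ := hne₀V; exact ⟨x, hx2, hx1⟩
  -- the left and right pieces of J at c
  set L : Set X := Subtype.val '' (e ⁻¹' Set.Iio a) with hLdef
  set R : Set X := Subtype.val '' (e ⁻¹' Set.Ioi a) with hRdef
  have hLpre : IsPreconnected L := preconn_val_preimage e isPreconnected_Iio
  have hRpre : IsPreconnected R := preconn_val_preimage e isPreconnected_Ioi
  -- a point of J with coordinate ≠ a is not c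
  have hnotc : ∀ x (hx : x ∈ J), e ⟨x, hx⟩ ≠ a → x ≠ c := by
    intro x hx hne hxc
    subst hxc
    exact hne (by rw [ha])
  have hLsub : L ⊆ U ∪ V := by
    intro x hx
    rcases (mem_val_preimage e _ x).mp hx with ⟨hxJ, hlt⟩
    rw [hcover]
    exact hnotc x hxJ (ne_of_lt hlt)
  have hRsub : R ⊆ U ∪ V := by
    intro x hx
    rcases (mem_val_preimage e _ x).mp hx with ⟨hxJ, hlt⟩
    rw [hcover]
    exact hnotc x hxJ (ne_of_gt hlt)
  have hdisjD : Disjoint U V := Set.disjoint_iff_inter_eq_empty.mpr hdisj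
  -- J minus c is L ∪ R
  have hJLR : ∀ x (hx : x ∈ J), x ≠ c → x ∈ L ∪ R := by
    intro x hx hxc
    rcases lt_trichotomy (e ⟨x, hx⟩) a with h | h | h
    · exact Or.inl ((mem_val_preimage e _ x).mpr ⟨hx, h⟩)
    · exact absurd (congrArg Subtype.val (e.injective (h.trans ha) : (⟨x, hx⟩ : J) = ⟨c, hc⟩)) hxc
    · exact Or.inr ((mem_val_preimage e _ x).mpr ⟨hx, h⟩)
  -- main case analysis
  intro z hzJ
  by_cases hzc : z = c
  · exact hzc ▸ hcut'
  have hzne : e ⟨c, hc⟩ ≠ e ⟨z, hzJ⟩ := by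
    intro h
    exact hzc (congrArg Subtype.val (e.injective h.symm))
  rcases hLpre.subset_or_subset hU hV hdisjD hLsub with hLU | hLV <;>
    rcases hRpre.subset_or_subset hU hV hdisjD hRsub with hRU | hRV
  · -- L, R ⊆ U : contradiction
    exfalso
    refine clopen_aux hU hV hcover hdisj hJopen hc ?_ hVne
    intro x hx
    by_cases hxc : x = c
    · exact Or.inr (by simp [hxc])
    · rcases hJLR x hx hxc with h | h
      · exact Or.inl (hLU h)
      · exact Or.inl (hRU h)
  · -- L ⊆ U, R ⊆ V : the good orientation
    refine key2 hJopen e hc hzJ hzne hU hV hdisj hcover ?_ ?_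
    · intro x hx h; exact hLU ((mem_val_preimage e _ x).mpr ⟨hx, h⟩)
    · intro x hx h; exact hRV ((mem_val_preimage e _ x).mpr ⟨hx, h⟩)
  · -- L ⊆ V, R ⊆ U : swapped orientation
    refine key2 hJopen e hc hzJ hzne hV hU (by rw [Set.inter_comm]; exact hdisj)
      (by rw [Set.union_comm]; exact hcover) ?_ ?_
    · intro x hx h; exact hLV ((mem_val_preimage e _ x).mpr ⟨hx, h⟩)
    · intro x hx h; exact hRU ((mem_val_preimage e _ x).mpr ⟨hx, h⟩)
  · -- L, R ⊆ V : contradiction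
    exfalso
    refine clopen_aux hV hU (by rw [Set.union_comm]; exact hcover)
      (by rw [Set.inter_comm]; exact hdisj) hJopen hc ?_ hUne
    intro x hx
    by_cases hxc : x = c
    · exact Or.inr (by simp [hxc])
    · rcases hJLR x hx hxc with h | h
      · exact Or.inl (hLV h)
      · exact Or.inl (hRV h)
end
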